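/- arXiv:1211.2987 — 5 statements merged into one kernel-verified Lean document; each statement's English description precedes it below -/
import Mathlib

section
/- With Δ_i = ∑_{j=0}^i q_{i-j}^{-1} ∏_{k=i-j+1}^{i}(p_k/q_k) and T(n) = ∑_{i=0}^{n-1} Δ_i, the expected hitting time of n starting from 0 for the nearest-neighbour walk on ℤ≥0 (reflected at 0) equals T(n), for every n ∈ ℤ≥0. -/
open MeasureTheory Filter Finset Real
open scoped ENNReal

noncomputable section

/-- One-step transition kernel for the nearest-neighbour walk on ℤ≥0 in environment `p`:
from `n ≥ 1` jump to `n-1` with probability `p n` and to `n+1` with probability `q n = 1 - p n`;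
from `0` stay at `0` with probability `p 0` and jump to `1` with probability `q 0`. -/
def step (p : ℕ → ℝ) (n m : ℕ) : ℝ :=
  if n = 0 then (if m = 0 then p 0 else if m = 1 then 1 - p 0 else 0)
  else (if m = n - 1 then p n else if m = n + 1 then 1 - p n else 0)

/-- `X` is (a version of) the quenched walk in environment `p` under the law `μ`:
it starts at `0` and has the (time-homogeneous) Markov property with transition kernel
`step p`, i.e. conditionally on the whole history up to time `t` with current state `x t`,
the next state is `m` with probability `step p (x t) m`. -/
def IsQuenchedWalk {Ω : Type*} [MeasurableSpace Ω] (μ : Measure Ω)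
    (X : ℕ → Ω → ℕ) (p : ℕ → ℝ) : Prop :=
  (∀ t, Measurable (X t)) ∧ (∀ᵐ ω ∂μ, X 0 ω = 0) ∧
  ∀ (t : ℕ) (x : ℕ → ℕ) (m : ℕ),
    μ {ω | X (t + 1) ω = m ∧ ∀ s ≤ t, X s ω = x s}
      = ENNReal.ofReal (step p (x t) m) * μ {ω | ∀ s ≤ t, X s ω = x s}

/-- First hitting time of `n` by the process `X` (with value `∞` if `n` is never hit). -/
def hitTime {Ω : Type*} (X : ℕ → Ω → ℕ) (n : ℕ) (ω : Ω) : ℝ≥0∞ :=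
  sInf ((fun t : ℕ => (t : ℝ≥0∞)) '' {t : ℕ | X t ω = n})

/-- `D_i = ∏_{j=0}^{i-1} p_j/q_j` (empty product is `1`). -/
def Denv (p : ℕ → ℝ) (i : ℕ) : ℝ := ∏ j ∈ Finset.range i, p j / (1 - p j)

/-- `f(n) = ∑_{i=0}^{n} D_i`. -/
def fenv (p : ℕ → ℝ) (n : ℕ) : ℝ := ∑ i ∈ Finset.range (n + 1), Denv p i

/-- `Δ_i = ∑_{j=0}^{i} q_{i-j}^{-1} ∏_{k=i-j+1}^{i} p_k/q_k`. -/
def DeltaEnv (p : ℕ → ℝ) (i : ℕ) : ℝ :=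
  ∑ j ∈ Finset.range (i + 1),
    (1 - p (i - j))⁻¹ * ∏ k ∈ Finset.Icc (i - j + 1) i, p k / (1 - p k)

/-- `T(n) = ∑_{i=0}^{n-1} Δ_i`, the expected hitting time of `n` from `0`. -/
def Texp (p : ℕ → ℝ) (n : ℕ) : ℝ := ∑ i ∈ Finset.range n, DeltaEnv p i

def genv (p : ℕ → ℝ) (m k : ℕ) : ℝ :=
  (1 - p m)⁻¹ * ∏ l ∈ Finset.Icc (m + 1) k, p l / (1 - p l)

def sig (p : ℕ → ℝ) (n j : ℕ) : ℝ := ∑ k ∈ Finset.Ico j n, genv p j k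

section RealPart
variable {p : ℕ → ℝ} (hp : ∀ i, p i ∈ Set.Ioo (0 : ℝ) 1)
include hp

lemma q_pos (i : ℕ) : 0 < 1 - p i := by have := hp i; simp [Set.mem_Ioo] at this; linarith [this.2]

lemma genv_nonneg (m k : ℕ) : 0 ≤ genv p m k := by
  apply mul_nonneg (inv_nonneg.2 (q_pos hp m).le)
  exact Finset.prod_nonneg fun l _ => div_nonneg (hp l).1.le (q_pos hp l).le

lemma sig_nonneg (n j : ℕ) : 0 ≤ sig p n j :=
  Finset.sum_nonneg fun k _ => genv_nonneg hp _ _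

lemma sig_zero_of_ge {n j : ℕ} (h : n ≤ j) : sig p n j = 0 := by
  rw [sig, Finset.Ico_eq_empty (by omega), Finset.sum_empty]

lemma sig_rec {n j : ℕ} (h : j < n) :
    (1 - p j) * sig p n j = 1 + p (j + 1) * sig p n (j + 1) := by
  have hq := q_pos hp j
  have hq1 := q_pos hp (j + 1)
  have h1 : (1 - p j) * sig p n j = ∑ k ∈ Finset.Ico j n, ∏ l ∈ Finset.Icc (j+1) k, p l / (1 - p l) := by
    rw [sig, Finset.mul_sum]
    refine Finset.sum_congr rfl fun k _ => ?_
    rw [genv, ← mul_assoc, mul_inv_cancel₀ hq.ne', one_mul]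
  rw [h1, Finset.sum_eq_sum_Ico_succ_bot h]
  have h2 : ∏ l ∈ Finset.Icc (j+1) j, p l / (1 - p l) = 1 := by
    rw [Finset.Icc_eq_empty (by omega), Finset.prod_empty]
  rw [h2]
  congr 1
  have h3 : ∀ k ∈ Finset.Ico (j+1) n, ∏ l ∈ Finset.Icc (j+1) k, p l / (1 - p l)
      = (p (j+1) / (1 - p (j+1))) * ∏ l ∈ Finset.Icc (j+2) k, p l / (1 - p l) := by
    intro k hk
    simp only [Finset.mem_Ico] at hk
    rw [← Finset.Ico_add_one_right_eq_Icc, Finset.prod_eq_prod_Ico_succ_bot (by omega), Finset.Ico_add_one_right_eq_Icc]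
  rw [Finset.sum_congr rfl h3, ← Finset.mul_sum, sig, Finset.mul_sum]
  rw [div_eq_mul_inv, Finset.mul_sum]
  refine Finset.sum_congr rfl fun k _ => ?_
  rw [genv]; ring

lemma sig_balance0 {n : ℕ} (h : 0 < n) :
    sig p n 0 = 1 + p 0 * sig p n 0 + p 1 * sig p n 1 := by
  have := sig_rec hp h
  linarith

lemma sig_balance {n m : ℕ} (h : m + 1 < n) :
    sig p n (m + 1) = (1 - p m) * sig p n m + p (m + 2) * sig p n (m + 2) := by
  have h1 := sig_rec hp (show m < n by omega)
  have h2 := sig_rec hp h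
  linarith

lemma sum_sig (n : ℕ) : ∑ j ∈ Finset.range n, sig p n j = Texp p n := by
  have hD : ∀ i, DeltaEnv p i = ∑ m ∈ Finset.range (i + 1), genv p m i := by
    intro i
    have h0 : DeltaEnv p i = ∑ j ∈ Finset.range (i + 1), genv p (i - j) i := rfl
    rw [h0, ← Finset.sum_range_reflect (fun m => genv p m i) (i + 1)]
    rfl
  simp only [Texp, hD, sig]
  induction n with
  | zero => simp
  | succ n ih =>
    rw [Finset.sum_range_succ, Finset.sum_range_succ (fun i => ∑ m ∈ Finset.range (i+1), genv p m i)]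
    rw [← ih]
    have h1 : ∀ j ∈ Finset.range n, ∑ k ∈ Finset.Ico j (n+1), genv p j k
        = ∑ k ∈ Finset.Ico j n, genv p j k + genv p j n := by
      intro j hj
      simp only [Finset.mem_range] at hj
      rw [Finset.sum_Ico_succ_top (by omega)]
    rw [Finset.sum_congr rfl h1, Finset.sum_add_distrib]
    have h2 : ∑ k ∈ Finset.Ico n (n+1), genv p n k = genv p n n := by simp
    rw [h2, Finset.sum_range_succ]
    ring

end RealPart

def stepE (p : ℕ → ℝ) (a b : ℕ) : ℝ≥0∞ := ENNReal.ofReal (step p a b)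

section Meas
variable {Ω : Type*} [MeasurableSpace Ω] (μ : Measure Ω) (X : ℕ → Ω → ℕ) (p : ℕ → ℝ)

/-- survival event: not yet hit `n` by time `t` -/
def Ev (n t : ℕ) : Set Ω := {ω | ∀ s ≤ t, X s ω ≠ n}

def wfun (n t j : ℕ) : ℝ≥0∞ := μ ({ω | X t ω = j} ∩ Ev X n t)

variable {X}

lemma measA (hm : ∀ t, Measurable (X t)) (t : ℕ) (x : ℕ → ℕ) :
    MeasurableSet {ω | ∀ s ≤ t, X s ω = x s} := by
  have : {ω | ∀ s ≤ t, X s ω = x s} = ⋂ s ∈ Finset.Iic t, (X s) ⁻¹' {x s} := by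
    ext ω; simp
  rw [this]
  exact Finset.measurableSet_biInter _ fun s _ => (hm s) (measurableSet_singleton _)

lemma measEv (hm : ∀ t, Measurable (X t)) (n t : ℕ) : MeasurableSet (Ev X n t) := by
  have : Ev X n t = ⋂ s ∈ Finset.Iic t, (X s) ⁻¹' {n}ᶜ := by
    ext ω; simp [Ev]
  rw [this]
  exact Finset.measurableSet_biInter _ fun s _ => (hm s) (measurableSet_singleton _).compl

open Classical in
lemma hitTime_eq_tsum (n : ℕ) (ω : Ω) :
    hitTime X n ω = ∑' t : ℕ, (if ω ∈ Ev X n t then (1 : ℝ≥0∞) else 0) := by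
  by_cases hne : ∃ t, X t ω = n
  · classical
    set k := Nat.find hne with hk
    have h1 : hitTime X n ω = k := by
      apply le_antisymm
      · exact sInf_le ⟨k, Nat.find_spec hne, rfl⟩
      · refine le_sInf ?_
        rintro b ⟨t, ht, rfl⟩
        exact Nat.cast_le.2 (Nat.find_min' hne ht)
    have h2 : ∀ t, (ω ∈ Ev X n t) ↔ t < k := by
      intro t
      constructor
      · intro h
        by_contra hc
        exact h k (by omega) (Nat.find_spec hne)
      · intro h s hs
        exact Nat.find_min hne (by omega)
    rw [h1]
    have h3 : ∀ t ∉ Finset.range k, (if ω ∈ Ev X n t then (1:ℝ≥0∞) else 0) = 0 := by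
      intro t ht; simp only [Finset.mem_range] at ht; simp [h2 t, ht]
    rw [tsum_eq_sum h3]
    have h4 : ∀ t ∈ Finset.range k, (if ω ∈ Ev X n t then (1:ℝ≥0∞) else 0) = 1 := by
      intro t ht; simp only [Finset.mem_range] at ht; simp [h2 t, ht]
    rw [Finset.sum_congr rfl h4]
    simp
  · push_neg at hne
    have h1 : hitTime X n ω = ⊤ := by
      rw [hitTime]
      convert _root_.sInf_empty using 2
      · rfl
      simp [Set.eq_empty_iff_forall_notMem, hne]
    have h2 : ∀ t, (if ω ∈ Ev X n t then (1:ℝ≥0∞) else 0) = 1 := by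
      intro t
      rw [if_pos]
      intro s _
      exact hne s
    rw [h1, tsum_congr h2, ENNReal.tsum_const_eq_top_of_ne_zero one_ne_zero]

lemma lintegral_hitTime (hm : ∀ t, Measurable (X t)) (n : ℕ) :
    ∫⁻ ω, hitTime X n ω ∂μ = ∑' t : ℕ, μ (Ev X n t) := by
  have h1 : ∫⁻ ω, hitTime X n ω ∂μ
      = ∫⁻ ω, ∑' t : ℕ, (Ev X n t).indicator (fun _ => (1:ℝ≥0∞)) ω ∂μ := by
    refine lintegral_congr fun ω => ?_
    rw [hitTime_eq_tsum]
    exact tsum_congr fun t => by classical rw [Set.indicator_apply]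
  rw [h1, lintegral_tsum fun t => ((measurable_const.indicator (measEv hm n t)).aemeasurable)]
  exact tsum_congr fun t => lintegral_indicator_one (measEv hm n t)

lemma Ev_eq_iUnion (n t : ℕ) : Ev X n t = ⋃ j : ℕ, ({ω | X t ω = j} ∩ Ev X n t) := by
  ext ω; simp only [Set.mem_iUnion, Set.mem_inter_iff, Set.mem_setOf_eq]
  exact ⟨fun h => ⟨X t ω, rfl, h⟩, fun ⟨j, _, h⟩ => h⟩

lemma measEv_eq_tsum (hm : ∀ t, Measurable (X t)) (n t : ℕ) :
    μ (Ev X n t) = ∑' j : ℕ, wfun μ X n t j := by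
  have hd : Pairwise (Function.onFun Disjoint fun j : ℕ => ({ω | X t ω = j} ∩ Ev X n t)) := by
    intro i j hij
    apply Set.disjoint_left.2
    rintro ω ⟨h1, _⟩ ⟨h2, _⟩
    exact hij (h1 ▸ h2 ▸ rfl)
  have hms : ∀ j : ℕ, MeasurableSet ({ω | X t ω = j} ∩ Ev X n t) := fun j =>
    ((hm t) (measurableSet_singleton j)).inter (measEv hm n t)
  calc μ (Ev X n t) = μ (⋃ j : ℕ, ({ω | X t ω = j} ∩ Ev X n t)) := by rw [← Ev_eq_iUnion]
    _ = ∑' j : ℕ, wfun μ X n t j := measure_iUnion hd hms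
end Meas

section Part
variable {Ω : Type*} [MeasurableSpace Ω] {μ : Measure Ω} {X : ℕ → Ω → ℕ} {p : ℕ → ℝ}

def ext' (t : ℕ) (y : Fin (t+1) → ℕ) : ℕ → ℕ := fun s => if h : s < t + 1 then y ⟨s, h⟩ else 0

def cyl (X : ℕ → Ω → ℕ) (t : ℕ) (y : Fin (t+1) → ℕ) : Set Ω :=
  {ω | ∀ s ≤ t, X s ω = ext' t y s}

lemma mem_cyl {t : ℕ} {y : Fin (t+1) → ℕ} {ω : Ω} :
    ω ∈ cyl X t y ↔ ∀ i : Fin (t+1), X i ω = y i := by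
  constructor
  · intro h i
    have h2 := h i.1 (by omega)
    rwa [ext', dif_pos i.2, Fin.eta] at h2
  · intro h s hs
    rw [ext', dif_pos (by omega : s < t + 1)]
    exact h ⟨s, by omega⟩

lemma cyl_meas (hm : ∀ t, Measurable (X t)) (t : ℕ) (y : Fin (t+1) → ℕ) :
    MeasurableSet (cyl X t y) := measA hm t (ext' t y)

lemma partition (hm : ∀ t, Measurable (X t)) (t : ℕ) {C : Set Ω} (hC : MeasurableSet C) :
    μ C = ∑' y : Fin (t+1) → ℕ, μ (C ∩ cyl X t y) := by
  have hcover : C = ⋃ y : Fin (t+1) → ℕ, (C ∩ cyl X t y) := by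
    ext ω
    simp only [Set.mem_iUnion, Set.mem_inter_iff]
    refine ⟨fun h => ⟨fun i => X i ω, h, mem_cyl.2 fun i => rfl⟩, fun ⟨y, h, _⟩ => h⟩
  have hd : Pairwise (Function.onFun Disjoint fun y : Fin (t+1) → ℕ => C ∩ cyl X t y) := by
    intro y y' hyy
    apply Set.disjoint_left.2
    rintro ω ⟨_, h1⟩ ⟨_, h2⟩
    exact hyy (funext fun i => ((mem_cyl.1 h1 i).symm.trans (mem_cyl.1 h2 i)))
  conv_lhs => rw [hcover]
  exact measure_iUnion hd fun y => hC.inter (cyl_meas hm t y)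

open Classical in
lemma w_eq_cylsum (hm : ∀ t, Measurable (X t)) (n t j : ℕ) :
    wfun μ X n t j = ∑' y : Fin (t+1) → ℕ,
      if ((∀ i, y i ≠ n) ∧ y (Fin.last t) = j) then μ (cyl X t y) else 0 := by
  rw [wfun, partition hm t (C := {ω | X t ω = j} ∩ Ev X n t) (((hm t) (measurableSet_singleton j)).inter (measEv hm n t))]
  refine tsum_congr fun y => ?_
  by_cases hy : (∀ i, y i ≠ n) ∧ y (Fin.last t) = j
  · rw [if_pos hy]
    congr 1
    apply Set.eq_of_subset_of_subset (Set.inter_subset_right)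
    intro ω hω
    have hXi : ∀ i : Fin (t+1), X i ω = y i := mem_cyl.1 hω
    refine ⟨⟨?_, ?_⟩, hω⟩
    · show X t ω = j
      rw [← hy.2]; exact hXi (Fin.last t)
    · intro s hs
      rw [show X s ω = y ⟨s, by omega⟩ from hXi ⟨s, by omega⟩]
      exact hy.1 _
  · rw [if_neg hy]
    rw [not_and_or] at hy
    apply measure_mono_null _ (measure_empty (μ := μ))
    rintro ω ⟨⟨hj, hEv⟩, hcyl⟩
    have hXi : ∀ i : Fin (t+1), X i ω = y i := mem_cyl.1 hcyl
    rcases hy with hy | hy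
    · push_neg at hy
      obtain ⟨i, hi⟩ := hy
      exact hEv i.1 (by omega) ((hXi i).trans hi)
    · exact hy ((hXi (Fin.last t)).symm.trans hj)

open Classical in
lemma w_succ (hX : IsQuenchedWalk μ X p) (n t m : ℕ) :
    wfun μ X n (t+1) m
      = if m = n then 0 else ∑' j : ℕ, stepE p j m * wfun μ X n t j := by
  obtain ⟨hm, h0, hMar⟩ := hX
  by_cases hmn : m = n
  · rw [if_pos hmn, wfun]
    apply measure_mono_null _ (measure_empty (μ := μ))
    rintro ω ⟨h1, h2⟩
    exact (h2 (t+1) le_rfl) (hmn ▸ h1)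
  · rw [if_neg hmn]
    have hset : ({ω | X (t+1) ω = m} : Set Ω) ∩ Ev X n (t+1)
        = {ω | X (t+1) ω = m} ∩ Ev X n t := by
      ext ω
      simp only [Set.mem_inter_iff, Set.mem_setOf_eq, Ev]
      constructor
      · rintro ⟨h1, h2⟩; exact ⟨h1, fun s hs => h2 s (by omega)⟩
      · rintro ⟨h1, h2⟩
        refine ⟨h1, fun s hs => ?_⟩
        rcases Nat.lt_or_ge s (t+1) with h | h
        · exact h2 s (by omega)
        · have : s = t + 1 := by omega
          rw [this, h1]; exact hmn
    rw [wfun, hset, partition hm t (C := {ω | X (t+1) ω = m} ∩ Ev X n t) (((hm (t+1)) (measurableSet_singleton m)).inter (measEv hm n t))]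
    have hterm : ∀ y : Fin (t+1) → ℕ,
        μ (({ω | X (t+1) ω = m} ∩ Ev X n t) ∩ cyl X t y)
        = if (∀ i, y i ≠ n) then stepE p (y (Fin.last t)) m * μ (cyl X t y) else 0 := by
      intro y
      by_cases hy : ∀ i, y i ≠ n
      · rw [if_pos hy]
        have hsub : cyl X t y ⊆ Ev X n t := by
          intro ω hω s hs
          rw [show X s ω = y ⟨s, by omega⟩ from mem_cyl.1 hω ⟨s, by omega⟩]
          exact hy _
        have : ({ω | X (t+1) ω = m} ∩ Ev X n t) ∩ cyl X t y
            = {ω | X (t+1) ω = m ∧ ∀ s ≤ t, X s ω = ext' t y s} := by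
          ext ω
          constructor
          · rintro ⟨⟨h1, _⟩, h2⟩; exact ⟨h1, h2⟩
          · rintro ⟨h1, h2⟩; exact ⟨⟨h1, hsub h2⟩, h2⟩
        rw [this, hMar t (ext' t y) m]
        congr 2
        rw [ext', dif_pos (by omega : t < t + 1)]
        rfl
      · rw [if_neg hy]
        push_neg at hy
        obtain ⟨i, hi⟩ := hy
        apply measure_mono_null _ (measure_empty (μ := μ))
        rintro ω ⟨⟨_, hEv⟩, hcyl⟩
        exact hEv i.1 (by omega) ((mem_cyl.1 hcyl i).trans hi)
    rw [tsum_congr hterm]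
    -- now group by the value of y at the last index
    rw [show (∑' j : ℕ, stepE p j m * wfun μ X n t j)
        = ∑' j : ℕ, ∑' y : Fin (t+1) → ℕ,
            if ((∀ i, y i ≠ n) ∧ y (Fin.last t) = j) then stepE p j m * μ (cyl X t y) else 0 by
      refine tsum_congr fun j => ?_
      rw [w_eq_cylsum hm n t j, ← ENNReal.tsum_mul_left]
      exact tsum_congr fun y => by split_ifs <;> simp]
    rw [ENNReal.tsum_comm]
    refine tsum_congr fun y => ?_
    rw [tsum_eq_single (y (Fin.last t)) (fun j hj => by
      rw [if_neg]; rintro ⟨_, h⟩; exact hj h.symm)]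
    · split_ifs with h1 h2 h3 <;> simp_all
end Part

section Walk
variable {Ω : Type*} [MeasurableSpace Ω] {μ : Measure Ω} {X : ℕ → Ω → ℕ} {p : ℕ → ℝ}

lemma w_base (hX : IsQuenchedWalk μ X p) [IsProbabilityMeasure μ] {n : ℕ} (hn : n ≠ 0) (j : ℕ) :
    wfun μ X n 0 j = if j = 0 then 1 else 0 := by
  by_cases hj : j = 0
  · subst hj
    rw [if_pos rfl, wfun]
    have h1 : ∀ᵐ ω ∂μ, ω ∈ ({ω | X 0 ω = 0} ∩ Ev X n 0 : Set Ω) := by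
      filter_upwards [hX.2.1] with ω h
      refine ⟨h, fun s hs => ?_⟩
      have : s = 0 := by omega
      rw [this, h]
      exact fun hc => hn hc.symm
    have h2 : ({ω | X 0 ω = 0} ∩ Ev X n 0 : Set Ω) =ᵐ[μ] (Set.univ : Set Ω) := by
      filter_upwards [h1] with ω h
      exact eq_iff_iff.2 (iff_of_true h trivial)
    rw [measure_congr h2, measure_univ]
  · rw [if_neg hj, wfun]
    apply measure_mono_null (Set.inter_subset_left.trans ?_) (ae_iff.mp hX.2.1)
    intro ω (h : X 0 ω = j)
    exact fun hc => hj (hc ▸ h).symm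

lemma step_zero_of_far {j m : ℕ} (h : m + 1 < j ∨ j + 1 < m ∨ (j = m ∧ 1 ≤ j)) :
    step p j m = 0 := by
  unfold step
  split_ifs <;> first | rfl | omega

lemma step_down (m : ℕ) : step p (m + 1) m = p (m + 1) := by
  unfold step
  split_ifs <;> first | rfl | omega | simp_all

lemma step_up (m : ℕ) : step p m (m + 1) = 1 - p m := by
  unfold step
  split_ifs <;> first | rfl | omega | simp_all

lemma step00 : step p 0 0 = p 0 := by
  unfold step
  split_ifs <;> first | rfl | omega | simp_all

lemma w_vanish (hX : IsQuenchedWalk μ X p) [IsProbabilityMeasure μ] {n : ℕ} (hn : n ≠ 0) :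
    ∀ t j, n ≤ j → wfun μ X n t j = 0 := by
  intro t
  induction t with
  | zero =>
    intro j hj
    rw [w_base hX hn, if_neg (by omega)]
  | succ t ih =>
    intro j hj
    rw [w_succ hX]
    rcases eq_or_lt_of_le hj with h | h
    · rw [if_pos h.symm]
    · rw [if_neg (by omega)]
      apply ENNReal.tsum_eq_zero.2
      intro j'
      by_cases hj' : n ≤ j'
      · rw [ih j' hj', mul_zero]
      · rw [stepE, step_zero_of_far (Or.inr (Or.inl (by omega))), ENNReal.ofReal_zero, zero_mul]

def Sfun (μ : Measure Ω) (X : ℕ → Ω → ℕ) (n j : ℕ) : ℝ≥0∞ := ∑' t, wfun μ X n t j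

lemma S_vanish (hX : IsQuenchedWalk μ X p) [IsProbabilityMeasure μ] {n j : ℕ} (hn : n ≠ 0)
    (hj : n ≤ j) : Sfun μ X n j = 0 := by
  rw [Sfun, ENNReal.tsum_eq_zero]
  exact fun t => w_vanish hX hn t j hj

lemma S_eq (hX : IsQuenchedWalk μ X p) [IsProbabilityMeasure μ] {n m : ℕ} (hm : m < n) :
    Sfun μ X n m = (if m = 0 then 1 else 0) + ∑' j, stepE p j m * Sfun μ X n j := by
  rw [Sfun, tsum_eq_zero_add' ENNReal.summable]
  congr 1
  · rw [w_base hX (by omega)]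
  · calc ∑' t, wfun μ X n (t+1) m
        = ∑' t, ∑' j, stepE p j m * wfun μ X n t j := by
          refine tsum_congr fun t => ?_
          rw [w_succ hX, if_neg (by omega)]
      _ = ∑' j, ∑' t, stepE p j m * wfun μ X n t j := ENNReal.tsum_comm
      _ = ∑' j, stepE p j m * Sfun μ X n j := tsum_congr fun j => ENNReal.tsum_mul_left

lemma tsum_step_reduce0 (f : ℕ → ℝ≥0∞) :
    ∑' j, stepE p j 0 * f j = stepE p 0 0 * f 0 + stepE p 1 0 * f 1 := by
  have hz : ∀ j ∉ ({0, 1} : Finset ℕ), stepE p j 0 * f j = 0 := by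
    intro j hj
    simp only [Finset.mem_insert, Finset.mem_singleton] at hj
    push_neg at hj
    rw [stepE, step_zero_of_far (Or.inl (by omega)), ENNReal.ofReal_zero, zero_mul]
  rw [tsum_eq_sum hz, Finset.sum_pair (by norm_num)]

lemma tsum_step_reduce (m : ℕ) (f : ℕ → ℝ≥0∞) :
    ∑' j, stepE p j (m+1) * f j
      = stepE p m (m+1) * f m + stepE p (m+2) (m+1) * f (m+2) := by
  have hz : ∀ j ∉ ({m, m+2} : Finset ℕ), stepE p j (m+1) * f j = 0 := by
    intro j hj
    simp only [Finset.mem_insert, Finset.mem_singleton] at hj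
    push_neg at hj
    rw [stepE, step_zero_of_far (by omega), ENNReal.ofReal_zero, zero_mul]
  rw [tsum_eq_sum hz, Finset.sum_pair (by omega)]
end Walk

section Final
variable {Ω : Type*} [MeasurableSpace Ω] {μ : Measure Ω} {X : ℕ → Ω → ℕ} {p : ℕ → ℝ}

lemma stepE00 : stepE p 0 0 = ENNReal.ofReal (p 0) := by rw [stepE, step00]
lemma stepE_down (m : ℕ) : stepE p (m+1) m = ENNReal.ofReal (p (m+1)) := by
  rw [stepE, step_down]
lemma stepE_up (m : ℕ) : stepE p m (m+1) = ENNReal.ofReal (1 - p m) := by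
  rw [stepE, step_up]

lemma ofReal_aux1 {a x b y : ℝ} (ha : 0 ≤ a) (hb : 0 ≤ b) (hx : 0 ≤ x) (hy : 0 ≤ y) :
    ENNReal.ofReal (1 + a*x + b*y)
      = 1 + (ENNReal.ofReal a * ENNReal.ofReal x + ENNReal.ofReal b * ENNReal.ofReal y) := by
  rw [ENNReal.ofReal_add (by positivity) (by positivity),
    ENNReal.ofReal_add (by positivity) (by positivity),
    ENNReal.ofReal_mul ha, ENNReal.ofReal_mul hb, ENNReal.ofReal_one, add_assoc]

lemma ofReal_aux2 {a x b y : ℝ} (ha : 0 ≤ a) (hb : 0 ≤ b) (hx : 0 ≤ x) (hy : 0 ≤ y) :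
    ENNReal.ofReal (a*x + b*y)
      = ENNReal.ofReal a * ENNReal.ofReal x + ENNReal.ofReal b * ENNReal.ofReal y := by
  rw [ENNReal.ofReal_add (by positivity) (by positivity),
    ENNReal.ofReal_mul ha, ENNReal.ofReal_mul hb]

lemma key_bound (hp : ∀ i, p i ∈ Set.Ioo (0:ℝ) 1) {n m : ℕ} (hm : m < n) (f : ℕ → ℝ≥0∞)
    (hf : ∀ j, f j ≤ ENNReal.ofReal (sig p n j)) :
    (if m = 0 then 1 else 0) + ∑' j, stepE p j m * f j ≤ ENNReal.ofReal (sig p n m) := by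
  cases m with
  | zero =>
    rw [if_pos rfl, tsum_step_reduce0, stepE00, stepE_down 0, sig_balance0 hp hm,
      ofReal_aux1 (hp 0).1.le (hp 1).1.le (sig_nonneg hp n 0) (sig_nonneg hp n 1)]
    exact add_le_add le_rfl (add_le_add (mul_le_mul_right (hf 0) _) (mul_le_mul_right (hf 1) _))
  | succ m =>
    rw [if_neg (by omega), zero_add, tsum_step_reduce, stepE_up, stepE_down (m+1),
      sig_balance hp hm,
      ofReal_aux2 (by have := (hp m).2; linarith) (hp (m+2)).1.le (sig_nonneg hp n m)
        (sig_nonneg hp n (m+2))]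
    exact add_le_add (mul_le_mul_right (hf m) _) (mul_le_mul_right (hf (m+2)) _)

lemma S_le_sig (hX : IsQuenchedWalk μ X p) [IsProbabilityMeasure μ]
    (hp : ∀ i, p i ∈ Set.Ioo (0:ℝ) 1) {n : ℕ} (hn : n ≠ 0) (j : ℕ) :
    Sfun μ X n j ≤ ENNReal.ofReal (sig p n j) := by
  have hSN : ∀ N j, ∑ t ∈ Finset.range N, wfun μ X n t j ≤ ENNReal.ofReal (sig p n j) := by
    intro N
    induction N with
    | zero => intro j; simp [ENNReal.ofReal]
    | succ N ih =>
      intro j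
      by_cases hj : n ≤ j
      · have hz : ∀ t ∈ Finset.range (N+1), wfun μ X n t j = 0 := fun t _ =>
          w_vanish hX hn t j hj
        rw [Finset.sum_congr rfl hz, Finset.sum_const_zero]
        exact zero_le
      · push_neg at hj
        rw [Finset.sum_range_succ']
        have h1 : ∑ t ∈ Finset.range N, wfun μ X n (t+1) j
            = ∑' j', stepE p j' j * ∑ t ∈ Finset.range N, wfun μ X n t j' := by
          calc ∑ t ∈ Finset.range N, wfun μ X n (t+1) j
              = ∑ t ∈ Finset.range N, ∑' j', stepE p j' j * wfun μ X n t j' := by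
                refine Finset.sum_congr rfl fun t _ => ?_
                rw [w_succ hX, if_neg (by omega)]
            _ = ∑' j', ∑ t ∈ Finset.range N, stepE p j' j * wfun μ X n t j' :=
                (Summable.tsum_finsetSum (fun i _ => ENNReal.summable)).symm
            _ = ∑' j', stepE p j' j * ∑ t ∈ Finset.range N, wfun μ X n t j' :=
                tsum_congr fun j' => (Finset.mul_sum _ _ _).symm
        rw [h1, w_base hX hn, add_comm]
        exact key_bound hp hj _ ih
  rw [Sfun, ENNReal.tsum_eq_iSup_nat]
  exact iSup_le fun N => hSN N j

lemma real_unique (hp : ∀ i, p i ∈ Set.Ioo (0:ℝ) 1) {n : ℕ} (hn : n ≠ 0) (v : ℕ → ℝ)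
    (hv0 : v 0 = 1 + p 0 * v 0 + p 1 * v 1)
    (hvS : ∀ m, m + 1 < n → v (m+1) = (1 - p m) * v m + p (m+2) * v (m+2))
    (hvz : ∀ j, n ≤ j → v j = 0) :
    ∀ j, v j = sig p n j := by
  obtain ⟨N, rfl⟩ := Nat.exists_eq_succ_of_ne_zero hn
  set d : ℕ → ℝ := fun j => sig p (N+1) j - v j with hd
  have hdz : ∀ j, N + 1 ≤ j → d j = 0 := fun j hj => by
    simp only [hd, sig_zero_of_ge hp hj, hvz j hj, sub_zero]
  have hd0 : d 0 = p 0 * d 0 + p 1 * d 1 := by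
    have h1 := sig_balance0 hp (show 0 < N + 1 by omega)
    simp only [hd]; nlinarith [hv0]
  have hdS : ∀ m, m + 1 < N + 1 → d (m+1) = (1 - p m) * d m + p (m+2) * d (m+2) := by
    intro m hm
    have h1 := sig_balance hp hm
    have h2 := hvS m hm
    simp only [hd]; nlinarith
  have hdN : d N = 0 := by
    have e1 : ∑ m ∈ Finset.range (N+1), d m = d 0 + ∑ m ∈ Finset.range N, d (m+1) := by
      rw [Finset.sum_range_succ']
      ring
    have e2 : ∑ m ∈ Finset.range N, d (m+1)
        = ∑ m ∈ Finset.range N, ((1 - p m) * d m + p (m+2) * d (m+2)) :=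
      Finset.sum_congr rfl fun m hm => hdS m (by simpa using Finset.mem_range.1 hm)
    have e3 : ∑ m ∈ Finset.range (N+2), p m * d m
        = p 0 * d 0 + p 1 * d 1 + ∑ m ∈ Finset.range N, p (m+2) * d (m+2) := by
      rw [Finset.sum_range_succ' (fun m => p m * d m) (N+1),
        Finset.sum_range_succ' (fun m => p (m+1) * d (m+1)) N]
      ring
    have e4 : ∑ m ∈ Finset.range (N+2), p m * d m
        = ∑ m ∈ Finset.range (N+1), p m * d m := by
      rw [Finset.sum_range_succ, hdz (N+1) le_rfl, mul_zero, add_zero]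
    have e5 : ∑ m ∈ Finset.range (N+1), p m * d m
        = ∑ m ∈ Finset.range N, p m * d m + p N * d N := Finset.sum_range_succ _ _
    have e6 : ∑ m ∈ Finset.range (N+1), d m = ∑ m ∈ Finset.range N, d m + d N :=
      Finset.sum_range_succ _ _
    have e7 : ∑ m ∈ Finset.range N, ((1 - p m) * d m + p (m+2) * d (m+2))
        = ∑ m ∈ Finset.range N, d m - ∑ m ∈ Finset.range N, p m * d m
          + ∑ m ∈ Finset.range N, p (m+2) * d (m+2) := by
      rw [Finset.sum_add_distrib, ← Finset.sum_sub_distrib]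
      congr 1
      exact Finset.sum_congr rfl fun m _ => by ring
    have hq : 1 - p N > 0 := by have := (hp N).2; linarith
    have : d N = p N * d N := by linarith [e1, e2, e3, e4, e5, e6, e7, hd0]
    nlinarith
  have hdown : ∀ k j, N + 1 ≤ j + 1 + k → d j = 0 := by
    intro k
    induction k with
    | zero =>
      intro j hj
      rcases Nat.lt_or_ge j (N+1) with h | h
      · have : j = N := by omega
        rw [this]; exact hdN
      · exact hdz j h
    | succ k ih =>
      intro j hj
      by_cases h : N + 1 ≤ j + 1 + k
      · exact ih j h
      · have hjm : j + 1 < N + 1 := by omega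
        have h1 := hdS j hjm
        have h2 : d (j+1) = 0 := ih (j+1) (by omega)
        have h3 : d (j+2) = 0 := ih (j+2) (by omega)
        have hq : 1 - p j > 0 := by have := (hp j).2; linarith
        rw [h2, h3] at h1
        have : (1 - p j) * d j = 0 := by linarith
        rcases mul_eq_zero.1 this with h | h
        · linarith
        · exact h
  intro j
  have := hdown (N+1) j (by omega)
  simp only [hd] at this
  linarith
end Final

/-- for the quenched nearest-neighbour walk on ℤ≥0 (reflected at 0, started
at 0) in an environment with `p i ∈ (0,1)`, the expected first hitting time of `n` equals
`T(n) = ∑_{i=0}^{n-1} Δ_i`, for every `n`. -/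
theorem statement3 {Ω : Type*} [MeasurableSpace Ω] (μ : Measure Ω) [IsProbabilityMeasure μ]
    (X : ℕ → Ω → ℕ) (p : ℕ → ℝ) (hp : ∀ i, p i ∈ Set.Ioo (0 : ℝ) 1)
    (hX : IsQuenchedWalk μ X p) (n : ℕ) :
    ∫⁻ ω, hitTime X n ω ∂μ = ENNReal.ofReal (Texp p n) := by
  rcases Nat.eq_zero_or_pos n with rfl | hn
  · have hT : Texp p 0 = 0 := by simp [Texp]
    rw [hT, ENNReal.ofReal_zero]
    have hae : ∀ᵐ ω ∂μ, hitTime X 0 ω = 0 := by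
      filter_upwards [hX.2.1] with ω h
      refine le_antisymm ?_ zero_le
      have hmem : ((0:ℕ):ℝ≥0∞) ∈ (fun t : ℕ => (t:ℝ≥0∞)) '' {t | X t ω = 0} := ⟨0, h, rfl⟩
      simpa [hitTime] using sInf_le hmem
    calc ∫⁻ ω, hitTime X 0 ω ∂μ = ∫⁻ _, 0 ∂μ := lintegral_congr_ae hae
      _ = 0 := lintegral_zero
  · have hn' : n ≠ 0 := by omega
    have hq : ∀ i, (0:ℝ) ≤ p i := fun i => (hp i).1.le
    have hfin : ∀ j, Sfun μ X n j ≠ ⊤ := fun j =>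
      ((S_le_sig hX hp hn' j).trans_lt ENNReal.ofReal_lt_top).ne
    set v : ℕ → ℝ := fun j => (Sfun μ X n j).toReal with hv
    have hv0 : v 0 = 1 + p 0 * v 0 + p 1 * v 1 := by
      have h := S_eq hX hn
      rw [if_pos rfl, tsum_step_reduce0, stepE00, stepE_down 0] at h
      have hA : ENNReal.ofReal (p 0) * Sfun μ X n 0 ≠ ⊤ :=
        ENNReal.mul_ne_top ENNReal.ofReal_ne_top (hfin 0)
      have hB : ENNReal.ofReal (p 1) * Sfun μ X n 1 ≠ ⊤ :=
        ENNReal.mul_ne_top ENNReal.ofReal_ne_top (hfin 1)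
      have h2 := congrArg ENNReal.toReal h
      rw [ENNReal.toReal_add ENNReal.one_ne_top (ENNReal.add_ne_top.2 ⟨hA, hB⟩),
        ENNReal.toReal_add hA hB, ENNReal.toReal_mul, ENNReal.toReal_mul,
        ENNReal.toReal_ofReal (hq 0), ENNReal.toReal_ofReal (hq 1), ENNReal.toReal_one] at h2
      simp only [hv]
      linarith [h2]
    have hvS : ∀ m, m + 1 < n → v (m+1) = (1 - p m) * v m + p (m+2) * v (m+2) := by
      intro m hm
      have h := S_eq hX hm
      rw [if_neg (by omega), zero_add, tsum_step_reduce, stepE_up, stepE_down (m+1)] at h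
      have hA : ENNReal.ofReal (1 - p m) * Sfun μ X n m ≠ ⊤ :=
        ENNReal.mul_ne_top ENNReal.ofReal_ne_top (hfin m)
      have hB : ENNReal.ofReal (p (m+2)) * Sfun μ X n (m+2) ≠ ⊤ :=
        ENNReal.mul_ne_top ENNReal.ofReal_ne_top (hfin (m+2))
      have h2 := congrArg ENNReal.toReal h
      rw [ENNReal.toReal_add hA hB, ENNReal.toReal_mul, ENNReal.toReal_mul,
        ENNReal.toReal_ofReal (by have := (hp m).2; linarith : (0:ℝ) ≤ 1 - p m),
        ENNReal.toReal_ofReal (hq (m+2))] at h2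
      simp only [hv]
      linarith [h2]
    have hvz : ∀ j, n ≤ j → v j = 0 := by
      intro j hj
      simp only [hv, S_vanish hX hn' hj, ENNReal.toReal_zero]
    have huniq := real_unique hp hn' v hv0 hvS hvz
    have hSval : ∀ j, Sfun μ X n j = ENNReal.ofReal (sig p n j) := fun j => by
      rw [← huniq j]
      exact (ENNReal.ofReal_toReal (hfin j)).symm
    rw [lintegral_hitTime μ hX.1 n]
    calc ∑' t, μ (Ev X n t) = ∑' t, ∑' j, wfun μ X n t j :=
          tsum_congr fun t => measEv_eq_tsum μ hX.1 n t
      _ = ∑' j, Sfun μ X n j := ENNReal.tsum_comm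
      _ = ∑ j ∈ Finset.range n, Sfun μ X n j :=
          tsum_eq_sum (fun j hj => S_vanish hX hn' (by simpa using hj))
      _ = ∑ j ∈ Finset.range n, ENNReal.ofReal (sig p n j) :=
          Finset.sum_congr rfl fun j _ => hSval j
      _ = ENNReal.ofReal (∑ j ∈ Finset.range n, sig p n j) :=
          (ENNReal.ofReal_sum_of_nonneg fun j _ => sig_nonneg hp n j).symm
      _ = ENNReal.ofReal (Texp p n) := by rw [sum_sig hp n]
end
end

section
/- For any environment ω with p_i ∈ (0,1) and any n ∈ ℤ≥0, T(n) ≤ 2 n² exp( 2 max_{0 ≤ i ≤ n-1} | ∑_{j=0}^i log(p_j/q_j) | ), where T(n) = ∑_{i=0}^{n-1} ∑_{j=0}^i q_{i-j}^{-1} ∏_{k=i-j+1}^{i}(p_k/q_k). -/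
open MeasureTheory Filter Finset Real
open scoped ENNReal

noncomputable section

/-- for any environment with `p i ∈ (0,1)` and any `n`,
`T(n) ≤ 2 n² exp( 2 max_{0 ≤ i ≤ n-1} | ∑_{j=0}^i log(p_j/q_j) | )`. -/
theorem statement7 (p : ℕ → ℝ) (hp : ∀ i, p i ∈ Set.Ioo (0 : ℝ) 1) (n : ℕ) :
    Texp p n ≤ 2 * (n : ℝ) ^ 2 *
      Real.exp (2 * ⨆ i ∈ Finset.range n,
        |∑ j ∈ Finset.range (i + 1), Real.log (p j / (1 - p j))|) := by
  have hq : ∀ k, 0 < 1 - p k := fun k => by have := (hp k).2; linarith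
  have hρpos : ∀ k, 0 < p k / (1 - p k) := fun k => div_pos (hp k).1 (hq k)
  set f : ℕ → ℝ := fun i => |∑ j ∈ Finset.range (i + 1), Real.log (p j / (1 - p j))|
    with hf
  set g : ℕ → ℝ := fun i => ⨆ _ : i ∈ Finset.range n, f i with hg
  set M : ℝ := ⨆ i, g i with hMdef
  have hgval : ∀ i ∈ Finset.range n, g i = f i := fun i hi => ciSup_pos hi
  have hgzero : ∀ i, i ∉ Finset.range n → g i = 0 := by
    intro i hi
    haveI : IsEmpty (i ∈ Finset.range n) := ⟨hi⟩
    show (⨆ _ : i ∈ Finset.range n, f i) = 0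
    rw [iSup_of_empty', Real.sSup_empty]
  have hbdd : BddAbove (Set.range g) := by
    apply Set.Finite.bddAbove
    apply Set.Finite.subset
      ((((Finset.range n).image f : Finset ℝ)).finite_toSet.insert 0)
    rintro x ⟨i, rfl⟩
    rw [Set.mem_insert_iff]
    by_cases hi : i ∈ Finset.range n
    · right; rw [hgval i hi]; exact Finset.mem_coe.2 (Finset.mem_image_of_mem f hi)
    · left; exact hgzero i hi
  have hM0 : 0 ≤ M := by
    have := le_ciSup hbdd n
    rwa [hgzero n (by simp)] at this
  have hfM : ∀ i ∈ Finset.range n, f i ≤ M := fun i hi =>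
    (hgval i hi) ▸ le_ciSup hbdd i
  -- partial sums bound
  have hS : ∀ a ≤ n, |∑ j ∈ Finset.range a, Real.log (p j / (1 - p j))| ≤ M := by
    intro a ha
    match a with
    | 0 => simpa using hM0
    | b + 1 => exact hfM b (Finset.mem_range.2 ha)
  -- products bound
  have hprod : ∀ i < n, ∀ a ≤ i + 1,
      ∏ k ∈ Finset.Icc a i, p k / (1 - p k) ≤ Real.exp (2 * M) := by
    intro i hi a ha
    have h1 : ∏ k ∈ Finset.Icc a i, p k / (1 - p k)
        = Real.exp (∑ k ∈ Finset.Icc a i, Real.log (p k / (1 - p k))) := by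
      rw [Real.exp_sum]
      exact (Finset.prod_congr rfl fun k _ => (Real.exp_log (hρpos k)).symm)
    rw [h1]
    apply Real.exp_le_exp.2
    have h2 : Finset.Icc a i = Finset.Ico a (i + 1) := by
      rw [Finset.Ico_add_one_right_eq_Icc]
    rw [h2, Finset.sum_Ico_eq_sub _ ha]
    have hA := hS (i+1) hi
    have hB := hS a (ha.trans hi)
    calc ∑ j ∈ Finset.range (i+1), Real.log (p j / (1 - p j))
          - ∑ j ∈ Finset.range a, Real.log (p j / (1 - p j))
        ≤ |∑ j ∈ Finset.range (i+1), Real.log (p j / (1 - p j))|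
          + |∑ j ∈ Finset.range a, Real.log (p j / (1 - p j))| := by
          have := abs_sub_abs_le_abs_sub (∑ j ∈ Finset.range (i+1), Real.log (p j / (1 - p j))) 0
          exact (sub_le_iff_le_add).2 (by
            have h3 := le_abs_self (∑ j ∈ Finset.range (i+1), Real.log (p j / (1 - p j)))
            have h4 := neg_abs_le (∑ j ∈ Finset.range a, Real.log (p j / (1 - p j)))
            linarith)
      _ ≤ M + M := add_le_add hA hB
      _ = 2 * M := by ring
  -- term bound
  have hterm : ∀ i < n, ∀ j ≤ i,
      (1 - p (i - j))⁻¹ * ∏ k ∈ Finset.Icc (i - j + 1) i, p k / (1 - p k)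
        ≤ 2 * Real.exp (2 * M) := by
    intro i hi j hj
    set m := i - j with hm
    have hmi : m ≤ i := Nat.sub_le i j
    have hinv : (1 - p m)⁻¹ = 1 + p m / (1 - p m) := by
      have h0 : (1 - p m) ≠ 0 := ne_of_gt (hq m)
      field_simp
      ring
    rw [hinv, add_mul, one_mul]
    have hP1 : ∏ k ∈ Finset.Icc (m + 1) i, p k / (1 - p k) ≤ Real.exp (2 * M) :=
      hprod i hi (m + 1) (by omega)
    have hP2 : p m / (1 - p m) * ∏ k ∈ Finset.Icc (m + 1) i, p k / (1 - p k)
        ≤ Real.exp (2 * M) := by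
      have heq : ∏ k ∈ Finset.Icc m i, p k / (1 - p k)
          = p m / (1 - p m) * ∏ k ∈ Finset.Icc (m + 1) i, p k / (1 - p k) := by
        rw [← Finset.Ico_add_one_right_eq_Icc, Finset.prod_eq_prod_Ico_succ_bot (by omega),
          Finset.Ico_add_one_right_eq_Icc]
      rw [← heq]
      exact hprod i hi m (by omega)
    linarith
  -- sum up
  have hDelta : ∀ i < n, DeltaEnv p i ≤ (i + 1 : ℝ) * (2 * Real.exp (2 * M)) := by
    intro i hi
    unfold DeltaEnv
    calc ∑ j ∈ Finset.range (i + 1),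
          (1 - p (i - j))⁻¹ * ∏ k ∈ Finset.Icc (i - j + 1) i, p k / (1 - p k)
        ≤ ∑ _j ∈ Finset.range (i + 1), 2 * Real.exp (2 * M) := by
          apply Finset.sum_le_sum
          intro j hj
          exact hterm i hi j (by simpa using Nat.lt_succ_iff.1 (Finset.mem_range.1 hj))
      _ = (i + 1 : ℝ) * (2 * Real.exp (2 * M)) := by
          rw [Finset.sum_const, Finset.card_range]; ring
  have hfin : Texp p n ≤ (n : ℝ) * ((n : ℝ) * (2 * Real.exp (2 * M))) := by
    unfold Texp
    calc ∑ i ∈ Finset.range n, DeltaEnv p i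
        ≤ ∑ _i ∈ Finset.range n, (n : ℝ) * (2 * Real.exp (2 * M)) := by
          apply Finset.sum_le_sum
          intro i hi
          refine (hDelta i (Finset.mem_range.1 hi)).trans ?_
          have : (i + 1 : ℝ) ≤ (n : ℝ) := by
            exact_mod_cast Nat.succ_le_of_lt (Finset.mem_range.1 hi)
          have hpos : (0:ℝ) ≤ 2 * Real.exp (2 * M) := by positivity
          nlinarith
      _ = (n : ℝ) * ((n : ℝ) * (2 * Real.exp (2 * M))) := by
          rw [Finset.sum_const, Finset.card_range]; ring
  calc Texp p n ≤ (n : ℝ) * ((n : ℝ) * (2 * Real.exp (2 * M))) := hfin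
    _ = 2 * (n : ℝ) ^ 2 * Real.exp (2 * M) := by ring
end
end

section
/- Let g, h : ℤ≥0 → [0,∞) be non-negative increasing functions with, for a.e. environment ω: (i) T(n) ≤ h(n) for all but finitely many n, and (ii) T(n) ≤ g(n) for infinitely many n; and suppose ∑_{n≥1} h(n)/g(n^{3/2}) < ∞ and g(n^{3/4})/g(n) → 0. Then for a.e. ω, for any ε > 0, the walk satisfies P_ω-almost surely X_t ≥ g^{-1}((1-ε)t) for infinitely many t. -/
open MeasureTheory Filter Finset Real
open scoped ENNReal

noncomputable section

open scoped Classical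
set_option linter.unusedSectionVars false

namespace S11

variable {Ω : Type*} [MeasurableSpace Ω] {X : ℕ → Ω → ℕ}

lemma hitTime_eq_dite (X : ℕ → Ω → ℕ) (n : ℕ) (ω : Ω) :
    hitTime X n ω = if h : ∃ t, X t ω = n then ((Nat.find h : ℕ) : ℝ≥0∞) else ⊤ := by
  unfold hitTime
  split_ifs with h
  · refine le_antisymm (sInf_le ⟨Nat.find h, Nat.find_spec h, rfl⟩) (le_sInf ?_)
    rintro b ⟨s, hs, rfl⟩
    exact Nat.cast_le.mpr (Nat.find_min' h hs)
  · have he : {t : ℕ | X t ω = n} = ∅ := by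
      ext t; simp only [Set.mem_setOf_eq, Set.mem_empty_iff_false, iff_false]
      exact fun ht => h ⟨t, ht⟩
    rw [he]; simp

lemma hitTime_eq_coe_iff {n t : ℕ} {ω : Ω} :
    hitTime X n ω = (t : ℝ≥0∞) ↔ X t ω = n ∧ ∀ s < t, X s ω ≠ n := by
  rw [hitTime_eq_dite]
  split_ifs with h
  · rw [Nat.cast_inj]
    constructor
    · rintro rfl
      exact ⟨Nat.find_spec h, fun s hs => Nat.find_min h hs⟩
    · rintro ⟨h1, h2⟩
      exact le_antisymm (Nat.find_min' h h1) (Nat.le_of_not_lt fun hlt => h2 _ hlt (Nat.find_spec h))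
  · constructor
    · intro htop; exact absurd htop.symm (ENNReal.natCast_ne_top t)
    · rintro ⟨h1, -⟩; exact absurd ⟨t, h1⟩ h

lemma hitTime_le_coe_iff {n t : ℕ} {ω : Ω} :
    hitTime X n ω ≤ (t : ℝ≥0∞) ↔ ∃ s ≤ t, X s ω = n := by
  rw [hitTime_eq_dite]
  split_ifs with h
  · rw [Nat.cast_le]
    constructor
    · intro hle; exact ⟨Nat.find h, hle, Nat.find_spec h⟩
    · rintro ⟨s, hs, hX⟩; exact le_trans (Nat.find_min' h hX) hs
  · constructor
    · intro htop
      exact absurd (top_le_iff.mp htop) (by simp)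
    · rintro ⟨s, _, hX⟩
      exact absurd ⟨s, hX⟩ h

lemma hitTime_cases (X : ℕ → Ω → ℕ) (n : ℕ) (ω : Ω) :
    hitTime X n ω = ⊤ ∨ ∃ t : ℕ, hitTime X n ω = (t : ℝ≥0∞) ∧ X t ω = n := by
  rw [hitTime_eq_dite]
  split_ifs with h
  · exact Or.inr ⟨Nat.find h, rfl, Nat.find_spec h⟩
  · exact Or.inl rfl

lemma measurable_hitTime (hX : ∀ t, Measurable (X t)) (n : ℕ) :
    Measurable (hitTime X n) := by
  have heq : hitTime X n = fun ω => ⨅ (t : ℕ), (if X t ω = n then (t : ℝ≥0∞) else ⊤) := by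
    funext ω
    rw [hitTime_eq_dite]
    split_ifs with h
    · refine le_antisymm (le_iInf fun t => ?_) ?_
      · split_ifs with ht
        · exact Nat.cast_le.mpr (Nat.find_min' h ht)
        · exact le_top
      · refine iInf_le_of_le (Nat.find h) ?_
        rw [if_pos (Nat.find_spec h)]
    · refine le_antisymm (le_iInf fun t => ?_) le_top
      rw [if_neg (fun ht => h ⟨t, ht⟩)]
  rw [heq]
  refine Measurable.iInf fun t => Measurable.ite ((hX t) (measurableSet_singleton n)) measurable_const measurable_const

/-! ### Cylinder machinery -/

def cylE (X : ℕ → Ω → ℕ) (t : ℕ) (x : ℕ → ℕ) : Set Ω := {ω | ∀ s ≤ t, X s ω = x s}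

lemma measurableSet_cylE (hX : ∀ t, Measurable (X t)) (t : ℕ) (x : ℕ → ℕ) :
    MeasurableSet (cylE X t x) := by
  have : cylE X t x = ⋂ (s : ℕ) (_ : s ≤ t), (X s) ⁻¹' {x s} := by
    ext ω; simp [cylE, Set.mem_iInter]
  rw [this]
  exact MeasurableSet.iInter fun s => MeasurableSet.iInter fun _ => (hX s) (measurableSet_singleton _)

lemma cylE_congr {t : ℕ} {x y : ℕ → ℕ} (h : ∀ s ≤ t, x s = y s) :
    cylE X t x = cylE X t y := by
  ext ω
  constructor <;> intro hω s hs
  · rw [← h s hs]; exact hω s hs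
  · rw [h s hs]; exact hω s hs

variable {p : ℕ → ℝ} {μ : Measure Ω}

lemma cylE_succ_measure (hw : IsQuenchedWalk μ X p) (t : ℕ) (x : ℕ → ℕ) :
    μ (cylE X (t+1) x) = ENNReal.ofReal (step p (x t) (x (t+1))) * μ (cylE X t x) := by
  have h := hw.2.2 t x (x (t+1))
  have hset : {ω | X (t + 1) ω = x (t+1) ∧ ∀ s ≤ t, X s ω = x s} = cylE X (t+1) x := by
    ext ω
    constructor
    · rintro ⟨h1, h2⟩ s hs
      rcases Nat.le_add_one_iff.mp hs with hs' | rfl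
      · exact h2 s hs'
      · exact h1
    · intro hω
      exact ⟨hω (t+1) le_rfl, fun s hs => hω s (hs.trans (Nat.le_succ t))⟩
  rw [← hset, h]; rfl

lemma cylE_window (hw : IsQuenchedWalk μ X p) (t r : ℕ) (x : ℕ → ℕ) :
    μ (cylE X (t+r) x)
      = (∏ i ∈ Finset.range r, ENNReal.ofReal (step p (x (t+i)) (x (t+i+1)))) * μ (cylE X t x) := by
  induction r with
  | zero => simp
  | succ r ih =>
    rw [show t + (r+1) = (t+r)+1 from rfl, cylE_succ_measure hw, ih, Finset.prod_range_succ]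
    ring

/-! ### decomposition of prefix events -/

def extF {t : ℕ} (v : Fin (t+1) → ℕ) : ℕ → ℕ := fun s => if h : s < t+1 then v ⟨s, h⟩ else 0

lemma extF_eq {t : ℕ} (v : Fin (t+1) → ℕ) {s : ℕ} (hs : s ≤ t) :
    extF v s = v ⟨s, Nat.lt_succ_of_le hs⟩ := dif_pos _

def DepOn (S : Set (ℕ → ℕ)) (t : ℕ) : Prop :=
  ∀ x y : ℕ → ℕ, (∀ s ≤ t, x s = y s) → x ∈ S → y ∈ S

def trajE (X : ℕ → Ω → ℕ) (S : Set (ℕ → ℕ)) : Set Ω := {ω | (fun s => X s ω) ∈ S}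

lemma trajE_eq_iUnion {S : Set (ℕ → ℕ)} {t : ℕ} (hS : DepOn S t) :
    trajE X S = ⋃ (v : {v : Fin (t+1) → ℕ // extF v ∈ S}), cylE X t (extF v.1) := by
  ext ω
  simp only [Set.mem_iUnion]
  constructor
  · intro hω
    set v : Fin (t+1) → ℕ := fun i => X i.1 ω with hv
    have hagree : ∀ s ≤ t, X s ω = extF v s := fun s hs => by rw [extF_eq v hs]
    exact ⟨⟨v, hS _ _ hagree hω⟩, fun s hs => hagree s hs⟩
  · rintro ⟨⟨v, hv⟩, hcyl⟩
    exact hS _ _ (fun s hs => (hcyl s hs).symm) hv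

lemma pairwise_disjoint_cylE {S : Set (ℕ → ℕ)} {t : ℕ} :
    Pairwise (Function.onFun Disjoint fun v : {v : Fin (t+1) → ℕ // extF v ∈ S} => cylE X t (extF v.1)) := by
  intro v w hvw
  refine Set.disjoint_left.mpr fun ω hv hw => hvw ?_
  refine Subtype.ext (funext fun i => ?_)
  have h1 := hv i.1 (Nat.lt_succ_iff.mp i.2)
  have h2 := hw i.1 (Nat.lt_succ_iff.mp i.2)
  rw [extF_eq _ (Nat.lt_succ_iff.mp i.2)] at h1 h2
  simp only [Fin.eta] at h1 h2
  rw [← h1, ← h2]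

lemma measure_trajE (hX : ∀ t, Measurable (X t)) {S : Set (ℕ → ℕ)} {t : ℕ} (hS : DepOn S t) :
    μ (trajE X S) = ∑' (v : {v : Fin (t+1) → ℕ // extF v ∈ S}), μ (cylE X t (extF v.1)) := by
  rw [trajE_eq_iUnion hS, measure_iUnion pairwise_disjoint_cylE fun v => measurableSet_cylE hX t _]

lemma measurableSet_trajE (hX : ∀ t, Measurable (X t)) {S : Set (ℕ → ℕ)} {t : ℕ} (hS : DepOn S t) :
    MeasurableSet (trajE X S) := by
  rw [trajE_eq_iUnion hS]
  exact MeasurableSet.iUnion fun v => measurableSet_cylE hX t _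

/-! ### merge machinery and the key product formula -/

def uext {L : ℕ} (u : Fin L → ℕ) : ℕ → ℕ := fun j => if h : j < L then u ⟨j, h⟩ else 0

def zfn (b : ℕ) {L : ℕ} (u : Fin L → ℕ) : ℕ → ℕ := fun i => if i = 0 then b else uext u (i-1)

def wtv (p : ℕ → ℝ) (L b : ℕ) (u : Fin L → ℕ) : ℝ≥0∞ :=
  ∏ i ∈ Finset.range L, ENNReal.ofReal (step p (zfn b u i) (zfn b u (i+1)))

def avoidC (c : ℕ) {L : ℕ} (u : Fin L → ℕ) : Prop := ∀ i, 1 ≤ i → i ≤ L → uext u (i-1) ≠ c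

def qval (p : ℕ → ℝ) (b c L : ℕ) : ℝ≥0∞ :=
  ∑' (u : Fin L → ℕ), if avoidC c u then wtv p L b u else 0

def noHitE (X : ℕ → Ω → ℕ) (t L c : ℕ) : Set Ω := {ω | ∀ i, 1 ≤ i → i ≤ L → X (t+i) ω ≠ c}

def mergeF {t L : ℕ} (v : Fin (t+1) → ℕ) (u : Fin L → ℕ) : ℕ → ℕ :=
  fun s => if s ≤ t then extF v s else uext u (s - (t+1))

lemma mergeF_le {t L : ℕ} (v : Fin (t+1) → ℕ) (u : Fin L → ℕ) {s : ℕ} (hs : s ≤ t) :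
    mergeF v u s = extF v s := if_pos hs

lemma mergeF_add {t L : ℕ} (v : Fin (t+1) → ℕ) (u : Fin L → ℕ) {i : ℕ} (h1 : 1 ≤ i) :
    mergeF v u (t+i) = uext u (i-1) := by
  unfold mergeF
  rw [if_neg (by omega)]
  congr 1
  omega

lemma cylE_merge_measure (hw : IsQuenchedWalk μ X p) {t L : ℕ} {v : Fin (t+1) → ℕ}
    {u : Fin L → ℕ} {b : ℕ} (hb : extF v t = b) :
    μ (cylE X (t+L) (mergeF v u)) = wtv p L b u * μ (cylE X t (extF v)) := by
  rw [cylE_window hw t L (mergeF v u)]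
  have hcyl : μ (cylE X t (mergeF v u)) = μ (cylE X t (extF v)) :=
    congrArg μ (cylE_congr fun s hs => mergeF_le v u hs)
  rw [hcyl]
  congr 1
  unfold wtv
  refine Finset.prod_congr rfl fun i hi => ?_
  have hiL : i < L := Finset.mem_range.mp hi
  have e1 : mergeF v u (t+i) = zfn b u i := by
    rcases Nat.eq_zero_or_pos i with rfl | hpos
    · rw [Nat.add_zero, mergeF_le v u le_rfl, hb]; rfl
    · rw [mergeF_add v u hpos]
      unfold zfn
      rw [if_neg (by omega)]
  have e2 : mergeF v u (t+i+1) = zfn b u (i+1) := by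
    rw [show t+i+1 = t+(i+1) from rfl, mergeF_add v u (by omega)]
    unfold zfn
    rw [if_neg (by omega)]
  rw [e1, e2]

lemma inter_noHit_eq_iUnion {S : Set (ℕ → ℕ)} {t L c : ℕ} (hS : DepOn S t) :
    trajE X S ∩ noHitE X t L c
      = ⋃ (w : {w : (Fin (t+1) → ℕ) × (Fin L → ℕ) // extF w.1 ∈ S ∧ avoidC c w.2}),
          cylE X (t+L) (mergeF w.1.1 w.1.2) := by
  ext ω
  simp only [Set.mem_iUnion, Set.mem_inter_iff]
  constructor
  · rintro ⟨hS', hNo⟩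
    set v : Fin (t+1) → ℕ := fun i => X i.1 ω with hvdef
    set u : Fin L → ℕ := fun i => X (t+1+i.1) ω with hudef
    have hagree : ∀ s ≤ t, X s ω = extF v s := fun s hs => by rw [extF_eq v hs]
    have hme : ∀ s ≤ t + L, X s ω = mergeF v u s := by
      intro s hs
      unfold mergeF
      split_ifs with hst
      · exact hagree s hst
      · have h1 : s - (t+1) < L := by omega
        unfold uext
        rw [dif_pos h1]
        show X s ω = X (t+1+(s-(t+1))) ω
        congr 1
        omega
    refine ⟨⟨(v, u), hS _ _ hagree hS', ?_⟩, fun s hs => hme s hs⟩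
    intro i h1 hL
    have he : uext u (i-1) = X (t+i) ω := by
      unfold uext
      rw [dif_pos (by omega : i-1 < L)]
      show X (t+1+(i-1)) ω = X (t+i) ω
      congr 1
      omega
    rw [he]
    exact hNo i h1 hL
  · rintro ⟨⟨⟨v, u⟩, hvS, hu⟩, hcyl⟩
    constructor
    · refine hS (extF v) _ (fun s hs => ?_) hvS
      rw [← mergeF_le v u hs, ← hcyl s (hs.trans (Nat.le_add_right t L))]
    · intro i h1 hL
      rw [hcyl (t+i) (by omega), mergeF_add v u h1]
      exact hu i h1 hL

lemma pairwise_disjoint_merge {S : Set (ℕ → ℕ)} {t L c : ℕ} :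
    Pairwise (Function.onFun Disjoint fun w : {w : (Fin (t+1) → ℕ) × (Fin L → ℕ) // extF w.1 ∈ S ∧ avoidC c w.2} =>
      cylE X (t+L) (mergeF w.1.1 w.1.2)) := by
  intro w1 w2 hne
  refine Set.disjoint_left.mpr fun ω h1 h2 => hne ?_
  refine Subtype.ext (Prod.ext ?_ ?_)
  · funext i
    have hi : i.1 ≤ t := Nat.lt_succ_iff.mp i.2
    have e1 := h1 i.1 (hi.trans (Nat.le_add_right t L))
    have e2 := h2 i.1 (hi.trans (Nat.le_add_right t L))
    rw [mergeF_le _ _ hi, extF_eq _ hi] at e1 e2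
    simp only [Fin.eta] at e1 e2
    rw [← e1, ← e2]
  · funext j
    have hjL : 1 + j.1 ≤ L := by omega
    have e1 := h1 (t+(1+j.1)) (by omega)
    have e2 := h2 (t+(1+j.1)) (by omega)
    rw [mergeF_add _ _ (by omega)] at e1 e2
    have hj : 1 + j.1 - 1 = j.1 := by omega
    rw [hj] at e1 e2
    unfold uext at e1 e2
    rw [dif_pos j.2] at e1 e2
    simp only [Fin.eta] at e1 e2
    rw [← e1, ← e2]

lemma measure_trajE_inter_noHit (hX : ∀ t, Measurable (X t)) (hw : IsQuenchedWalk μ X p)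
    {t L c : ℕ} {S : Set (ℕ → ℕ)} (hS : DepOn S t) {b : ℕ} (hSb : ∀ x ∈ S, x t = b) :
    μ (trajE X S ∩ noHitE X t L c) = qval p b c L * μ (trajE X S) := by
  rw [inter_noHit_eq_iUnion hS,
    measure_iUnion pairwise_disjoint_merge (fun w => measurableSet_cylE hX _ _)]
  have hterm : ∀ (w : {w : (Fin (t+1) → ℕ) × (Fin L → ℕ) // extF w.1 ∈ S ∧ avoidC c w.2}),
      μ (cylE X (t+L) (mergeF w.1.1 w.1.2)) = wtv p L b w.1.2 * μ (cylE X t (extF w.1.1)) :=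
    fun w => cylE_merge_measure hw (hSb _ w.2.1)
  rw [tsum_congr hterm]
  have hsub : ∑' (w : {w : (Fin (t+1) → ℕ) × (Fin L → ℕ) // extF w.1 ∈ S ∧ avoidC c w.2}),
      wtv p L b w.1.2 * μ (cylE X t (extF w.1.1))
      = ∑' (w : (Fin (t+1) → ℕ) × (Fin L → ℕ)),
          Set.indicator {w : (Fin (t+1) → ℕ) × (Fin L → ℕ) | extF w.1 ∈ S ∧ avoidC c w.2}
            (fun w => wtv p L b w.2 * μ (cylE X t (extF w.1))) w := by
    exact _root_.tsum_subtype
      {w : (Fin (t+1) → ℕ) × (Fin L → ℕ) | extF w.1 ∈ S ∧ avoidC c w.2}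
      (fun w => wtv p L b w.2 * μ (cylE X t (extF w.1)))
  rw [hsub]
  have hind : ∀ (w : (Fin (t+1) → ℕ) × (Fin L → ℕ)),
      Set.indicator {w : (Fin (t+1) → ℕ) × (Fin L → ℕ) | extF w.1 ∈ S ∧ avoidC c w.2}
        (fun w => wtv p L b w.2 * μ (cylE X t (extF w.1))) w
      = (if extF w.1 ∈ S then μ (cylE X t (extF w.1)) else 0)
          * (if avoidC c w.2 then wtv p L b w.2 else 0) := by
    intro w
    by_cases hw1 : extF w.1 ∈ S <;> by_cases hw2 : avoidC c w.2 <;>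
      simp [Set.indicator, hw1, hw2, mul_comm]
  rw [tsum_congr hind, ENNReal.tsum_prod']
  have hin : ∀ v : Fin (t+1) → ℕ,
      (∑' (u : Fin L → ℕ), (if extF v ∈ S then μ (cylE X t (extF v)) else 0)
        * (if avoidC c u then wtv p L b u else 0))
      = (if extF v ∈ S then μ (cylE X t (extF v)) else 0) * qval p b c L := by
    intro v
    rw [ENNReal.tsum_mul_left]
    rfl
  have hv : μ (trajE X S)
      = ∑' (v : Fin (t+1) → ℕ), (if extF v ∈ S then μ (cylE X t (extF v)) else 0) := by
    calc μ (trajE X S)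
        = ∑' (v : ↥{v : Fin (t+1) → ℕ | extF v ∈ S}), μ (cylE X t (extF v.1)) :=
          measure_trajE hX hS
      _ = ∑' (v : Fin (t+1) → ℕ),
            Set.indicator {v : Fin (t+1) → ℕ | extF v ∈ S}
              (fun v => μ (cylE X t (extF v))) v :=
            _root_.tsum_subtype {v : Fin (t+1) → ℕ | extF v ∈ S}
              (fun v => μ (cylE X t (extF v)))
      _ = ∑' (v : Fin (t+1) → ℕ), (if extF v ∈ S then μ (cylE X t (extF v)) else 0) := by
          refine tsum_congr fun v => ?_
          by_cases hvS : extF v ∈ S <;> simp [Set.indicator, hvS]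
  rw [tsum_congr hin, ENNReal.tsum_mul_right, hv, mul_comm]

/-! ### admissibility -/

def GoodSet (X : ℕ → Ω → ℕ) : Set Ω := {ω | X 0 ω = 0 ∧ ∀ s, X (s+1) ω ≤ X s ω + 1}

lemma step_eq_zero_of_far (p : ℕ → ℝ) {j m : ℕ} (h : j + 1 < m) : step p j m = 0 := by
  unfold step
  split_ifs with h0 h1 h2 h3 h4 <;> first | rfl | omega

lemma mu_far_step_zero (hw : IsQuenchedWalk μ X p) (t : ℕ) {j m : ℕ} (h : j + 1 < m) :
    μ {ω | X t ω = j ∧ X (t+1) ω = m} = 0 := by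
  have hsub : {ω | X t ω = j ∧ X (t+1) ω = m}
      ⊆ ⋃ (v : Fin (t+1) → ℕ),
          (if extF v t = j then {ω | X (t+1) ω = m ∧ ∀ s ≤ t, X s ω = extF v s} else ∅) := by
    rintro ω ⟨h1, h2⟩
    refine Set.mem_iUnion.mpr ⟨fun i => X i.1 ω, ?_⟩
    have hagree : ∀ s ≤ t, X s ω = extF (fun i : Fin (t+1) => X i.1 ω) s :=
      fun s hs => by rw [extF_eq _ hs]
    rw [if_pos (by rw [← hagree t le_rfl]; exact h1)]
    exact ⟨h2, hagree⟩
  refine measure_mono_null hsub (measure_iUnion_null fun v => ?_)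
  split_ifs with hv
  · rw [hw.2.2 t (extF v) m, hv, step_eq_zero_of_far p h]
    simp
  · simp

lemma mu_good_compl (hw : IsQuenchedWalk μ X p) : μ (GoodSet X)ᶜ = 0 := by
  have hsub : (GoodSet X)ᶜ ⊆ {ω | ¬ (X 0 ω = 0)}
      ∪ ⋃ (s : ℕ), ⋃ (jm : ℕ × ℕ),
          (if jm.1 + 1 < jm.2 then {ω | X s ω = jm.1 ∧ X (s+1) ω = jm.2} else ∅) := by
    intro ω hω
    simp only [GoodSet, Set.mem_compl_iff, Set.mem_setOf_eq, not_and, not_forall] at hω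
    by_cases h0 : X 0 ω = 0
    · obtain ⟨s, hs⟩ := hω h0
      refine Or.inr (Set.mem_iUnion.mpr ⟨s, Set.mem_iUnion.mpr ⟨(X s ω, X (s+1) ω), ?_⟩⟩)
      rw [if_pos (by omega)]
      exact ⟨rfl, rfl⟩
    · exact Or.inl h0
  refine measure_mono_null hsub (measure_union_null ?_ ?_)
  · have := hw.2.1
    rwa [ae_iff] at this
  · refine measure_iUnion_null fun s => measure_iUnion_null fun jm => ?_
    split_ifs with hjm
    · exact mu_far_step_zero hw s hjm
    · simp

lemma crossing {ω : Ω} (hg : ω ∈ GoodSet X) :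
    ∀ s a, a ≤ X s ω → ∃ r ≤ s, X r ω = a := by
  intro s
  induction s with
  | zero =>
    intro a ha
    rw [hg.1] at ha
    exact ⟨0, le_rfl, by rw [hg.1]; omega⟩
  | succ s ih =>
    intro a ha
    by_cases h : a ≤ X s ω
    · obtain ⟨r, hr, hXr⟩ := ih a h
      exact ⟨r, hr.trans (Nat.le_succ s), hXr⟩
    · have hstep := hg.2 s
      exact ⟨s+1, le_rfl, by omega⟩

lemma X_le_time {ω : Ω} (hg : ω ∈ GoodSet X) : ∀ t, X t ω ≤ t := by
  intro t
  induction t with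
  | zero => exact le_of_eq hg.1
  | succ t ih => exact (hg.2 t).trans (by omega)

lemma hitTime_mono_good {ω : Ω} (hg : ω ∈ GoodSet X) {a b : ℕ} (hab : a ≤ b) :
    hitTime X a ω ≤ hitTime X b ω := by
  rcases hitTime_cases X b ω with htop | ⟨t, ht, hXt⟩
  · rw [htop]; exact le_top
  · rw [ht]
    refine hitTime_le_coe_iff.mpr ?_
    obtain ⟨r, hr, hXr⟩ := crossing hg t a (by omega)
    exact ⟨r, hr, hXr⟩

lemma coe_le_hitTime {ω : Ω} (hg : ω ∈ GoodSet X) (n : ℕ) :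
    (n : ℝ≥0∞) ≤ hitTime X n ω := by
  rcases hitTime_cases X n ω with htop | ⟨t, ht, hXt⟩
  · rw [htop]; exact le_top
  · rw [ht]
    have := X_le_time hg t
    exact_mod_cast by omega

/-! ### probability estimates for a fixed environment -/

lemma measurableSet_noHitE (hX : ∀ t, Measurable (X t)) (t L c : ℕ) :
    MeasurableSet (noHitE X t L c) := by
  have : noHitE X t L c = ⋂ (i : ℕ) (_ : 1 ≤ i) (_ : i ≤ L), ((X (t+i)) ⁻¹' {c})ᶜ := by
    ext ω; simp [noHitE]
  rw [this]
  exact MeasurableSet.iInter fun i => MeasurableSet.iInter fun _ =>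
    MeasurableSet.iInter fun _ => ((hX (t+i)) (measurableSet_singleton c)).compl

lemma measurableSet_hitTime_eq (hX : ∀ t, Measurable (X t)) (n : ℕ) (c : ℝ≥0∞) :
    MeasurableSet {ω : Ω | hitTime X n ω = c} :=
  (measurable_hitTime hX n) (measurableSet_singleton c)

variable [IsProbabilityMeasure μ]

lemma ae_good (hw : IsQuenchedWalk μ X p) : ∀ᵐ ω ∂μ, ω ∈ GoodSet X := by
  rw [ae_iff]
  exact mu_good_compl hw

lemma hitTime_lt_top_union (n : ℕ) :
    {ω : Ω | hitTime X n ω < ⊤} = ⋃ (t : ℕ), {ω | hitTime X n ω = (t : ℝ≥0∞)} := by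
  ext ω
  simp only [Set.mem_setOf_eq, Set.mem_iUnion]
  constructor
  · intro hlt
    rcases hitTime_cases X n ω with htop | ⟨t, ht, _⟩
    · rw [htop] at hlt; exact absurd hlt (lt_irrefl _)
    · exact ⟨t, ht⟩
  · rintro ⟨t, ht⟩
    rw [ht]
    exact ENNReal.coe_lt_top.trans_eq' (by norm_cast)

lemma measure_hitTime_lt_top (hX : ∀ t, Measurable (X t)) {n : ℕ}
    (hfin : ∫⁻ ω, hitTime X n ω ∂μ ≠ ⊤) : μ {ω : Ω | hitTime X n ω < ⊤} = 1 := by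
  have hae : ∀ᵐ ω ∂μ, hitTime X n ω < ⊤ := ae_lt_top (measurable_hitTime hX n) hfin
  have hmeas : MeasurableSet {ω : Ω | hitTime X n ω < ⊤} :=
    (measurable_hitTime hX n) measurableSet_Iio
  refine (prob_compl_eq_zero_iff hmeas).mp ?_
  rw [ae_iff] at hae
  exact hae

lemma tsum_measure_hitTime_eq (hX : ∀ t, Measurable (X t)) {n : ℕ}
    (hfin : ∫⁻ ω, hitTime X n ω ∂μ ≠ ⊤) :
    ∑' (t : ℕ), μ {ω : Ω | hitTime X n ω = (t : ℝ≥0∞)} = 1 := by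
  have hdisj : Pairwise (Function.onFun Disjoint fun t : ℕ => {ω : Ω | hitTime X n ω = (t : ℝ≥0∞)}) := by
    intro s t hst
    refine Set.disjoint_left.mpr fun ω h1 h2 => hst ?_
    have h3 : ((s:ℕ) : ℝ≥0∞) = ((t:ℕ) : ℝ≥0∞) := h1.symm.trans h2
    exact_mod_cast h3
  rw [← measure_iUnion hdisj (fun t => measurableSet_hitTime_eq hX n t), ← hitTime_lt_top_union,
    measure_hitTime_lt_top hX hfin]

lemma qval_mul_le (hw : IsQuenchedWalk μ X p) {b c : ℕ} (hbc : b < c) (L : ℕ)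
    (hfin : ∫⁻ ω, hitTime X b ω ∂μ ≠ ⊤) :
    (L : ℝ≥0∞) * qval p b c L ≤ ∫⁻ ω, (hitTime X c ω - hitTime X b ω) ∂μ := by
  have hX := hw.1
  set D : ℕ → Set Ω := fun t => {ω | hitTime X b ω = (t : ℝ≥0∞)} ∩ noHitE X t L c with hD
  have hDmeas : ∀ t, MeasurableSet (D t) :=
    fun t => (measurableSet_hitTime_eq hX b t).inter (measurableSet_noHitE hX t L c)
  have hDdisj : Pairwise (Function.onFun Disjoint D) := by
    intro s t hst
    refine Set.disjoint_left.mpr fun ω h1 h2 => hst ?_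
    have h3 : ((s:ℕ) : ℝ≥0∞) = ((t:ℕ) : ℝ≥0∞) := h1.1.symm.trans h2.1
    exact_mod_cast h3
  have hDval : ∀ t, μ (D t) = qval p b c L * μ {ω | hitTime X b ω = (t : ℝ≥0∞)} := by
    intro t
    have hS : DepOn {x : ℕ → ℕ | x t = b ∧ ∀ s < t, x s ≠ b} t := by
      intro x y hxy hx
      exact ⟨(hxy t le_rfl) ▸ hx.1, fun s hs => (hxy s (le_of_lt hs)) ▸ hx.2 s hs⟩
    have hSb : ∀ x ∈ {x : ℕ → ℕ | x t = b ∧ ∀ s < t, x s ≠ b}, x t = b := fun x hx => hx.1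
    have htraj : trajE X {x : ℕ → ℕ | x t = b ∧ ∀ s < t, x s ≠ b}
        = {ω | hitTime X b ω = (t : ℝ≥0∞)} := by
      ext ω
      simp only [trajE, Set.mem_setOf_eq]
      exact (hitTime_eq_coe_iff).symm
    have h5 := measure_trajE_inter_noHit hX hw hS hSb (c := c) (L := L)
    rw [htraj] at h5
    exact h5
  have hsub : (⋃ t, D t) ∩ GoodSet X ⊆ {ω | (L : ℝ≥0∞) ≤ hitTime X c ω - hitTime X b ω} := by
    rintro ω ⟨hD', hg⟩
    obtain ⟨t, ht⟩ := Set.mem_iUnion.mp hD'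
    obtain ⟨ht1, ht2⟩ := ht
    have hb := hitTime_eq_coe_iff.mp ht1
    have hnot : ¬ (hitTime X c ω ≤ ((t + L : ℕ) : ℝ≥0∞)) := by
      intro hle
      obtain ⟨s, hs, hXs⟩ := hitTime_le_coe_iff.mp hle
      by_cases hst : s ≤ t
      · obtain ⟨r, hr, hXr⟩ := crossing hg s b (by rw [hXs]; omega)
        have hrt : r = t := by
          by_contra hne
          exact hb.2 r (by omega) hXr
        have hst' : s = t := by omega
        have hcb : c = b := by rw [← hXs, hst']; exact hb.1
        omega
      · have hnc : X (t + (s - t)) ω ≠ c := ht2 (s - t) (by omega) (by omega)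
        rw [show t + (s-t) = s by omega] at hnc
        exact hnc hXs
    have hge : ((t:ℝ≥0∞)) + (L:ℝ≥0∞) ≤ hitTime X c ω := by
      have h1 : ((t + L : ℕ) : ℝ≥0∞) < hitTime X c ω := lt_of_not_ge hnot
      rw [Nat.cast_add] at h1
      exact le_of_lt h1
    rw [Set.mem_setOf_eq, ht1]
    exact ENNReal.le_sub_of_add_le_left (ENNReal.natCast_ne_top t) hge
  have hq1 : qval p b c L = μ (⋃ t, D t) := by
    rw [measure_iUnion hDdisj hDmeas]
    calc qval p b c L = qval p b c L * 1 := (mul_one _).symm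
      _ = qval p b c L * ∑' (t:ℕ), μ {ω : Ω | hitTime X b ω = (t:ℝ≥0∞)} := by
          rw [tsum_measure_hitTime_eq hX hfin]
      _ = ∑' (t:ℕ), qval p b c L * μ {ω : Ω | hitTime X b ω = (t:ℝ≥0∞)} :=
          ENNReal.tsum_mul_left.symm
      _ = ∑' (t:ℕ), μ (D t) := tsum_congr fun t => (hDval t).symm
  have h2 : μ (⋃ t, D t) ≤ μ {ω | (L : ℝ≥0∞) ≤ hitTime X c ω - hitTime X b ω} := by
    rw [← measure_inter_conull (mu_good_compl hw)]
    exact measure_mono hsub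
  have h3 := mul_meas_ge_le_lintegral₀ (μ := μ)
      (f := fun ω => hitTime X c ω - hitTime X b ω)
      (((measurable_hitTime hX c).sub (measurable_hitTime hX b)).aemeasurable) (L : ℝ≥0∞)
  calc (L:ℝ≥0∞) * qval p b c L = (L:ℝ≥0∞) * μ (⋃ t, D t) := by rw [hq1]
    _ ≤ (L:ℝ≥0∞) * μ {ω | (L:ℝ≥0∞) ≤ hitTime X c ω - hitTime X b ω} := mul_le_mul_right h2 _
    _ ≤ ∫⁻ ω, (hitTime X c ω - hitTime X b ω) ∂μ := h3

/-! ### conditional step bound -/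

def FevSet (X : ℕ → Ω → ℕ) (arr Lseq : ℕ → ℕ) (k : ℕ) : Set Ω :=
  {ω | hitTime X (arr k) ω + (Lseq k : ℝ≥0∞) < hitTime X (arr (k+1)) ω}

lemma measurableSet_FevSet (hX : ∀ t, Measurable (X t)) (arr Lseq : ℕ → ℕ) (k : ℕ) :
    MeasurableSet (FevSet X arr Lseq k) :=
  measurableSet_lt ((measurable_hitTime hX _).add_const _) (measurable_hitTime hX _)

lemma step_bound (hw : IsQuenchedWalk μ X p) (arr Lseq : ℕ → ℕ) (harr : StrictMono arr)
    (K₀ K : ℕ) :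
    μ ((⋂ j ∈ Finset.Icc K₀ K, FevSet X arr Lseq j) ∩ FevSet X arr Lseq (K+1))
      ≤ qval p (arr (K+1)) (arr (K+2)) (Lseq (K+1))
          * μ (⋂ j ∈ Finset.Icc K₀ K, FevSet X arr Lseq j) := by
  have hX := hw.1
  set B := arr (K+1) with hB
  set c := arr (K+2) with hc
  set L := Lseq (K+1) with hL
  set C := ⋂ j ∈ Finset.Icc K₀ K, FevSet X arr Lseq j with hCdef
  have hCmeas : MeasurableSet C :=
    MeasurableSet.biInter (Set.to_countable _) fun j _ => measurableSet_FevSet hX arr Lseq j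
  set St : ℕ → Set (ℕ → ℕ) := fun t =>
    {x | x t = B ∧ (∀ s < t, x s ≠ B) ∧ ∀ j, K₀ ≤ j → j ≤ K → ∀ r ≤ t,
      (x r = arr j ∧ ∀ r' < r, x r' ≠ arr j) →
      ∀ s ≤ t, s ≤ r + Lseq j → x s ≠ arr (j+1)} with hStdef
  have hSdep : ∀ t, DepOn (St t) t := by
    intro t x y hxy hx
    refine ⟨(hxy t le_rfl) ▸ hx.1, fun s hs => (hxy s (le_of_lt hs)) ▸ hx.2.1 s hs, ?_⟩
    intro j hj1 hj2 r hr hfirst s hs hsr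
    have hfx : x r = arr j ∧ ∀ r' < r, x r' ≠ arr j := by
      refine ⟨(hxy r hr) ▸ hfirst.1, fun r' hr' => ?_⟩
      rw [hxy r' ((le_of_lt hr').trans hr)]
      exact hfirst.2 r' hr'
    rw [← hxy s hs]
    exact hx.2.2 j hj1 hj2 r hr hfx s hs hsr
  have hSB : ∀ t, ∀ x ∈ St t, x t = B := fun t x hx => hx.1
  -- the key set identity
  have hkey : ∀ t : ℕ, (C ∩ {ω | hitTime X B ω = (t : ℝ≥0∞)}) ∩ GoodSet X
      = trajE X (St t) ∩ GoodSet X := by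
    intro t
    ext ω
    simp only [Set.mem_inter_iff, Set.mem_setOf_eq, trajE, and_congr_left_iff]
    intro hg
    constructor
    · rintro ⟨hC, hτ⟩
      obtain ⟨hXt, hfirstB⟩ := hitTime_eq_coe_iff.mp hτ
      refine ⟨hXt, hfirstB, ?_⟩
      intro j hj1 hj2 r hr hfirst s hs hsr hXs
      have hFev : ω ∈ FevSet X arr Lseq j :=
        Set.mem_iInter₂.mp hC j (Finset.mem_Icc.mpr ⟨hj1, hj2⟩)
      have hτj : hitTime X (arr j) ω = (r : ℝ≥0∞) := hitTime_eq_coe_iff.mpr hfirst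
      have hle : hitTime X (arr (j+1)) ω ≤ ((r + Lseq j : ℕ) : ℝ≥0∞) :=
        hitTime_le_coe_iff.mpr ⟨s, hsr, hXs⟩
      have hgt : ((r : ℝ≥0∞)) + (Lseq j : ℝ≥0∞) < hitTime X (arr (j+1)) ω := by
        rw [← hτj]; exact hFev
      rw [Nat.cast_add] at hle
      exact absurd (lt_of_lt_of_le hgt hle) (lt_irrefl _)
    · rintro ⟨hXt, hfirstB, hcond⟩
      have hτB : hitTime X B ω = (t : ℝ≥0∞) := hitTime_eq_coe_iff.mpr ⟨hXt, hfirstB⟩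
      refine ⟨?_, hτB⟩
      refine Set.mem_iInter₂.mpr fun j hj => ?_
      obtain ⟨hj1, hj2⟩ := Finset.mem_Icc.mp hj
      have hmono1 : hitTime X (arr j) ω ≤ (t : ℝ≥0∞) := by
        rw [← hτB]; exact hitTime_mono_good hg (harr.monotone (by omega))
      have hmono2 : hitTime X (arr (j+1)) ω ≤ (t : ℝ≥0∞) := by
        rw [← hτB]; exact hitTime_mono_good hg (harr.monotone (by omega))
      rcases hitTime_cases X (arr j) ω with htop | ⟨r, hreq, hXr⟩
      · rw [htop] at hmono1
        exact absurd (top_le_iff.mp hmono1) (ENNReal.natCast_ne_top t)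
      rcases hitTime_cases X (arr (j+1)) ω with htop' | ⟨s₀, hs₀eq, hXs₀⟩
      · show hitTime X (arr j) ω + (Lseq j : ℝ≥0∞) < hitTime X (arr (j+1)) ω
        rw [htop', hreq]
        exact (ENNReal.add_lt_top.mpr
          ⟨ENNReal.natCast_lt_top r, ENNReal.natCast_lt_top (Lseq j)⟩).trans_le le_top
      have hrt : r ≤ t := by
        rw [hreq] at hmono1; exact_mod_cast hmono1
      have hs₀t : s₀ ≤ t := by
        rw [hs₀eq] at hmono2; exact_mod_cast hmono2
      show hitTime X (arr j) ω + (Lseq j : ℝ≥0∞) < hitTime X (arr (j+1)) ω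
      rw [hreq, hs₀eq]
      by_contra hcon
      push_neg at hcon
      have hs₀r : s₀ ≤ r + Lseq j := by
        have : ((s₀ : ℕ) : ℝ≥0∞) ≤ ((r + Lseq j : ℕ) : ℝ≥0∞) := by
          rw [Nat.cast_add]; exact hcon
        exact_mod_cast this
      exact hcond j hj1 hj2 r hrt (hitTime_eq_coe_iff.mp hreq) s₀ hs₀t hs₀r hXs₀
  -- decomposition over the value of hitTime B
  have hFevfin : FevSet X arr Lseq (K+1) ⊆ {ω | hitTime X B ω < ⊤} := by
    intro ω hω
    have h1 : hitTime X B ω + (L : ℝ≥0∞) < ⊤ := lt_of_lt_of_le hω le_top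
    exact lt_of_le_of_lt le_self_add h1
  have hdecomp : C ∩ FevSet X arr Lseq (K+1)
      = ⋃ t : ℕ, (C ∩ {ω | hitTime X B ω = (t : ℝ≥0∞)} ∩ FevSet X arr Lseq (K+1)) := by
    ext ω
    simp only [Set.mem_inter_iff, Set.mem_iUnion]
    constructor
    · rintro ⟨hC, hF⟩
      have h4 : hitTime X B ω < ⊤ := hFevfin hF
      rcases hitTime_cases X B ω with htop | ⟨t, ht, _⟩
      · rw [htop] at h4; exact absurd h4 (lt_irrefl _)
      · exact ⟨t, ⟨hC, ht⟩, hF⟩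
    · rintro ⟨t, ⟨hC, _⟩, hF⟩
      exact ⟨hC, hF⟩
  have hpiece : ∀ t : ℕ,
      μ (C ∩ {ω | hitTime X B ω = (t : ℝ≥0∞)} ∩ FevSet X arr Lseq (K+1))
        ≤ qval p B c L * μ (C ∩ {ω | hitTime X B ω = (t : ℝ≥0∞)}) := by
    intro t
    have hsub1 : C ∩ {ω | hitTime X B ω = (t : ℝ≥0∞)} ∩ FevSet X arr Lseq (K+1)
        ⊆ (C ∩ {ω | hitTime X B ω = (t : ℝ≥0∞)}) ∩ noHitE X t L c := by
      rintro ω ⟨⟨hC, hτ⟩, hF⟩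
      refine ⟨⟨hC, hτ⟩, ?_⟩
      intro i h1 hiL hXc
      have hle : hitTime X c ω ≤ ((t + i : ℕ) : ℝ≥0∞) := hitTime_le_coe_iff.mpr ⟨t+i, le_rfl, hXc⟩
      have hgt : ((t : ℝ≥0∞)) + (L : ℝ≥0∞) < hitTime X c ω := by
        have := hF
        rw [Set.mem_setOf_eq] at hτ
        rw [FevSet, Set.mem_setOf_eq, hτ] at this
        exact this
      have : ((t : ℝ≥0∞)) + (L : ℝ≥0∞) < ((t + i : ℕ) : ℝ≥0∞) := lt_of_lt_of_le hgt hle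
      rw [Nat.cast_add] at this
      have : L < i := by exact_mod_cast ENNReal.add_lt_add_iff_left (ENNReal.natCast_ne_top t) |>.mp this
      omega
    have heq1 : μ ((C ∩ {ω | hitTime X B ω = (t : ℝ≥0∞)}) ∩ noHitE X t L c)
        = μ (trajE X (St t) ∩ noHitE X t L c) := by
      rw [← measure_inter_conull (μ := μ) (mu_good_compl hw),
        ← measure_inter_conull (μ := μ) (t := GoodSet X) (mu_good_compl hw) (s := trajE X (St t) ∩ noHitE X t L c)]
      congr 1
      rw [Set.inter_right_comm (C ∩ _), hkey t, Set.inter_right_comm]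
    have heq2 : μ (trajE X (St t)) = μ (C ∩ {ω | hitTime X B ω = (t : ℝ≥0∞)}) := by
      rw [← measure_inter_conull (μ := μ) (mu_good_compl hw) (s := trajE X (St t)),
        ← measure_inter_conull (μ := μ) (mu_good_compl hw) (s := C ∩ {ω | hitTime X B ω = (t : ℝ≥0∞)}),
        hkey t]
    calc μ (C ∩ {ω | hitTime X B ω = (t : ℝ≥0∞)} ∩ FevSet X arr Lseq (K+1))
        ≤ μ ((C ∩ {ω | hitTime X B ω = (t : ℝ≥0∞)}) ∩ noHitE X t L c) := measure_mono hsub1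
      _ = μ (trajE X (St t) ∩ noHitE X t L c) := heq1
      _ = qval p B c L * μ (trajE X (St t)) :=
          measure_trajE_inter_noHit hX hw (hSdep t) (hSB t)
      _ = qval p B c L * μ (C ∩ {ω | hitTime X B ω = (t : ℝ≥0∞)}) := by rw [heq2]
  -- put everything together
  have hdisj : Pairwise (Function.onFun Disjoint fun t : ℕ =>
      C ∩ {ω | hitTime X B ω = (t : ℝ≥0∞)} ∩ FevSet X arr Lseq (K+1)) := by
    intro s t hst
    refine Set.disjoint_left.mpr fun ω h1 h2 => hst ?_
    have h3 : ((s:ℕ) : ℝ≥0∞) = ((t:ℕ) : ℝ≥0∞) := h1.1.2.symm.trans h2.1.2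
    exact_mod_cast h3
  have hmeas : ∀ t : ℕ, MeasurableSet
      (C ∩ {ω | hitTime X B ω = (t : ℝ≥0∞)} ∩ FevSet X arr Lseq (K+1)) := fun t =>
    (hCmeas.inter (measurableSet_hitTime_eq hX B _)).inter (measurableSet_FevSet hX arr Lseq _)
  have hdisj2 : Pairwise (Function.onFun Disjoint fun t : ℕ => C ∩ {ω | hitTime X B ω = (t : ℝ≥0∞)}) := by
    intro s t hst
    refine Set.disjoint_left.mpr fun ω h1 h2 => hst ?_
    have h3 : ((s:ℕ) : ℝ≥0∞) = ((t:ℕ) : ℝ≥0∞) := h1.2.symm.trans h2.2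
    exact_mod_cast h3
  have hmeas2 : ∀ t : ℕ, MeasurableSet (C ∩ {ω | hitTime X B ω = (t : ℝ≥0∞)}) := fun t =>
    hCmeas.inter (measurableSet_hitTime_eq hX B _)
  calc μ (C ∩ FevSet X arr Lseq (K+1))
      = ∑' t : ℕ, μ (C ∩ {ω | hitTime X B ω = (t : ℝ≥0∞)} ∩ FevSet X arr Lseq (K+1)) := by
        rw [hdecomp, measure_iUnion hdisj hmeas]
    _ ≤ ∑' t : ℕ, qval p B c L * μ (C ∩ {ω | hitTime X B ω = (t : ℝ≥0∞)}) :=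
        ENNReal.tsum_le_tsum hpiece
    _ = qval p B c L * ∑' t : ℕ, μ (C ∩ {ω | hitTime X B ω = (t : ℝ≥0∞)}) :=
        ENNReal.tsum_mul_left
    _ = qval p B c L * μ (⋃ t : ℕ, C ∩ {ω | hitTime X B ω = (t : ℝ≥0∞)}) := by
        rw [measure_iUnion hdisj2 hmeas2]
    _ ≤ qval p B c L * μ C := by
        refine mul_le_mul_right (measure_mono ?_) _
        exact Set.iUnion_subset fun t => Set.inter_subset_left

lemma chain_bound (hw : IsQuenchedWalk μ X p) {arr Lseq : ℕ → ℕ} (harr : StrictMono arr)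
    (K₀ : ℕ) {ρ : ℝ≥0∞}
    (hq : ∀ k, qval p (arr (k+1)) (arr (k+2)) (Lseq (k+1)) ≤ ρ) :
    ∀ m, μ (⋂ j ∈ Finset.Icc K₀ (K₀+m), FevSet X arr Lseq j) ≤ ρ ^ m := by
  intro m
  induction m with
  | zero =>
    rw [pow_zero]
    exact prob_le_one
  | succ m ih =>
    rw [show K₀ + (m+1) = (K₀+m)+1 from rfl, ← Finset.insert_Icc_right_eq_Icc_add_one (by omega),
      Finset.set_biInter_insert, Set.inter_comm]
    calc μ ((⋂ j ∈ Finset.Icc K₀ (K₀+m), FevSet X arr Lseq j) ∩ FevSet X arr Lseq ((K₀+m)+1))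
        ≤ qval p (arr ((K₀+m)+1)) (arr ((K₀+m)+2)) (Lseq ((K₀+m)+1))
            * μ (⋂ j ∈ Finset.Icc K₀ (K₀+m), FevSet X arr Lseq j) :=
          step_bound hw arr Lseq harr K₀ (K₀+m)
      _ ≤ ρ * ρ ^ m := mul_le_mul' (hq (K₀+m)) ih
      _ = ρ ^ (m+1) := by rw [pow_succ, mul_comm]

lemma bc2 (hw : IsQuenchedWalk μ X p) {arr Lseq : ℕ → ℕ} (harr : StrictMono arr)
    {ρ : ℝ≥0∞} (hρ : ρ < 1)
    (hq : ∀ k, qval p (arr (k+1)) (arr (k+2)) (Lseq (k+1)) ≤ ρ) :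
    μ {ω | ∀ᶠ k in atTop, ω ∈ FevSet X arr Lseq k} = 0 := by
  have hsub : {ω | ∀ᶠ k in atTop, ω ∈ FevSet X arr Lseq k}
      ⊆ ⋃ K₀ : ℕ, ⋂ (k : ℕ) (_ : K₀ ≤ k), FevSet X arr Lseq k := by
    intro ω hω
    obtain ⟨K₀, hK₀⟩ := eventually_atTop.mp hω
    exact Set.mem_iUnion.mpr ⟨K₀, Set.mem_iInter₂.mpr fun k hk => hK₀ k hk⟩
  refine measure_mono_null hsub (measure_iUnion_null fun K₀ => ?_)
  have hle : ∀ m : ℕ, μ (⋂ (k : ℕ) (_ : K₀ ≤ k), FevSet X arr Lseq k) ≤ ρ ^ m := by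
    intro m
    refine le_trans (measure_mono ?_) (chain_bound hw harr K₀ hq m)
    intro ω hω
    refine Set.mem_iInter₂.mpr fun j hj => ?_
    exact Set.mem_iInter₂.mp hω j (Finset.mem_Icc.mp hj).1
  exact le_antisymm
    (ge_of_tendsto' (ENNReal.tendsto_pow_atTop_nhds_zero_of_lt_one hρ) hle) zero_le

end S11

open S11 in
/-- let `g, h : [0,∞) → [0,∞)` be increasing with, for a.e. environment `e`:
(i) `T(n) ≤ h(n)` for all but finitely many `n`, and (ii) `T(n) ≤ g(n)` for infinitely many
`n`; suppose `∑ h(n)/g(n^{3/2}) < ∞` and `g(n^{3/4})/g(n) → 0`. Then for a.e. environment,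
for any `ε > 0`, almost surely under the quenched law, `X_t ≥ g⁻¹((1-ε) t)` for infinitely
many `t`, where `g⁻¹(y) = inf{m : g(m) ≥ y}` is the generalized inverse. -/
theorem statement11 {E Ω : Type*} [MeasurableSpace E] [MeasurableSpace Ω]
    (P : Measure E) [IsProbabilityMeasure P]
    (p : ℕ → E → ℝ) (hp : ∀ i e, p i e ∈ Set.Ioo (0 : ℝ) 1)
    (μ : E → Measure Ω) (hprob : ∀ e, IsProbabilityMeasure (μ e))
    (X : ℕ → Ω → ℕ) (hwalk : ∀ e, IsQuenchedWalk (μ e) X (fun i => p i e))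
    (g h : ℝ → ℝ) (hg0 : ∀ x, 0 ≤ g x) (hh0 : ∀ x, 0 ≤ h x)
    (hgmono : Monotone g) (hhmono : Monotone h)
    (hTh : ∀ᵐ e ∂P, ∀ᶠ n : ℕ in atTop,
      ∫⁻ ω, hitTime X n ω ∂(μ e) ≤ ENNReal.ofReal (h n))
    (hTg : ∀ᵐ e ∂P, ∃ᶠ n : ℕ in atTop,
      ∫⁻ ω, hitTime X n ω ∂(μ e) ≤ ENNReal.ofReal (g n))
    (hsum : Summable (fun n : ℕ => h n / g ((n : ℝ) ^ ((3 : ℝ) / 2))))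
    (hratio : Tendsto (fun n : ℕ => g ((n : ℝ) ^ ((3 : ℝ) / 4)) / g n) atTop (nhds 0)) :
    ∀ᵐ e ∂P, ∀ ε : ℝ, 0 < ε → ∀ᵐ ω ∂(μ e), ∃ᶠ t : ℕ in atTop,
      sInf {m : ℕ | (1 - ε) * t ≤ g m} ≤ X t ω := by
  filter_upwards [hTh, hTg] with e hThe hTge
  intro ε hε
  by_cases hε1 : 1 ≤ ε
  · refine Filter.Eventually.of_forall fun ω =>
      Filter.frequently_atTop.mpr fun t₀ => ⟨t₀, le_rfl, ?_⟩
    have h0 : (0:ℕ) ∈ {m : ℕ | (1-ε) * (t₀:ℝ) ≤ g m} := by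
      have h1 : (1-ε) * (t₀:ℝ) ≤ 0 :=
        mul_nonpos_of_nonpos_of_nonneg (by linarith) (Nat.cast_nonneg t₀)
      simp only [Set.mem_setOf_eq, Nat.cast_zero]
      exact h1.trans (hg0 0)
    exact le_trans (Nat.sInf_le h0) (Nat.zero_le _)
  push_neg at hε1
  haveI := hprob e
  have hw := hwalk e
  have hX := hw.1
  set pe : ℕ → ℝ := fun i => p i e with hpe
  set T : ℕ → ℝ≥0∞ := fun n => ∫⁻ ω, hitTime X n ω ∂(μ e) with hTdef
  obtain ⟨N₀, hN₀⟩ := eventually_atTop.mp hThe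
  have hN₀' : ∀ n, N₀ ≤ n → T n ≤ ENNReal.ofReal (h n) := fun n hn => hN₀ n hn
  have hTge' : ∀ N : ℕ, ∃ b : ℕ, N ≤ b ∧ T b ≤ ENNReal.ofReal (g b) := by
    intro N
    obtain ⟨b, hb1, hb2⟩ := Filter.frequently_atTop.mp hTge N
    exact ⟨b, hb1, hb2⟩
  choose pick hpick1 hpick2 using hTge'
  set arr : ℕ → ℕ := fun k => Nat.rec (pick (max N₀ 1))
      (fun _ ak => pick (max (ak + 1) ⌈(ak:ℝ) ^ ((3:ℝ)/2)⌉₊)) k with harrdef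
  have harrS : ∀ k, arr (k+1) = pick (max (arr k + 1) ⌈(arr k:ℝ) ^ ((3:ℝ)/2)⌉₊) := fun k => rfl
  have harrT : ∀ k, T (arr k) ≤ ENNReal.ofReal (g (arr k)) := by
    intro k
    cases k with
    | zero => exact hpick2 _
    | succ k => exact hpick2 _
  have harrmono : StrictMono arr := by
    refine strictMono_nat_of_lt_succ fun k => ?_
    have h1 := hpick1 (max (arr k + 1) ⌈(arr k:ℝ) ^ ((3:ℝ)/2)⌉₊)
    rw [harrS k]
    exact lt_of_lt_of_le (Nat.lt_succ_self _) (le_trans (le_max_left _ _) h1)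
  have hargeN₀ : ∀ k, N₀ ≤ arr k := fun k =>
    le_trans (le_trans (le_max_left N₀ 1) (hpick1 _)) (harrmono.monotone (Nat.zero_le k))
  have harrge1 : ∀ k, 1 ≤ arr k := fun k =>
    le_trans (le_trans (le_max_right N₀ 1) (hpick1 _)) (harrmono.monotone (Nat.zero_le k))
  have harr32 : ∀ k, ((arr k : ℝ)) ^ ((3:ℝ)/2) ≤ (arr (k+1) : ℝ) := by
    intro k
    have h2 : ⌈(arr k:ℝ) ^ ((3:ℝ)/2)⌉₊ ≤ arr (k+1) := by
      rw [harrS k]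
      exact le_trans (le_max_right _ _) (hpick1 _)
    have h1 : (⌈(arr k:ℝ) ^ ((3:ℝ)/2)⌉₊ : ℝ) ≤ (arr (k+1) : ℝ) := by exact_mod_cast h2
    exact le_trans (Nat.le_ceil _) h1
  have hTmono : ∀ {a b : ℕ}, a ≤ b → T a ≤ T b := fun {a b} hab =>
    lintegral_mono_ae ((ae_good hw).mono fun ω hg => hitTime_mono_good hg hab)
  have hTfin : ∀ n, T n ≠ ⊤ := by
    intro n
    exact ne_top_of_le_ne_top
      (ne_top_of_le_ne_top ENNReal.ofReal_ne_top (hN₀' (max n N₀) (le_max_right n N₀)))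
      (hTmono (le_max_left n N₀))
  have hTgeN : ∀ n : ℕ, (n : ℝ≥0∞) ≤ T n := by
    intro n
    have h1 : ∫⁻ _ω, (n : ℝ≥0∞) ∂(μ e) = (n:ℝ≥0∞) := by
      rw [lintegral_const, measure_univ, mul_one]
    rw [← h1]
    exact lintegral_mono_ae ((ae_good hw).mono fun ω hg => coe_le_hitTime hg n)
  have hgarr : ∀ k, (arr k : ℝ) ≤ g (arr k) := by
    intro k
    have h1 : ((arr k : ℕ) : ℝ≥0∞) ≤ ENNReal.ofReal (g (arr k)) := le_trans (hTgeN _) (harrT k)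
    rw [← ENNReal.ofReal_natCast] at h1
    exact (ENNReal.ofReal_le_ofReal_iff (hg0 _)).mp h1
  have hgpos : ∀ k, 0 < g (arr k) := fun k =>
    lt_of_lt_of_le (by exact_mod_cast harrge1 k) (hgarr k)
  have hgmono32 : ∀ k, g ((arr k:ℝ) ^ ((3:ℝ)/2)) ≤ g (arr (k+1)) := fun k => hgmono (harr32 k)
  have hg32pos : ∀ k, 0 < g ((arr k:ℝ) ^ ((3:ℝ)/2)) := by
    intro k
    refine lt_of_lt_of_le (hgpos k) (hgmono ?_)
    have h1 : (1:ℝ) ≤ (arr k : ℝ) := by exact_mod_cast harrge1 k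
    calc (arr k : ℝ) = (arr k : ℝ) ^ (1:ℝ) := (Real.rpow_one _).symm
      _ ≤ (arr k : ℝ) ^ ((3:ℝ)/2) := Real.rpow_le_rpow_of_exponent_le h1 (by norm_num)
  set Lseq : ℕ → ℕ := fun k => ⌈(1 + ε/2) * g (arr (k+1))⌉₊ with hLseq
  set E1 : ℕ → Set Ω :=
    fun k => {ω | ENNReal.ofReal ((ε/4) * g (arr (k+1))) < hitTime X (arr k) ω} with hE1def
  have hgk1pos : ∀ k, 0 < (ε/4) * g (arr (k+1)) := fun k => mul_pos (by linarith) (hgpos (k+1))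
  have hE1bound : ∀ k, μ e (E1 k)
      ≤ ENNReal.ofReal ((4/ε) * (h (arr k) / g ((arr k:ℝ) ^ ((3:ℝ)/2)))) := by
    intro k
    have hsub : E1 k ⊆ {ω | ENNReal.ofReal ((ε/4) * g (arr (k+1))) ≤ hitTime X (arr k) ω} := by
      intro ω hω
      simp only [hE1def, Set.mem_setOf_eq] at hω ⊢
      exact le_of_lt hω
    have h2 := meas_ge_le_lintegral_div (μ := μ e) (measurable_hitTime hX (arr k)).aemeasurable
      (ε := ENNReal.ofReal ((ε/4) * g (arr (k+1))))
      (ENNReal.ofReal_pos.mpr (hgk1pos k)).ne' ENNReal.ofReal_ne_top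
    have hstep : h (arr k) / ((ε/4) * g (arr (k+1)))
        ≤ (4/ε) * (h (arr k) / g ((arr k:ℝ) ^ ((3:ℝ)/2))) := by
      have e1 : h (arr k) / ((ε/4) * g (arr (k+1)))
          ≤ h (arr k) / ((ε/4) * g ((arr k:ℝ) ^ ((3:ℝ)/2))) := by
        refine div_le_div_of_nonneg_left (hh0 _) (mul_pos (by linarith) (hg32pos k)) ?_
        have := hgmono32 k
        nlinarith
      have e2 : h (arr k) / ((ε/4) * g ((arr k:ℝ) ^ ((3:ℝ)/2)))
          = (4/ε) * (h (arr k) / g ((arr k:ℝ) ^ ((3:ℝ)/2))) := by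
        have hne : g ((arr k:ℝ) ^ ((3:ℝ)/2)) ≠ 0 := (hg32pos k).ne'
        field_simp
      rw [e2] at e1
      exact e1
    calc μ e (E1 k)
        ≤ μ e {ω | ENNReal.ofReal ((ε/4) * g (arr (k+1))) ≤ hitTime X (arr k) ω} :=
          measure_mono hsub
      _ ≤ T (arr k) / ENNReal.ofReal ((ε/4) * g (arr (k+1))) := h2
      _ ≤ ENNReal.ofReal (h (arr k)) / ENNReal.ofReal ((ε/4) * g (arr (k+1))) :=
          ENNReal.div_le_div_right (hN₀' _ (hargeN₀ k)) _
      _ = ENNReal.ofReal (h (arr k) / ((ε/4) * g (arr (k+1)))) :=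
          (ENNReal.ofReal_div_of_pos (hgk1pos k)).symm
      _ ≤ ENNReal.ofReal ((4/ε) * (h (arr k) / g ((arr k:ℝ) ^ ((3:ℝ)/2)))) :=
          ENNReal.ofReal_le_ofReal hstep
  have hsummable : Summable (fun k => (4/ε) * (h (arr k) / g ((arr k:ℝ) ^ ((3:ℝ)/2)))) := by
    have := (hsum.comp_injective harrmono.injective).mul_left (4/ε)
    simpa [Function.comp] using this
  have hnn : ∀ k, 0 ≤ (4/ε) * (h (arr k) / g ((arr k:ℝ) ^ ((3:ℝ)/2))) := fun k =>
    mul_nonneg (by positivity) (div_nonneg (hh0 _) (le_of_lt (hg32pos k)))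
  have hsumE1 : ∑' k, μ e (E1 k) ≠ ⊤ := by
    refine ne_top_of_le_ne_top (a := ∑' k, μ e (E1 k))
      (b := ENNReal.ofReal (∑' k, (4/ε) * (h (arr k) / g ((arr k:ℝ) ^ ((3:ℝ)/2)))))
      ENNReal.ofReal_ne_top ?_
    calc ∑' k, μ e (E1 k)
        ≤ ∑' k, ENNReal.ofReal ((4/ε) * (h (arr k) / g ((arr k:ℝ) ^ ((3:ℝ)/2)))) :=
          ENNReal.tsum_le_tsum hE1bound
      _ = ENNReal.ofReal (∑' k, (4/ε) * (h (arr k) / g ((arr k:ℝ) ^ ((3:ℝ)/2)))) :=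
          (ENNReal.ofReal_tsum_of_nonneg hnn hsummable).symm
  have hbc1 : ∀ᵐ ω ∂(μ e), ∀ᶠ k in atTop, ω ∉ E1 k := ae_eventually_notMem hsumE1
  set ρ : ℝ≥0∞ := (ENNReal.ofReal (1 + ε/2))⁻¹ with hρdef
  have hρ : ρ < 1 := ENNReal.inv_lt_one.mpr (ENNReal.one_lt_ofReal.mpr (by linarith))
  have hq : ∀ k, qval pe (arr (k+1)) (arr (k+2)) (Lseq (k+1)) ≤ ρ := by
    intro k
    set Q := qval pe (arr (k+1)) (arr (k+2)) (Lseq (k+1)) with hQ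
    set G : ℝ≥0∞ := ENNReal.ofReal (g (arr (k+2))) with hG
    set A : ℝ≥0∞ := ENNReal.ofReal (1 + ε/2) with hA
    have h1 := qval_mul_le (μ := μ e) hw (harrmono (Nat.lt_succ_self (k+1)))
      (Lseq (k+1)) (hTfin (arr (k+1)))
    have h2 : ∫⁻ ω, (hitTime X (arr (k+2)) ω - hitTime X (arr (k+1)) ω) ∂(μ e)
        ≤ T (arr (k+2)) := lintegral_mono fun ω => tsub_le_self
    have h3 : ((Lseq (k+1) : ℕ) : ℝ≥0∞) * Q ≤ G :=
      le_trans h1 (le_trans h2 (harrT (k+2)))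
    have h4 : A * G ≤ ((Lseq (k+1) : ℕ) : ℝ≥0∞) := by
      rw [hA, hG, ← ENNReal.ofReal_mul (by linarith), ← ENNReal.ofReal_natCast]
      exact ENNReal.ofReal_le_ofReal (Nat.le_ceil _)
    have hG0 : G ≠ 0 := (ENNReal.ofReal_pos.mpr (hgpos (k+2))).ne'
    have hGt : G ≠ ⊤ := ENNReal.ofReal_ne_top
    rw [hρdef, ENNReal.le_inv_iff_mul_le, ← ENNReal.mul_le_mul_iff_left hG0 hGt, one_mul]
    calc Q * A * G = A * G * Q := by ring
      _ ≤ ((Lseq (k+1) : ℕ) : ℝ≥0∞) * Q := mul_le_mul_left h4 _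
      _ ≤ G := h3
  have hbc2 : ∀ᵐ ω ∂(μ e), ∃ᶠ k in atTop, ω ∉ FevSet X arr Lseq k := by
    have h6 := measure_eq_zero_iff_ae_notMem.mp (bc2 (μ := μ e) hw harrmono hρ hq)
    exact h6.mono fun ω hω => Filter.not_eventually.mp hω
  filter_upwards [ae_good hw, hbc1, hbc2] with ω hgood hE1ev hFfr
  rw [Filter.frequently_atTop]
  intro t₀
  obtain ⟨K₁, hK₁⟩ := eventually_atTop.mp hE1ev
  obtain ⟨k, hk, hkF⟩ := Filter.frequently_atTop.mp hFfr (max K₁ (max t₀ ⌈(4:ℝ)/ε⌉₊))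
  set n := arr (k+1) with hn
  have harrkn : arr k < n := harrmono (Nat.lt_succ_self k)
  have hkK₁ : K₁ ≤ k := le_trans (le_max_left _ _) hk
  have hkt₀ : t₀ ≤ k := le_trans (le_trans (le_max_left _ _) (le_max_right _ _)) hk
  have hk4ε : ⌈(4:ℝ)/ε⌉₊ ≤ k := le_trans (le_trans (le_max_right _ _) (le_max_right _ _)) hk
  have hkarr : k ≤ arr k := harrmono.le_apply
  have hτk : hitTime X (arr k) ω ≤ ENNReal.ofReal ((ε/4) * g n) := not_lt.mp (hK₁ k hkK₁)
  have hτn : hitTime X n ω ≤ hitTime X (arr k) ω + ((Lseq k : ℕ) : ℝ≥0∞) := not_lt.mp hkF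
  have hfinτ : hitTime X n ω ≠ ⊤ :=
    ne_top_of_le_ne_top
      (ENNReal.add_ne_top.mpr ⟨ENNReal.ofReal_ne_top, ENNReal.natCast_ne_top _⟩)
      (hτn.trans (add_le_add_left hτk _))
  rcases hitTime_cases X n ω with htop | ⟨t, ht, hXt⟩
  · exact absurd htop hfinτ
  refine ⟨t, ?_, ?_⟩
  · have h7 : (n:ℝ≥0∞) ≤ (t:ℝ≥0∞) := ht ▸ coe_le_hitTime hgood n
    have h8 : n ≤ t := by exact_mod_cast h7
    omega
  · have hreal : (t : ℝ) ≤ (ε/4) * g n + ((Lseq k : ℕ) : ℝ) := by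
      have h9 : ((t:ℕ):ℝ≥0∞) ≤ ENNReal.ofReal ((ε/4) * g n + ((Lseq k : ℕ):ℝ)) := by
        rw [ENNReal.ofReal_add (le_of_lt (hgk1pos k)) (Nat.cast_nonneg _),
          ENNReal.ofReal_natCast]
        exact ht ▸ (hτn.trans (add_le_add_left hτk _))
      rw [← ENNReal.ofReal_natCast t] at h9
      exact (ENNReal.ofReal_le_ofReal_iff
        (add_nonneg (le_of_lt (hgk1pos k)) (Nat.cast_nonneg _))).mp h9
    have hLle : ((Lseq k : ℕ) : ℝ) ≤ (1+ε/2) * g n + 1 :=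
      le_of_lt (Nat.ceil_lt_add_one (mul_nonneg (by linarith) (hg0 _)))
    have hone : 1 ≤ (ε/4) * g n := by
      have h11 : (⌈(4:ℝ)/ε⌉₊ : ℝ) ≤ (n:ℝ) := by exact_mod_cast (by omega : ⌈(4:ℝ)/ε⌉₊ ≤ n)
      have h10 : (4:ℝ)/ε ≤ (n:ℝ) := le_trans (Nat.le_ceil _) h11
      have h12 : (n:ℝ) ≤ g n := hgarr (k+1)
      have h13 : (4:ℝ)/ε ≤ g n := le_trans h10 h12
      rw [div_le_iff₀ hε] at h13
      nlinarith
    have htotal : (t:ℝ) ≤ (1+ε) * g n := by nlinarith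
    have hfinal : (1-ε) * (t:ℝ) ≤ g (n:ℝ) := by nlinarith [hg0 (n:ℝ)]
    have hmem : n ∈ {m : ℕ | (1-ε) * (t:ℝ) ≤ g m} := hfinal
    exact le_trans (Nat.sInf_le hmem) (le_of_eq hXt.symm)
end
end

section
/- Suppose ζ_0, ζ_1, ... are i.i.d., symmetric, with P[ζ_0 > r] ~ c r^{-α} for α ∈ (1,2), and χ_0, χ_1, ... are independent of the ζ's, independent {0,1}-valued with P[χ_n = 1] = n^{-β} where β > 1 − 1/α. Let ρ ∈ ℝ and set log(p_n/q_n) = ρ χ_n + ζ_n (1 − χ_n). Then there exists ε > 0 such that almost surely, as n → ∞, ∑_{j=0}^n log(p_j/q_j) = ∑_{j=0}^n ζ_j + O(n^{(1/α) − ε}). -/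
open MeasureTheory Filter Finset Real ProbabilityTheory
open scoped ENNReal

private lemma st15_sum_rpow {β : ℝ} (hβ0 : 0 < β) (hβ1 : β < 1) (n : ℕ) (hn : 1 ≤ n) :
    ∑ j ∈ Finset.range (n + 1), (if j = 0 then (1:ℝ) else (j:ℝ) ^ (-β))
      ≤ (2 + 1/(1-β)) * (n:ℝ) ^ (1-β) := by
  obtain ⟨m, rfl⟩ : ∃ m, n = m + 1 := ⟨n - 1, (Nat.succ_pred_eq_of_pos hn).symm⟩
  have hβ' : (0:ℝ) < 1 - β := by linarith
  have hanti : AntitoneOn (fun x : ℝ => x ^ (-β)) (Set.Icc (1:ℝ) (1 + (m:ℕ))) := by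
    intro x hx y hy hxy
    exact Real.rpow_le_rpow_of_nonpos (lt_of_lt_of_le one_pos hx.1) hxy (by linarith)
  have hstep := AntitoneOn.sum_le_integral (x₀ := (1:ℝ)) (a := m)
      (f := fun x : ℝ => x ^ (-β)) hanti
  have hint : ∫ x in (1:ℝ)..(1 + (m:ℕ)), x ^ (-β)
      = ((1 + (m:ℕ):ℝ) ^ (1 - β) - 1) / (1 - β) := by
    rw [integral_rpow (Or.inl (by linarith))]
    rw [Real.one_rpow]
    ring_nf
  rw [hint] at hstep
  have hsplit : ∑ j ∈ Finset.range (m + 1 + 1), (if j = 0 then (1:ℝ) else (j:ℝ) ^ (-β))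
      = (∑ i ∈ Finset.range m, ((1:ℝ) + ((i + 1 : ℕ) : ℝ)) ^ (-β)) + 2 := by
    rw [Finset.sum_range_succ', Finset.sum_range_succ']
    have h2 : ∀ i ∈ Finset.range m,
        (if i + 1 + 1 = 0 then (1:ℝ) else ((i + 1 + 1 : ℕ) : ℝ) ^ (-β))
          = ((1:ℝ) + ((i + 1 : ℕ) : ℝ)) ^ (-β) := by
      intro i _
      rw [if_neg (Nat.succ_ne_zero _)]
      congr 1
      push_cast; ring
    rw [Finset.sum_congr rfl h2]
    norm_num [Real.one_rpow]
    ring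
  rw [hsplit]
  set X : ℝ := ((1:ℝ) + (m:ℕ)) ^ (1-β) with hX
  have h1 : (1:ℝ) ≤ X := by
    have h := Real.rpow_le_rpow zero_le_one
      (le_add_of_nonneg_right (Nat.cast_nonneg m) : (1:ℝ) ≤ 1 + (m:ℝ)) (le_of_lt hβ')
    rwa [Real.one_rpow] at h
  have hgoal : (∑ i ∈ Finset.range m, ((1:ℝ) + ((i + 1 : ℕ) : ℝ)) ^ (-β)) + 2
      ≤ (2 + 1/(1-β)) * X := by
    calc (∑ i ∈ Finset.range m, ((1:ℝ) + ((i + 1 : ℕ) : ℝ)) ^ (-β)) + 2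
        ≤ (X - 1) / (1 - β) + 2 := by exact add_le_add_left hstep 2
      _ ≤ X / (1 - β) + 2 * X := by
          gcongr
          · linarith
          · linarith
      _ = (2 + 1/(1-β)) * X := by field_simp; ring
  have hXcast : X = ((m + 1 : ℕ) : ℝ) ^ (1-β) := by rw [hX]; norm_num; ring_nf
  calc (∑ i ∈ Finset.range m, ((1:ℝ) + ((i + 1 : ℕ) : ℝ)) ^ (-β)) + 2
      ≤ (2 + 1/(1-β)) * X := hgoal
    _ = (2 + 1/(1-β)) * ((m + 1 : ℕ) : ℝ) ^ (1-β) := by rw [hXcast]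

private lemma st15_lint_ne_top {E : Type*} [MeasurableSpace E] (P : Measure E)
    [IsProbabilityMeasure P]
    (c α : ℝ) (hc : 0 < c) (hα : 1 < α) (f : E → ℝ) (hf : Measurable f)
    (hsym : ∀ x : ℝ, 0 ≤ x → P {e | f e ≤ -x} = P {e | x ≤ f e})
    (htail : Tendsto (fun r : ℝ => (P {e | r < f e}).toReal * r ^ α) atTop (nhds c)) :
    ∫⁻ e, ENNReal.ofReal |f e| ∂P ≠ ∞ := by
  obtain ⟨R, hR⟩ := eventually_atTop.1
    ((htail.eventually_le_const (lt_add_one c)).and (eventually_ge_atTop (1:ℝ)))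
  set R' : ℝ := max R 1 with hR'
  have hR'1 : (1:ℝ) ≤ R' := le_max_right _ _
  have htail' : ∀ r : ℝ, R' ≤ r → P {e | r < f e} ≤ ENNReal.ofReal ((c+1) * r ^ (-α)) := by
    intro r hr
    have hrR : R ≤ r := le_trans (le_max_left _ _) hr
    have h1r : (1:ℝ) ≤ r := le_trans hR'1 hr
    have hb := (hR r hrR).1
    have hrpos : (0:ℝ) < r := lt_of_lt_of_le one_pos h1r
    have hrα : (0:ℝ) < r ^ α := Real.rpow_pos_of_pos hrpos α
    rw [ENNReal.le_ofReal_iff_toReal_le (measure_ne_top _ _) (by positivity)]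
    have heq : (c+1) * r ^ (-α) = (c+1) / r ^ α := by
      rw [Real.rpow_neg hrpos.le]; ring
    rw [heq, le_div_iff₀ hrα]
    exact hb
  obtain ⟨m₀, hm₀R⟩ : ∃ m₀ : ℕ, ∀ m : ℕ, m₀ ≤ m → 2 * R' ≤ (m:ℝ) :=
    ⟨⌈2 * R'⌉₊, fun m hm => le_trans (Nat.le_ceil _) (by exact_mod_cast hm)⟩
  set K₁ : ℝ := (c+1) * (1 + 2 ^ α) with hK₁
  have h2α : (0:ℝ) < 2 ^ α := Real.rpow_pos_of_pos two_pos α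
  have hK₁0 : 0 ≤ K₁ := by positivity
  have htail2 : ∀ m : ℕ, m₀ ≤ m →
      P {e | (m:ℝ) < |f e|} ≤ ENNReal.ofReal (K₁ * (m:ℝ) ^ (-α)) := by
    intro m hm
    have hm2R : 2 * R' ≤ (m:ℝ) := hm₀R m hm
    have hmR : R' ≤ (m:ℝ) := by linarith
    have hm1 : (1:ℝ) ≤ (m:ℝ) := le_trans hR'1 hmR
    have hmpos : (0:ℝ) < (m:ℝ) := lt_of_lt_of_le one_pos hm1
    have hsub : {e | (m:ℝ) < |f e|} ⊆ {e | (m:ℝ) < f e} ∪ {e | f e ≤ -(m:ℝ)} := by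
      intro e he
      simp only [Set.mem_setOf_eq] at he
      rcases lt_abs.1 he with h | h
      · exact Or.inl h
      · exact Or.inr (by simp only [Set.mem_setOf_eq]; linarith)
    have hneg : P {e | f e ≤ -(m:ℝ)} ≤ ENNReal.ofReal ((c+1) * ((m:ℝ)/2) ^ (-α)) := by
      rw [hsym (m:ℝ) hmpos.le]
      refine le_trans (measure_mono ?_) (htail' ((m:ℝ)/2) (by linarith))
      intro e he
      simp only [Set.mem_setOf_eq] at *
      linarith
    calc P {e | (m:ℝ) < |f e|}
        ≤ P {e | (m:ℝ) < f e} + P {e | f e ≤ -(m:ℝ)} :=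
          le_trans (measure_mono hsub) (measure_union_le _ _)
      _ ≤ ENNReal.ofReal ((c+1) * (m:ℝ) ^ (-α)) + ENNReal.ofReal ((c+1) * ((m:ℝ)/2) ^ (-α)) :=
          add_le_add (htail' _ hmR) hneg
      _ = ENNReal.ofReal ((c+1) * (m:ℝ) ^ (-α) + (c+1) * ((m:ℝ)/2) ^ (-α)) := by
          rw [ENNReal.ofReal_add (by positivity) (by positivity)]
      _ = ENNReal.ofReal (K₁ * (m:ℝ) ^ (-α)) := by
          congr 1
          have : ((m:ℝ)/2) ^ (-α) = (m:ℝ) ^ (-α) * 2 ^ α := by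
            rw [Real.div_rpow hmpos.le two_pos.le, Real.rpow_neg two_pos.le,
              div_eq_mul_inv, inv_inv]
          rw [this, hK₁]; ring
  have hpt : ∀ e, ENNReal.ofReal |f e| ≤
      ∑' m : ℕ, Set.indicator {e | (m:ℝ) < |f e|} (fun _ => (1:ℝ≥0∞)) e := by
    intro e
    set x : ℝ := |f e| with hx
    have hx0 : 0 ≤ x := abs_nonneg _
    calc ENNReal.ofReal x ≤ ((⌈x⌉₊ : ℕ) : ℝ≥0∞) := by
          rw [← ENNReal.ofReal_natCast]
          exact ENNReal.ofReal_le_ofReal (Nat.le_ceil x)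
      _ = ∑ m ∈ Finset.range ⌈x⌉₊, (1:ℝ≥0∞) := by simp
      _ = ∑ m ∈ Finset.range ⌈x⌉₊,
            Set.indicator {e | (m:ℝ) < |f e|} (fun _ => (1:ℝ≥0∞)) e := by
          apply Finset.sum_congr rfl
          intro m hm
          rw [Set.indicator_of_mem]
          exact Nat.lt_ceil.1 (Finset.mem_range.1 hm)
      _ ≤ ∑' m : ℕ, Set.indicator {e | (m:ℝ) < |f e|} (fun _ => (1:ℝ≥0∞)) e :=
          ENNReal.sum_le_tsum _
  have hmeas : ∀ m : ℕ, MeasurableSet {e | (m:ℝ) < |f e|} :=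
    fun m => measurableSet_lt measurable_const hf.abs
  have hchain : ∫⁻ e, ENNReal.ofReal |f e| ∂P ≤ ∑' m : ℕ, P {e | (m:ℝ) < |f e|} := by
    calc ∫⁻ e, ENNReal.ofReal |f e| ∂P
        ≤ ∫⁻ e, ∑' m : ℕ, Set.indicator {e | (m:ℝ) < |f e|} (fun _ => (1:ℝ≥0∞)) e ∂P :=
          lintegral_mono hpt
      _ = ∑' m : ℕ, ∫⁻ e, Set.indicator {e | (m:ℝ) < |f e|} (fun _ => (1:ℝ≥0∞)) e ∂P :=
          lintegral_tsum (fun m => (measurable_const.indicator (hmeas m)).aemeasurable)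
      _ = ∑' m : ℕ, P {e | (m:ℝ) < |f e|} := by
          congr 1; ext m
          rw [lintegral_indicator (hmeas m), setLIntegral_one]
  have hsummable : Summable (fun m : ℕ => K₁ * (m:ℝ) ^ (-α)) :=
    (Real.summable_nat_rpow.2 (by linarith)).mul_left K₁
  have htsum : ∑' m : ℕ, P {e | (m:ℝ) < |f e|} ≠ ∞ := by
    rw [← Summable.sum_add_tsum_nat_add' (f := fun m : ℕ => P {e | (m:ℝ) < |f e|}) (k := m₀)
      ENNReal.summable]
    apply ENNReal.add_ne_top.2
    constructor
    · exact (ENNReal.sum_lt_top.2 fun i _ => measure_lt_top _ _).ne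
    · have hle : ∑' m : ℕ, P {e | ((m + m₀ : ℕ):ℝ) < |f e|}
          ≤ ∑' m : ℕ, ENNReal.ofReal (K₁ * ((m + m₀ : ℕ):ℝ) ^ (-α)) :=
        ENNReal.tsum_le_tsum (fun m => htail2 (m + m₀) (Nat.le_add_left _ _))
      refine ne_top_of_le_ne_top ?_ hle
      have hsum2 : Summable (fun m : ℕ => K₁ * ((m + m₀ : ℕ):ℝ) ^ (-α)) := by
        have h := (summable_nat_add_iff
          (f := fun m : ℕ => K₁ * (m:ℝ) ^ (-α)) m₀).2 hsummable
        exact h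
      have heq : ∑' m : ℕ, ENNReal.ofReal (K₁ * ((m + m₀ : ℕ):ℝ) ^ (-α))
          = ENNReal.ofReal (∑' m : ℕ, K₁ * ((m + m₀ : ℕ):ℝ) ^ (-α)) :=
        (ENNReal.ofReal_tsum_of_nonneg (fun m => by positivity) hsum2).symm
      rw [heq]
      exact ENNReal.ofReal_ne_top
  exact ne_top_of_le_ne_top htsum hchain

/-- suppose `ζ_0, ζ_1, …` are i.i.d., symmetric, with `P[ζ_0 > r] ~ c r^{-α}`
for `α ∈ (1,2)`, and `χ_0, χ_1, …` are `{0,1}`-valued with `P[χ_n = 1] = n^{-β}` (`n ≥ 1`)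
where `β ∈ (0,1)` and `β > 1 − 1/α`, the whole family `(ζ_n, χ_n)` being independent. Let
`ρ ∈ ℝ` and set `log(p_n/q_n) = ρ χ_n + ζ_n (1 − χ_n)`. Then there is `ε > 0` such that
almost surely `∑_{j=0}^n log(p_j/q_j) = ∑_{j=0}^n ζ_j + O(n^{1/α − ε})`. -/
theorem statement15 {E : Type*} [MeasurableSpace E] (P : Measure E) [IsProbabilityMeasure P]
    (c α β ρ : ℝ) (hc : 0 < c) (hα : α ∈ Set.Ioo (1 : ℝ) 2)
    (hβ : β ∈ Set.Ioo (0 : ℝ) 1) (hβα : 1 - 1 / α < β)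
    (ζ χ : ℕ → E → ℝ) (hζmeas : ∀ n, Measurable (ζ n)) (hχmeas : ∀ n, Measurable (χ n))
    (hident : ∀ n, Measure.map (ζ n) P = Measure.map (ζ 0) P)
    (hsym : ∀ x : ℝ, 0 ≤ x → P {e | ζ 0 e ≤ -x} = P {e | x ≤ ζ 0 e})
    (htail : Tendsto (fun r : ℝ => (P {e | r < ζ 0 e}).toReal * r ^ α) atTop (nhds c))
    (h01 : ∀ n e, χ n e = 0 ∨ χ n e = 1)
    (hχ : ∀ n : ℕ, 1 ≤ n → (P {e | χ n e = 1}).toReal = (n : ℝ) ^ (-β))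
    (hindep : iIndepFun (Sum.elim ζ χ) P) :
    ∃ ε : ℝ, 0 < ε ∧ ∀ᵐ e ∂P, ∃ C : ℝ, ∀ᶠ n : ℕ in atTop,
      |(∑ j ∈ Finset.range (n + 1), (ρ * χ j e + ζ j e * (1 - χ j e)))
          - ∑ j ∈ Finset.range (n + 1), ζ j e|
        ≤ C * (n : ℝ) ^ (1 / α - ε) := by
  obtain ⟨hα1, hα2⟩ := hα
  obtain ⟨hβ0, hβ1⟩ := hβ
  have hαpos : (0:ℝ) < α := by linarith
  have h1αpos : (0:ℝ) < 1/α := by positivity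
  have hlt : 1 - β < 1/α := by linarith
  set t : ℝ := (1/α + (1-β))/2 with ht
  have ht1 : 1 - β < t := by rw [ht]; linarith
  have ht2 : t < 1/α := by rw [ht]; linarith
  have ht0 : 0 < t := by
    have h : (0:ℝ) < 1 - β := by linarith
    linarith
  set δ : ℝ := t - (1 - β) with hδ
  have hδ0 : 0 < δ := by rw [hδ]; linarith
  refine ⟨1/α - t, by linarith, ?_⟩
  -- basic facts
  have hχ01 : ∀ j e, 0 ≤ χ j e := by
    intro j e; rcases h01 j e with h | h <;> rw [h] <;> norm_num
  set W : ℕ → E → ℝ := fun n e => ∑ j ∈ Finset.range (n+1), χ j e * |ρ - ζ j e| with hWdef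
  have hWnonneg : ∀ n e j, j ∈ Finset.range (n+1) → 0 ≤ χ j e * |ρ - ζ j e| :=
    fun n e j _ => mul_nonneg (hχ01 j e) (abs_nonneg _)
  have habs : ∀ n e,
      |(∑ j ∈ Finset.range (n + 1), (ρ * χ j e + ζ j e * (1 - χ j e)))
          - ∑ j ∈ Finset.range (n + 1), ζ j e| ≤ W n e := by
    intro n e
    rw [← Finset.sum_sub_distrib]
    refine le_trans (Finset.abs_sum_le_sum_abs _ _) (Finset.sum_le_sum ?_)
    intro j _
    have hj : ρ * χ j e + ζ j e * (1 - χ j e) - ζ j e = χ j e * (ρ - ζ j e) := by ring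
    rw [hj, abs_mul, abs_of_nonneg (hχ01 j e)]
  have hWmeas : ∀ n, Measurable (W n) := by
    intro n
    apply Finset.measurable_sum
    exact fun j _ => (hχmeas j).mul ((hζmeas j).const_sub ρ).abs
  set M : ℝ≥0∞ := ∫⁻ e, ENNReal.ofReal |ζ 0 e| ∂P with hMdef
  have hMne : M ≠ ∞ := st15_lint_ne_top P c α hc hα1 (ζ 0) (hζmeas 0) hsym htail
  set K' : ℝ≥0∞ := ENNReal.ofReal |ρ| + M with hK'def
  have hK'ne : K' ≠ ∞ := ENNReal.add_ne_top.2 ⟨ENNReal.ofReal_ne_top, hMne⟩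
  -- per-term bound
  have hterm : ∀ j, ∫⁻ e, ENNReal.ofReal (χ j e * |ρ - ζ j e|) ∂P
      ≤ P {e | χ j e = 1} * K' := by
    intro j
    have hind : IndepFun (χ j) (ζ j) P :=
      hindep.indepFun (show (Sum.inr j : ℕ ⊕ ℕ) ≠ Sum.inl j by simp)
    have hφ : Measurable fun x : ℝ => ENNReal.ofReal x := ENNReal.measurable_ofReal
    have hψ : Measurable fun x : ℝ => ENNReal.ofReal |ρ - x| :=
      ENNReal.measurable_ofReal.comp ((measurable_id.const_sub ρ).abs)
    have hind2 : IndepFun (fun e => ENNReal.ofReal (χ j e))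
        (fun e => ENNReal.ofReal |ρ - ζ j e|) P := hind.comp hφ hψ
    have hmul : ∫⁻ e, ENNReal.ofReal (χ j e * |ρ - ζ j e|) ∂P
        = (∫⁻ e, ENNReal.ofReal (χ j e) ∂P) * ∫⁻ e, ENNReal.ofReal |ρ - ζ j e| ∂P := by
      rw [show (fun e => ENNReal.ofReal (χ j e * |ρ - ζ j e|))
          = (fun e => ENNReal.ofReal (χ j e)) * (fun e => ENNReal.ofReal |ρ - ζ j e|) from
        funext fun e => ENNReal.ofReal_mul (hχ01 j e)]
      exact lintegral_mul_eq_lintegral_mul_lintegral_of_indepFun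
        ((hχmeas j).ennreal_ofReal) (hψ.comp (hζmeas j)) hind2
    have hχint : ∫⁻ e, ENNReal.ofReal (χ j e) ∂P = P {e | χ j e = 1} := by
      have hset : MeasurableSet {e | χ j e = 1} := (hχmeas j) (measurableSet_singleton 1)
      calc ∫⁻ e, ENNReal.ofReal (χ j e) ∂P
          = ∫⁻ e, Set.indicator {e | χ j e = 1} (fun _ => (1:ℝ≥0∞)) e ∂P := by
            apply lintegral_congr
            intro e
            rcases h01 j e with h | h <;>
              simp [Set.indicator_apply, Set.mem_setOf_eq, h]
        _ = P {e | χ j e = 1} := by rw [lintegral_indicator hset, setLIntegral_one]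
    have hζint : ∫⁻ e, ENNReal.ofReal |ζ j e| ∂P = M := by
      have hg : Measurable fun x : ℝ => ENNReal.ofReal |x| :=
        ENNReal.measurable_ofReal.comp measurable_abs
      rw [hMdef, ← lintegral_map hg (hζmeas j), hident j, lintegral_map hg (hζmeas 0)]
    have hGbound : ∫⁻ e, ENNReal.ofReal |ρ - ζ j e| ∂P ≤ K' := by
      calc ∫⁻ e, ENNReal.ofReal |ρ - ζ j e| ∂P
          ≤ ∫⁻ e, (ENNReal.ofReal |ρ| + ENNReal.ofReal |ζ j e|) ∂P := by
            apply lintegral_mono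
            intro e
            dsimp only
            rw [← ENNReal.ofReal_add (abs_nonneg _) (abs_nonneg _)]
            exact ENNReal.ofReal_le_ofReal (abs_sub ρ (ζ j e))
        _ = ENNReal.ofReal |ρ| + ∫⁻ e, ENNReal.ofReal |ζ j e| ∂P := by
            rw [lintegral_add_left measurable_const, lintegral_const, measure_univ, mul_one]
        _ = K' := by rw [hζint, hK'def]
    rw [hmul, hχint]
    exact mul_le_mul_right hGbound _
  have hPχ : ∀ j : ℕ, P {e | χ j e = 1}
      ≤ ENNReal.ofReal (if j = 0 then (1:ℝ) else (j:ℝ) ^ (-β)) := by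
    intro j
    by_cases hj : j = 0
    · rw [if_pos hj]
      simpa using (prob_le_one : P {e | χ j e = 1} ≤ 1)
    · rw [if_neg hj, ← hχ j (Nat.one_le_iff_ne_zero.2 hj),
        ENNReal.ofReal_toReal (measure_ne_top _ _)]
  set Cs : ℝ := 2 + 1/(1-β) with hCsdef
  have hCs0 : 0 ≤ Cs := by
    have h : (0:ℝ) < 1 - β := by linarith
    positivity
  have hWlint : ∀ n : ℕ, 1 ≤ n → ∫⁻ e, ENNReal.ofReal (W n e) ∂P
      ≤ ENNReal.ofReal (Cs * (n:ℝ) ^ (1-β)) * K' := by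
    intro n hn
    calc ∫⁻ e, ENNReal.ofReal (W n e) ∂P
        = ∫⁻ e, ∑ j ∈ Finset.range (n+1), ENNReal.ofReal (χ j e * |ρ - ζ j e|) ∂P := by
          apply lintegral_congr
          intro e
          exact ENNReal.ofReal_sum_of_nonneg (hWnonneg n e)
      _ = ∑ j ∈ Finset.range (n+1), ∫⁻ e, ENNReal.ofReal (χ j e * |ρ - ζ j e|) ∂P :=
          lintegral_finset_sum _
            (fun j _ => ((hχmeas j).mul ((hζmeas j).const_sub ρ).abs).ennreal_ofReal)
      _ ≤ ∑ j ∈ Finset.range (n+1),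
            ENNReal.ofReal (if j = 0 then (1:ℝ) else (j:ℝ) ^ (-β)) * K' :=
          Finset.sum_le_sum (fun j _ => le_trans (hterm j) (mul_le_mul_left (hPχ j) K'))
      _ = ENNReal.ofReal (∑ j ∈ Finset.range (n+1),
            (if j = 0 then (1:ℝ) else (j:ℝ) ^ (-β))) * K' := by
          rw [← Finset.sum_mul, ENNReal.ofReal_sum_of_nonneg]
          intro j _
          split <;> positivity
      _ ≤ ENNReal.ofReal (Cs * (n:ℝ) ^ (1-β)) * K' :=
          mul_le_mul_left (ENNReal.ofReal_le_ofReal (st15_sum_rpow hβ0 hβ1 n hn)) K'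
  -- Markov inequality along dyadic times
  set a : ℕ → ℝ := fun k => ((2:ℝ)^k) ^ t with hadef
  have ha_pos : ∀ k, 0 < a k := fun k => Real.rpow_pos_of_pos (by positivity) t
  set r : ℝ≥0∞ := ENNReal.ofReal ((2:ℝ) ^ (-δ)) with hrdef
  have hr1 : r < 1 := by
    rw [hrdef]
    exact ENNReal.ofReal_lt_one.2
      (Real.rpow_lt_one_of_one_lt_of_neg one_lt_two (by linarith))
  set s : ℕ → Set E := fun k =>
    {e | ENNReal.ofReal (a k) ≤ ENNReal.ofReal (W (2^k) e)} with hsdef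
  have hreal : ∀ k : ℕ, Cs * ((2^k : ℕ):ℝ) ^ (1-β) = a k * (Cs * ((2:ℝ) ^ (-δ))^k) := by
    intro k
    have h2 : (0:ℝ) ≤ 2 := by norm_num
    have hc2 : ((2^k : ℕ):ℝ) = (2:ℝ)^k := by push_cast; ring
    have key : ((2:ℝ)^k) ^ (1-β) = ((2:ℝ)^k) ^ t * (((2:ℝ) ^ (-δ))^k) := by
      rw [← Real.rpow_natCast (2:ℝ) k, ← Real.rpow_mul h2, ← Real.rpow_mul h2,
        ← Real.rpow_natCast ((2:ℝ) ^ (-δ)) k, ← Real.rpow_mul h2,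
        ← Real.rpow_add (by norm_num : (0:ℝ) < 2)]
      congr 1
      rw [hδ]; ring
    rw [hc2, key, hadef]; ring
  have hsk : ∀ k : ℕ, P (s k) ≤ (ENNReal.ofReal Cs * K') * r ^ k := by
    intro k
    have h2kn : (1:ℕ) ≤ 2^k := Nat.one_le_two_pow
    have hmar := mul_meas_ge_le_lintegral₀ (μ := P)
      ((hWmeas (2^k)).ennreal_ofReal).aemeasurable (ENNReal.ofReal (a k))
    have hup : ∫⁻ e, ENNReal.ofReal (W (2^k) e) ∂P
        ≤ ENNReal.ofReal (a k) * ((ENNReal.ofReal Cs * K') * r ^ k) := by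
      refine le_trans (hWlint (2^k) h2kn) ?_
      have heq : ENNReal.ofReal (Cs * ((2^k : ℕ):ℝ) ^ (1-β)) * K'
          = ENNReal.ofReal (a k) * ((ENNReal.ofReal Cs * K') * r ^ k) := by
        rw [hreal k, ENNReal.ofReal_mul (ha_pos k).le, ENNReal.ofReal_mul hCs0,
          ENNReal.ofReal_pow (by positivity), ← hrdef]
        ring
      rw [heq]
    have hcancel := le_trans hmar hup
    have hane : ENNReal.ofReal (a k) ≠ 0 := (ENNReal.ofReal_pos.2 (ha_pos k)).ne'
    have hane' : ENNReal.ofReal (a k) ≠ ∞ := ENNReal.ofReal_ne_top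
    exact (ENNReal.mul_le_mul_iff_right hane hane').1 hcancel
  have htsumfin : ∑' k : ℕ, P (s k) ≠ ∞ := by
    have hle : ∑' k : ℕ, P (s k) ≤ (ENNReal.ofReal Cs * K') * (1 - r)⁻¹ := by
      calc ∑' k : ℕ, P (s k) ≤ ∑' k : ℕ, (ENNReal.ofReal Cs * K') * r ^ k :=
            ENNReal.tsum_le_tsum hsk
        _ = (ENNReal.ofReal Cs * K') * ∑' k : ℕ, r ^ k := ENNReal.tsum_mul_left
        _ = (ENNReal.ofReal Cs * K') * (1 - r)⁻¹ := by rw [ENNReal.tsum_geometric]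
    refine ne_top_of_le_ne_top ?_ hle
    apply ENNReal.mul_ne_top
    · exact ENNReal.mul_ne_top ENNReal.ofReal_ne_top hK'ne
    · exact ENNReal.inv_ne_top.2 (tsub_pos_iff_lt.2 hr1).ne'
  have hBC := MeasureTheory.ae_eventually_notMem (μ := P) (s := s) htsumfin
  filter_upwards [hBC] with e he
  obtain ⟨K₀, hK₀⟩ := eventually_atTop.1 he
  refine ⟨(2:ℝ) ^ t, ?_⟩
  rw [eventually_atTop]
  refine ⟨2 ^ K₀ + 1, fun n hn => ?_⟩
  have hn1 : 1 ≤ n := le_trans (Nat.le_add_left 1 (2^K₀)) hn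
  set k : ℕ := Nat.log 2 n with hkdef
  have h2k : 2^k ≤ n := Nat.pow_log_le_self 2 (by omega)
  have h2k1 : n < 2^(k+1) := Nat.lt_pow_succ_log_self one_lt_two n
  have hkK : K₀ ≤ k + 1 := by
    by_contra hcon
    push_neg at hcon
    have hh : 2^(k+1) ≤ 2^K₀ := Nat.pow_le_pow_right (by norm_num) (by omega)
    omega
  have hnotin := hK₀ (k+1) hkK
  have hWlt : W (2^(k+1)) e < a (k+1) := by
    by_contra hcon
    push_neg at hcon
    exact hnotin (by
      simp only [hsdef, Set.mem_setOf_eq]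
      exact ENNReal.ofReal_le_ofReal hcon)
  have hfinal :
      |(∑ j ∈ Finset.range (n + 1), (ρ * χ j e + ζ j e * (1 - χ j e)))
          - ∑ j ∈ Finset.range (n + 1), ζ j e| < (2:ℝ) ^ t * (n:ℝ) ^ t := by
    calc |(∑ j ∈ Finset.range (n + 1), (ρ * χ j e + ζ j e * (1 - χ j e)))
          - ∑ j ∈ Finset.range (n + 1), ζ j e|
        ≤ W n e := habs n e
      _ ≤ W (2^(k+1)) e := by
          apply Finset.sum_le_sum_of_subset_of_nonneg
          · exact Finset.range_subset_range.2 (by omega)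
          · intro j _ _
            exact mul_nonneg (hχ01 j e) (abs_nonneg _)
      _ < a (k+1) := hWlt
      _ ≤ (2:ℝ) ^ t * (n:ℝ) ^ t := by
          have h1 : ((2:ℝ)^(k+1)) = 2 * (2:ℝ)^k := by ring
          rw [show a (k+1) = ((2:ℝ)^(k+1)) ^ t from rfl, h1,
            Real.mul_rpow (by norm_num) (by positivity)]
          apply mul_le_mul_of_nonneg_left _ (Real.rpow_nonneg (by norm_num) t)
          apply Real.rpow_le_rpow (by positivity) _ ht0.le
          exact_mod_cast h2k
  have hexp : 1/α - (1/α - t) = t := by ring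
  rw [hexp]
  exact hfinal.le
end

section
/- Suppose ζ_0, ζ_1, ... are i.i.d. with E[(ζ_0^+)^p] < ∞ for some p > 0 and P[ζ_0 < −x] ≥ c x^{-γ} for some c > 0, γ < min(1, p) and all large x (e.g., under the two-sided regular variation condition P[ζ_0 > x] = x^{-α_+} L_+(x), P[ζ_0 < −x] = x^{-α_-} L_-(x) with 0 < α_+ < min(1, α_-)). If the environment is given by log(p_n/q_n) = ζ_n, then for almost every environment, f(n) = ∑_{i=0}^n exp(∑_{j=0}^{i-1} ζ_j) converges to a finite limit as n → ∞, and hence the random walk in this environment is transient. -/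
open MeasureTheory Filter Finset Real
open scoped ENNReal NNReal

noncomputable section

section PartB

variable {Ω : Type} [MeasurableSpace Ω]

/-- extension of a finite history to `ℕ → ℕ` -/
def extH (t : ℕ) (x : Fin (t + 1) → ℕ) : ℕ → ℕ :=
  fun s => if h : s < t + 1 then x ⟨s, h⟩ else 0

def CylH (X : ℕ → Ω → ℕ) (t : ℕ) (x : Fin (t + 1) → ℕ) : Set Ω :=
  {ω | ∀ s ≤ t, X s ω = extH t x s}

def GoodH (t : ℕ) (x : Fin (t + 1) → ℕ) : Prop :=
  ∀ s : Fin (t + 1), 1 ≤ (s : ℕ) → x s ≠ 0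

lemma extH_eq (t : ℕ) (x : Fin (t + 1) → ℕ) {s : ℕ} (hs : s ≤ t) :
    extH t x s = x ⟨s, Nat.lt_succ_of_le hs⟩ := by
  simp [extH, Nat.lt_succ_of_le hs]

lemma extH_snoc_le (t : ℕ) (x : Fin (t + 1) → ℕ) (m : ℕ) {s : ℕ} (hs : s ≤ t) :
    extH (t + 1) (Fin.snoc x m) s = extH t x s := by
  rw [extH_eq _ _ (le_trans hs (Nat.le_succ t)), extH_eq _ _ hs]
  have : (⟨s, Nat.lt_succ_of_le (le_trans hs (Nat.le_succ t))⟩ : Fin (t + 2))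
      = Fin.castSucc ⟨s, Nat.lt_succ_of_le hs⟩ := rfl
  rw [this, Fin.snoc_castSucc]

lemma extH_snoc_last (t : ℕ) (x : Fin (t + 1) → ℕ) (m : ℕ) :
    extH (t + 1) (Fin.snoc x m) (t + 1) = m := by
  rw [extH_eq _ _ (le_refl (t + 1))]
  have : (⟨t + 1, Nat.lt_succ_of_le (le_refl (t + 1))⟩ : Fin (t + 2)) = Fin.last (t + 1) := rfl
  rw [this, Fin.snoc_last]

lemma cylH_snoc (X : ℕ → Ω → ℕ) (t : ℕ) (x : Fin (t + 1) → ℕ) (m : ℕ) :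
    CylH X (t + 1) (Fin.snoc x m)
      = {ω | X (t + 1) ω = m ∧ ∀ s ≤ t, X s ω = extH t x s} := by
  ext ω
  simp only [CylH, Set.mem_setOf_eq]
  constructor
  · intro H
    refine ⟨by rw [H (t + 1) le_rfl, extH_snoc_last], fun s hs => ?_⟩
    rw [H s (le_trans hs (Nat.le_succ t)), extH_snoc_le _ _ _ hs]
  · rintro ⟨h1, h2⟩ s hs
    rcases Nat.lt_succ_iff_lt_or_eq.1 (Nat.lt_succ_of_le hs) with h | h
    · rw [h2 s (Nat.lt_succ_iff.1 h), extH_snoc_le _ _ _ (Nat.lt_succ_iff.1 h)]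
    · subst h; rw [h1, extH_snoc_last]

lemma measurable_cylH (X : ℕ → Ω → ℕ) (hX : ∀ t, Measurable (X t)) (t : ℕ)
    (x : Fin (t + 1) → ℕ) : MeasurableSet (CylH X t x) := by
  have : CylH X t x = ⋂ (s : ℕ) (_ : s ≤ t), (X s) ⁻¹' {extH t x s} := by
    ext ω; simp [CylH]
  rw [this]
  exact MeasurableSet.iInter fun s => MeasurableSet.iInter fun _ =>
    (hX s) (measurableSet_singleton _)

lemma disjoint_cylH (X : ℕ → Ω → ℕ) (t : ℕ) {x y : Fin (t + 1) → ℕ} (hxy : x ≠ y) :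
    Disjoint (CylH X t x) (CylH X t y) := by
  rw [Set.disjoint_left]
  intro ω hx hy
  apply hxy
  funext s
  have h1 := hx (s : ℕ) (Nat.lt_succ_iff.1 s.isLt)
  have h2 := hy (s : ℕ) (Nat.lt_succ_iff.1 s.isLt)
  rw [extH_eq _ _ (Nat.lt_succ_iff.1 s.isLt)] at h1 h2
  rw [← Fin.eta s s.isLt]
  rw [← h1, h2]

end PartB

set_option linter.unusedSectionVars false

section PartB2

variable {Ω : Type} [MeasurableSpace Ω]

def snocEquiv (t : ℕ) : ((Fin (t + 1) → ℕ) × ℕ) ≃ (Fin (t + 2) → ℕ) where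
  toFun q := Fin.snoc q.1 q.2
  invFun y := (Fin.init y, y (Fin.last (t + 1)))
  left_inv q := by simp
  right_inv y := by simp

lemma tsum_snoc (t : ℕ) (F : (Fin (t + 2) → ℕ) → ℝ≥0∞) :
    ∑' y, F y = ∑' (x : Fin (t + 1) → ℕ), ∑' (m : ℕ), F (Fin.snoc x m) := by
  rw [← (snocEquiv t).tsum_eq F]
  exact ENNReal.tsum_prod' (f := fun q => F (Fin.snoc q.1 q.2))

lemma goodH_snoc (t : ℕ) (x : Fin (t + 1) → ℕ) (m : ℕ) :
    GoodH (t + 1) (Fin.snoc x m) ↔ GoodH t x ∧ m ≠ 0 := by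
  constructor
  · intro H
    refine ⟨fun s hs => ?_, ?_⟩
    · have := H (Fin.castSucc s) (by simpa using hs)
      rwa [Fin.snoc_castSucc] at this
    · have := H (Fin.last (t + 1)) (by simp)
      rwa [Fin.snoc_last] at this
  · rintro ⟨H1, H2⟩ s
    refine Fin.lastCases ?_ (fun i => ?_) s
    · intro _; rwa [Fin.snoc_last]
    · intro hi
      rw [Fin.snoc_castSucc]
      exact H1 i (by simpa using hi)

theorem walk_ret_lt_one (p : ℕ → ℝ) (hp0 : ∀ i, 0 < p i) (hp1 : ∀ i, p i < 1)
    (L : ℝ) (hL : ∀ n, ∑ i ∈ Finset.range n, Denv p i ≤ L)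
    (μ : Measure Ω) [IsProbabilityMeasure μ]
    (X : ℕ → Ω → ℕ) (hX : IsQuenchedWalk μ X p) :
    μ {ω | ∃ t, 1 ≤ t ∧ X t ω = 0} < 1 := by
  classical
  obtain ⟨hXm, hX0, hMk⟩ := hX
  set h : ℕ → ℝ := fun k => ∑ i ∈ Finset.range k, Denv p (i + 1) with hhdef
  have hDpos : ∀ i, 0 < Denv p i := fun i =>
    Finset.prod_pos fun j _ => div_pos (hp0 j) (by linarith [hp1 j])
  have hh0 : h 0 = 0 := by simp [hhdef]
  have hh1 : h 1 = Denv p 1 := by simp [hhdef]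
  have hhnn : ∀ k, 0 ≤ h k := fun k =>
    Finset.sum_nonneg fun i _ => le_of_lt (hDpos (i + 1))
  have hD0 : Denv p 0 = 1 := by simp [Denv]
  have hhL : ∀ k, h k ≤ L := by
    intro k
    have : h k + Denv p 0 = ∑ i ∈ Finset.range (k + 1), Denv p i := by
      rw [Finset.sum_range_succ' (fun i => Denv p i) k]
    have h2 := hL (k + 1)
    rw [← this, hD0] at h2
    linarith
  have hL1 : (1 : ℝ) ≤ L := by have := hL 1; simpa [hD0] using this
  have harm : ∀ j : ℕ, h j * p (j + 1) + h (j + 2) * (1 - p (j + 1)) = h (j + 1) := by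
    intro j
    have e1 : h (j + 1) = h j + Denv p (j + 1) := by simp [hhdef, Finset.sum_range_succ]
    have e2 : h (j + 2) = h (j + 1) + Denv p (j + 2) := by
      simp [hhdef, Finset.sum_range_succ]
    have e3 : Denv p (j + 2) = Denv p (j + 1) * (p (j + 1) / (1 - p (j + 1))) :=
      Finset.prod_range_succ _ _
    have hq : (0 : ℝ) < 1 - p (j + 1) := by linarith [hp1 (j + 1)]
    rw [e2, e3, e1]
    field_simp
    ring
  -- kernel computation
  have kern : ∀ k : ℕ,
      (∑' m : ℕ, ENNReal.ofReal (h m) * ENNReal.ofReal (step p k m))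
        = ENNReal.ofReal (if k = 0 then h 1 * (1 - p 0) else h k) := by
    intro k
    match k with
    | 0 =>
      rw [tsum_eq_sum (s := {0, 1})
        (by intro m hm; simp only [Finset.mem_insert, Finset.mem_singleton] at hm
            push_neg at hm
            have : step p 0 m = 0 := by simp [step, hm.1, hm.2]
            simp [this])]
      rw [Finset.sum_insert (by simp), Finset.sum_singleton]
      have s1 : step p 0 0 = p 0 := by simp [step]
      have s2 : step p 0 1 = 1 - p 0 := by simp [step]
      rw [s1, s2, hh0, ← ENNReal.ofReal_mul (hhnn 1)]
      simp
    | (j + 1) =>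
      rw [tsum_eq_sum (s := {j, j + 2})
        (by intro m hm; simp only [Finset.mem_insert, Finset.mem_singleton] at hm
            push_neg at hm
            have : step p (j + 1) m = 0 := by simp [step, hm.1, hm.2]
            simp [this])]
      rw [Finset.sum_insert (by simp only [Finset.mem_singleton]; omega),
        Finset.sum_singleton]
      have s1 : step p (j + 1) j = p (j + 1) := by simp [step]
      have s2 : step p (j + 1) (j + 2) = 1 - p (j + 1) := by
        have h2 : j + 2 ≠ (j + 1) - 1 := by omega
        simp [step, h2]
      rw [s1, s2, ← ENNReal.ofReal_mul (hhnn j), ← ENNReal.ofReal_mul (hhnn (j + 2)),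
        ← ENNReal.ofReal_add (mul_nonneg (hhnn j) (hp0 (j + 1)).le)
          (mul_nonneg (hhnn (j + 2)) (by linarith [hp1 (j + 1)])), harm j]
      simp
  -- Markov property in cylinder form
  have mkv : ∀ (t : ℕ) (x : Fin (t + 1) → ℕ) (m : ℕ),
      μ (CylH X (t + 1) (Fin.snoc x m))
        = ENNReal.ofReal (step p (x (Fin.last t)) m) * μ (CylH X t x) := by
    intro t x m
    have hxt : extH t x t = x (Fin.last t) := by
      rw [extH_eq _ _ le_rfl]; rfl
    rw [cylH_snoc]
    have := hMk t (extH t x) m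
    rw [hxt] at this
    exact this
  -- the martingale-type quantity
  set M : ℕ → ℝ≥0∞ := fun t =>
    ∑' x : Fin (t + 1) → ℕ,
      (if GoodH t x then ENNReal.ofReal (h (x (Fin.last t))) else 0) * μ (CylH X t x)
    with hMdef
  have Mstep : ∀ t : ℕ, 1 ≤ t → M (t + 1) = M t := by
    intro t ht
    have h1 : M (t + 1)
        = ∑' (x : Fin (t + 1) → ℕ), ∑' (m : ℕ),
            (if GoodH (t + 1) (Fin.snoc x m) then
              ENNReal.ofReal (h ((Fin.snoc x m : Fin (t + 2) → ℕ) (Fin.last (t + 1)))) else 0)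
              * μ (CylH X (t + 1) (Fin.snoc x m)) := by
      rw [hMdef]
      exact tsum_snoc t _
    rw [h1]
    have inner : ∀ x : Fin (t + 1) → ℕ,
        (∑' m : ℕ,
          (if GoodH (t + 1) (Fin.snoc x m) then
            ENNReal.ofReal (h ((Fin.snoc x m : Fin (t + 2) → ℕ) (Fin.last (t + 1)))) else 0)
            * μ (CylH X (t + 1) (Fin.snoc x m)))
          = (if GoodH t x then ENNReal.ofReal (h (x (Fin.last t))) else 0)
              * μ (CylH X t x) := by
      intro x
      by_cases hG : GoodH t x
      · have hk0 : x (Fin.last t) ≠ 0 := hG (Fin.last t) (by simpa using ht)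
        simp only [goodH_snoc, hG, true_and, Fin.snoc_last, mkv]
        have hrw : ∀ m : ℕ, (if m ≠ 0 then ENNReal.ofReal (h m) else 0)
            * (ENNReal.ofReal (step p (x (Fin.last t)) m) * μ (CylH X t x))
            = (ENNReal.ofReal (h m) * ENNReal.ofReal (step p (x (Fin.last t)) m))
                * μ (CylH X t x) := by
          intro m
          by_cases hm : m = 0
          · simp [hm, hh0]
          · simp [hm, mul_assoc]
        rw [tsum_congr hrw, ENNReal.tsum_mul_right, kern, if_neg hk0]
        simp
      · have hfalse : ∀ m : ℕ, ¬ (GoodH (t + 1) (Fin.snoc x m)) := by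
          intro m hGm
          exact hG ((goodH_snoc t x m).1 hGm).1
        simp [hfalse, hG]
    rw [tsum_congr inner, hMdef]
  -- μ of the time-0 cylinder is 1
  have hCyl0 : μ (CylH X 0 ![0]) = 1 := by
    have heq : CylH X 0 ![0] =ᵐ[μ] (Set.univ : Set Ω) := by
      rw [Filter.eventuallyEq_univ]
      filter_upwards [hX0] with ω hω
      intro s hs
      have hs0 : s = 0 := Nat.le_zero.1 hs
      subst hs0
      rw [hω]
      simp [extH]
    rw [measure_congr heq, measure_univ]
  have hsnoc01 : (Fin.snoc (![0] : Fin 1 → ℕ) 1 : Fin 2 → ℕ) = ![0, 1] := by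
    funext s
    fin_cases s <;> rfl
  have hM1 : ENNReal.ofReal (h 1 * (1 - p 0)) ≤ M 1 := by
    have hG : GoodH 1 ![0, 1] := by
      intro s hs
      fin_cases s
      · simp at hs
      · simp
    have hlast : (![0, 1] : Fin 2 → ℕ) (Fin.last 1) = 1 := rfl
    have hμ : μ (CylH X 1 ![0, 1]) = ENNReal.ofReal (1 - p 0) := by
      rw [← hsnoc01, mkv 0 ![0] 1]
      have h00 : (![0] : Fin 1 → ℕ) (Fin.last 0) = 0 := rfl
      rw [h00, hCyl0, mul_one]
      simp [step]
    have hterm := ENNReal.le_tsum (f := fun x : Fin 2 → ℕ =>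
      (if GoodH 1 x then ENNReal.ofReal (h (x (Fin.last 1))) else 0) * μ (CylH X 1 x)) ![0, 1]
    calc ENNReal.ofReal (h 1 * (1 - p 0))
        = (if GoodH 1 ![0, 1] then
            ENNReal.ofReal (h ((![0, 1] : Fin 2 → ℕ) (Fin.last 1))) else 0)
            * μ (CylH X 1 ![0, 1]) := by
          rw [if_pos hG, hlast, hμ, ← ENNReal.ofReal_mul (hhnn 1)]
      _ ≤ M 1 := hterm
  have Mlow : ∀ t, 1 ≤ t → ENNReal.ofReal (h 1 * (1 - p 0)) ≤ M t := by
    intro t ht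
    induction t with
    | zero => omega
    | succ n ih =>
      rcases Nat.lt_or_ge n 1 with hn | hn
      · have : n = 0 := by omega
        subst this
        exact hM1
      · rw [Mstep n hn]
        exact ih hn
  -- the events of avoiding 0
  set A : ℕ → Set Ω := fun t => {ω | ∀ s, 1 ≤ s → s ≤ t → X s ω ≠ 0} with hAdef
  have Ameas : ∀ t, MeasurableSet (A t) := by
    intro t
    have : A t = ⋂ (s : ℕ) (_ : 1 ≤ s) (_ : s ≤ t), (X s) ⁻¹' ({0}ᶜ) := by
      ext ω; simp [hAdef]
    rw [this]
    exact MeasurableSet.iInter fun s => MeasurableSet.iInter fun _ =>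
      MeasurableSet.iInter fun _ => (hXm s) (measurableSet_singleton _).compl
  have hUnion : ∀ t, (⋃ x : {x : Fin (t + 1) → ℕ | GoodH t x}, CylH X t x.1) = A t := by
    intro t
    ext ω
    rw [Set.mem_iUnion]
    constructor
    · rintro ⟨x, hω⟩
      intro s h1s hst
      have hs := hω s hst
      rw [hs, extH_eq _ _ hst]
      exact x.2 ⟨s, Nat.lt_succ_of_le hst⟩ (by simpa using h1s)
    · intro hω
      refine ⟨⟨fun s => X (s : ℕ) ω, fun s hs => hω s hs (Nat.lt_succ_iff.1 s.isLt)⟩, ?_⟩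
      intro s hs
      rw [extH_eq _ _ hs]
  have Mup : ∀ t, M t ≤ ENNReal.ofReal L * μ (A t) := by
    intro t
    have step1 : M t ≤ ∑' x : Fin (t + 1) → ℕ,
        ENNReal.ofReal L * (if GoodH t x then μ (CylH X t x) else 0) := by
      rw [hMdef]
      refine ENNReal.tsum_le_tsum fun x => ?_
      by_cases hG : GoodH t x
      · simp only [if_pos hG]
        exact mul_le_mul' (ENNReal.ofReal_le_ofReal (hhL _)) le_rfl
      · simp [hG]
    refine step1.trans ?_
    rw [ENNReal.tsum_mul_left]
    refine mul_le_mul' le_rfl ?_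
    have hsub : (∑' x : Fin (t + 1) → ℕ, (if GoodH t x then μ (CylH X t x) else 0))
        = ∑' x : {x : Fin (t + 1) → ℕ | GoodH t x}, μ (CylH X t x.1) := by
      rw [tsum_subtype {x : Fin (t + 1) → ℕ | GoodH t x} (fun x => μ (CylH X t x))]
      exact tsum_congr fun x => by simp [Set.indicator_apply, Set.mem_setOf_eq]
    rw [hsub, ← measure_iUnion
      (fun a b hab => disjoint_cylH X t (fun hh => hab (Subtype.ext hh)))
      (fun x => measurable_cylH X hXm t x.1), hUnion t]
  -- conclusion
  set δ := ENNReal.ofReal (h 1 * (1 - p 0)) / ENNReal.ofReal L with hδdef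
  have hnum : (0:ℝ) < h 1 * (1 - p 0) := by
    have := hDpos 1
    have := hp1 0
    rw [hh1]
    nlinarith
  have hδpos : 0 < δ :=
    ENNReal.div_pos (by simp [ENNReal.ofReal_pos.2 hnum, ne_of_gt]) ENNReal.ofReal_ne_top
  have hδA : ∀ t, δ ≤ μ (A t) := by
    intro t
    rcases Nat.eq_zero_or_pos t with rfl | ht
    · have hA0 : A 0 = Set.univ := by
        ext ω; simp only [hAdef, Set.mem_setOf_eq, Set.mem_univ, iff_true]
        intro s h1 h2; omega
      rw [hA0, measure_univ, hδdef]
      refine ENNReal.div_le_of_le_mul ?_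
      rw [one_mul]
      refine ENNReal.ofReal_le_ofReal ?_
      have h1L := hhL 1
      have := hp1 0
      have := hp0 0
      have := hhnn 1
      nlinarith
    · have hchain := (Mlow t ht).trans (Mup t)
      rw [hδdef]
      refine ENNReal.div_le_of_le_mul ?_
      calc ENNReal.ofReal (h 1 * (1 - p 0)) ≤ ENNReal.ofReal L * μ (A t) := hchain
        _ = μ (A t) * ENNReal.ofReal L := mul_comm _ _
  have hiInter : δ ≤ μ (⋂ t, A t) := by
    rw [Directed.measure_iInter (fun t => (Ameas t).nullMeasurableSet) ?_ ⟨0, measure_ne_top μ _⟩]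
    · exact le_iInf hδA
    · intro a b
      refine ⟨max a b, fun ω hω s h1 h2 => ?_, fun ω hω s h1 h2 => ?_⟩
      · exact hω s h1 (le_trans h2 (le_max_left a b))
      · exact hω s h1 (le_trans h2 (le_max_right a b))
  have hset : {ω | ∃ t, 1 ≤ t ∧ X t ω = 0} = (⋂ t, A t)ᶜ := by
    ext ω
    simp only [Set.mem_setOf_eq, Set.mem_compl_iff, Set.mem_iInter, hAdef]
    constructor
    · rintro ⟨t, ht, h0⟩ H
      exact H t t ht le_rfl h0
    · intro H
      by_contra hc
      push_neg at hc
      exact H fun t s h1 h2 => hc s h1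
  rw [hset, measure_compl (MeasurableSet.iInter Ameas) (measure_ne_top μ _), measure_univ]
  exact ENNReal.sub_lt_self ENNReal.one_ne_top one_ne_zero
    (ne_of_gt (lt_of_lt_of_le hδpos hiInter))

end PartB2

open ProbabilityTheory in
lemma two_term_rpow {a b r : ℝ} (ha : 0 ≤ a) (hb : 0 ≤ b) (hr : 1 ≤ r) :
    a ^ r + b ^ r ≤ (a + b) ^ r := by
  lift a to ℝ≥0 using ha
  lift b to ℝ≥0 using hb
  have := NNReal.add_rpow_le_rpow_add a b hr
  exact_mod_cast this

lemma sum_rpow_le {ι : Type*} (s : Finset ι) (f : ι → ℝ) (hf : ∀ i ∈ s, 0 ≤ f i)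
    {r : ℝ} (hr : 1 ≤ r) : ∑ i ∈ s, f i ^ r ≤ (∑ i ∈ s, f i) ^ r := by
  classical
  induction s using Finset.induction with
  | empty => simp [Real.zero_rpow (by linarith : r ≠ 0)]
  | @insert a s' ha ih =>
    rw [Finset.sum_insert ha, Finset.sum_insert ha]
    have h1 : ∀ i ∈ s', 0 ≤ f i := fun i hi' => hf i (Finset.mem_insert_of_mem hi')
    have h2 : 0 ≤ f a := hf a (Finset.mem_insert_self a s')
    have h3 : (0:ℝ) ≤ ∑ i ∈ s', f i := Finset.sum_nonneg h1
    calc f a ^ r + ∑ i ∈ s', f i ^ r ≤ f a ^ r + (∑ i ∈ s', f i) ^ r := by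
          linarith [ih h1]
      _ ≤ (f a + ∑ i ∈ s', f i) ^ r := two_term_rpow h2 h3 hr

open ProbabilityTheory in
theorem eventually_drift {E : Type*} [MeasurableSpace E] (P : Measure E) [IsProbabilityMeasure P]
    (ζ : ℕ → E → ℝ) (hmeas : ∀ n, Measurable (ζ n))
    (hindep : iIndepFun ζ P)
    (hident : ∀ n, Measure.map (ζ n) P = Measure.map (ζ 0) P)
    (pe γ c : ℝ) (hpe : 0 < pe) (hc : 0 < c) (hγ : γ < min 1 pe)
    (hmom : Integrable (fun e => (max (ζ 0 e) 0) ^ pe) P)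
    (htail : ∀ᶠ x : ℝ in atTop, c * x ^ (-γ) ≤ (P {e | ζ 0 e < -x}).toReal) :
    ∀ᵐ e ∂P, ∀ᶠ n : ℕ in atTop, ∑ j ∈ Finset.range n, ζ j e ≤ -(n : ℝ) := by
  classical
  set q : ℝ := min 1 pe with hqdef
  have hq0 : 0 < q := lt_min one_pos hpe
  have hq1 : q ≤ 1 := min_le_left _ _
  have hqpe : q ≤ pe := min_le_right _ _
  have hqinv1 : 1 ≤ q⁻¹ := (one_le_inv_iff₀).2 ⟨hq0, hq1⟩
  set γ₁ : ℝ := max γ (q / 2) with hγ₁def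
  have hγ₁pos : 0 < γ₁ := lt_of_lt_of_le (by linarith) (le_max_right _ _)
  have hγ₁q : γ₁ < q := max_lt (by rw [hqdef]; exact hγ) (by linarith)
  have hγγ₁ : γ ≤ γ₁ := le_max_left _ _
  set γ' : ℝ := (γ₁ + q) / 2 with hγ'def
  have hγ'pos : 0 < γ' := by rw [hγ'def]; linarith
  have hγ₁γ' : γ₁ < γ' := by rw [hγ'def]; linarith
  have hγ'q : γ' < q := by rw [hγ'def]; linarith
  have hγ'1 : γ' < 1 := lt_of_lt_of_le hγ'q hq1
  have hγ'inv : q⁻¹ < γ'⁻¹ := by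
    exact inv_strictAnti₀ hγ'pos hγ'q
  -- Part I: SLLN for the positive parts
  set φ : ℝ → ℝ := fun x => (max x 0) ^ q with hφdef
  have hφm : Measurable φ := (measurable_id.max measurable_const).pow measurable_const
  set Y : ℕ → E → ℝ := fun i e => φ (ζ i e) with hYdef
  have hYnn : ∀ i e, 0 ≤ Y i e := fun i e => Real.rpow_nonneg (le_max_right _ _) q
  have hYint : Integrable (Y 0) P := by
    refine Integrable.mono ((integrable_const (1:ℝ)).add hmom) (hφm.comp (hmeas 0)).aestronglyMeasurable ?_
    refine Filter.Eventually.of_forall fun e => ?_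
    have hm0 : (0:ℝ) ≤ max (ζ 0 e) 0 := le_max_right _ _
    have hb : Y 0 e ≤ 1 + (max (ζ 0 e) 0) ^ pe := by
      rcases le_or_gt (max (ζ 0 e) 0) 1 with hm1 | hm1
      · have := Real.rpow_le_one hm0 hm1 hq0.le
        have : (0:ℝ) ≤ (max (ζ 0 e) 0) ^ pe := Real.rpow_nonneg hm0 pe
        nlinarith [Real.rpow_le_one hm0 hm1 hq0.le]
      · have := Real.rpow_le_rpow_of_exponent_le hm1.le hqpe
        linarith
    simp only [Real.norm_eq_abs, Pi.add_apply]
    rw [abs_of_nonneg (hYnn 0 e),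
      abs_of_nonneg (by positivity : (0:ℝ) ≤ 1 + (max (ζ 0 e) 0) ^ pe)]
    exact hb
  have hYindep : Pairwise (Function.onFun (IndepFun · · P) Y) := fun i j hij =>
    (hindep.indepFun hij).comp hφm hφm
  have hYident : ∀ i, IdentDistrib (Y i) (Y 0) P P := fun i =>
    (⟨(hmeas i).aemeasurable, (hmeas 0).aemeasurable, hident i⟩ :
      IdentDistrib (ζ i) (ζ 0) P P).comp hφm
  have hSLLN := strong_law_ae_real Y hYint hYindep hYident
  set A : ℝ := ∫ e, Y 0 e ∂P with hAdef
  set C : ℝ := (|A| + 1) ^ q⁻¹ with hCdef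
  have hCnn : 0 ≤ C := Real.rpow_nonneg (by positivity) _
  have hpospart : ∀ᵐ e ∂P, ∀ᶠ n : ℕ in atTop,
      ∑ j ∈ Finset.range n, max (ζ j e) 0 ≤ C * (n : ℝ) ^ q⁻¹ := by
    filter_upwards [hSLLN] with e he
    have hlt : ∀ᶠ n : ℕ in atTop, (∑ i ∈ Finset.range n, Y i e) / (n:ℝ) < |A| + 1 :=
      he.eventually (Filter.Tendsto.eventually_lt_const (by cases abs_choice A with
        | inl h => rw [h]; linarith
        | inr h => rw [h]; nlinarith [abs_nonneg A, neg_abs_le A]) tendsto_id)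
    filter_upwards [hlt, eventually_ge_atTop 1] with n hn hn1
    have hnpos : (0:ℝ) < n := by exact_mod_cast hn1
    have hS : ∑ i ∈ Finset.range n, Y i e ≤ (|A| + 1) * n := by
      rw [div_lt_iff₀ hnpos] at hn
      linarith
    have h1 : ∑ j ∈ Finset.range n, max (ζ j e) 0
        = ∑ j ∈ Finset.range n, (Y j e) ^ q⁻¹ :=
      Finset.sum_congr rfl fun j _ => (Real.rpow_rpow_inv (le_max_right _ _) hq0.ne').symm
    rw [h1]
    calc ∑ j ∈ Finset.range n, (Y j e) ^ q⁻¹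
        ≤ (∑ j ∈ Finset.range n, Y j e) ^ q⁻¹ :=
          sum_rpow_le _ _ (fun j _ => hYnn j e) hqinv1
      _ ≤ ((|A| + 1) * n) ^ q⁻¹ :=
          Real.rpow_le_rpow (Finset.sum_nonneg fun j _ => hYnn j e) hS (by linarith)
      _ = C * (n:ℝ) ^ q⁻¹ := Real.mul_rpow (by positivity) (by positivity)
  -- Part II : Borel-Cantelli for big negative jumps
  obtain ⟨x₀, hx₀⟩ := eventually_atTop.1 htail
  set x₁ : ℝ := max x₀ 1 with hx₁def
  have htail' : ∀ x, x₁ ≤ x → c * x ^ (-γ₁) ≤ (P {e | ζ 0 e < -x}).toReal := by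
    intro x hx
    have hx1 : (1:ℝ) ≤ x := le_trans (le_max_right _ _) hx
    have h2 : x ^ (-γ₁) ≤ x ^ (-γ) := Real.rpow_le_rpow_of_exponent_le hx1 (by linarith)
    refine le_trans ?_ (hx₀ x (le_trans (le_max_left _ _) hx))
    nlinarith [h2]
  have htends : Tendsto (fun m : ℕ => (m:ℝ) ^ γ'⁻¹) atTop atTop :=
    (tendsto_rpow_atTop (by positivity)).comp tendsto_natCast_atTop_atTop
  obtain ⟨M₀, hM₀⟩ := eventually_atTop.1 (htends.eventually_ge_atTop x₁)
  set T : ℕ → Set E := fun m => {e | ζ m e < -((m:ℝ) ^ γ'⁻¹)} with hTdef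
  have hPT : ∀ m, P (T m) = P {e | ζ 0 e < -((m:ℝ) ^ γ'⁻¹)} := by
    intro m
    have h1 : T m = ζ m ⁻¹' (Set.Iio (-((m:ℝ) ^ γ'⁻¹))) := rfl
    have h2 : {e | ζ 0 e < -((m:ℝ) ^ γ'⁻¹)} = ζ 0 ⁻¹' (Set.Iio (-((m:ℝ) ^ γ'⁻¹))) := rfl
    rw [h1, h2, ← Measure.map_apply (hmeas m) measurableSet_Iio,
      ← Measure.map_apply (hmeas 0) measurableSet_Iio, hident m]
  set g : ℕ → ℝ := fun m => ((m:ℝ) ^ γ'⁻¹) ^ γ₁ with hgdef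
  have hgpos : ∀ m : ℕ, 1 ≤ m → 0 < g m := fun m hm =>
    Real.rpow_pos_of_pos (Real.rpow_pos_of_pos (by exact_mod_cast hm) _) _
  have hfac : ∀ m : ℕ, M₀ ≤ m → P ((T m)ᶜ) ≤ ENNReal.ofReal (Real.exp (-(c / g m))) := by
    intro m hm
    have hlow : c / g m ≤ (P (T m)).toReal := by
      rw [hPT m]
      have := htail' ((m:ℝ) ^ γ'⁻¹) (hM₀ m hm)
      rwa [Real.rpow_neg (Real.rpow_nonneg (Nat.cast_nonneg m) _), ← div_eq_mul_inv] at this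
    have hcompl : P ((T m)ᶜ) = 1 - P (T m) :=
      prob_compl_eq_one_sub ((hmeas m) measurableSet_Iio)
    rw [hcompl, tsub_le_iff_right]
    have hfin : P (T m) = ENNReal.ofReal ((P (T m)).toReal) :=
      (ENNReal.ofReal_toReal (measure_ne_top P _)).symm
    rw [hfin, ← ENNReal.ofReal_add (Real.exp_nonneg _) ENNReal.toReal_nonneg,
      ← ENNReal.ofReal_one]
    apply ENNReal.ofReal_le_ofReal
    have := Real.add_one_le_exp (-(c / g m))
    linarith
  set β : ℝ := γ'⁻¹ * γ₁ with hβdef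
  have hβ0 : 0 < β := by positivity
  have hβ1 : β < 1 := by
    rw [hβdef]
    rw [mul_comm, ← div_eq_mul_inv]
    exact (div_lt_one hγ'pos).2 hγ₁γ'
  set c₃ : ℝ := c * (2:ℝ) ^ (-β) * ((1 - β) * Real.log 2) with hc₃def
  have hc₃pos : 0 < c₃ := by
    have hlog : 0 < Real.log 2 := Real.log_pos (by norm_num)
    have h2β : (0:ℝ) < (2:ℝ) ^ (-β) := Real.rpow_pos_of_pos (by norm_num) _
    have h1β : (0:ℝ) < 1 - β := by linarith
    exact mul_pos (mul_pos hc h2β) (mul_pos h1β hlog)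
  -- bound on each block
  have hblock : ∀ k : ℕ, M₀ ≤ 2 ^ k →
      P (⋂ m ∈ Finset.Ico (2 ^ k) (2 ^ (k + 1)), (T m)ᶜ)
        ≤ ENNReal.ofReal (Real.exp (-c₃) ^ k) := by
    intro k hk
    have hprod : P (⋂ m ∈ Finset.Ico (2 ^ k) (2 ^ (k + 1)), (T m)ᶜ)
        = ∏ m ∈ Finset.Ico (2 ^ k) (2 ^ (k + 1)), P ((T m)ᶜ) := by
      refine hindep.meas_biInter fun m _ => ?_
      exact ⟨(Set.Iio (-((m:ℝ) ^ γ'⁻¹)))ᶜ, measurableSet_Iio.compl, rfl⟩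
    rw [hprod]
    set Bk : ℝ := (((2:ℝ) ^ (k + 1)) ^ γ'⁻¹) ^ γ₁ with hBkdef
    have hBkpos : 0 < Bk :=
      Real.rpow_pos_of_pos (Real.rpow_pos_of_pos (by positivity) _) _
    have hgB : ∀ m ∈ Finset.Ico (2 ^ k) (2 ^ (k + 1)), g m ≤ Bk := by
      intro m hm
      rw [Finset.mem_Ico] at hm
      have hmle : (m : ℝ) ≤ (2:ℝ) ^ (k + 1) := by
        exact_mod_cast le_of_lt hm.2
      exact Real.rpow_le_rpow (Real.rpow_nonneg (Nat.cast_nonneg m) _)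
        (Real.rpow_le_rpow (Nat.cast_nonneg m) hmle (by positivity)) hγ₁pos.le
    have hstep1 : ∏ m ∈ Finset.Ico (2 ^ k) (2 ^ (k + 1)), P ((T m)ᶜ)
        ≤ ∏ m ∈ Finset.Ico (2 ^ k) (2 ^ (k + 1)),
            ENNReal.ofReal (Real.exp (-(c / Bk))) := by
      refine Finset.prod_le_prod' fun m hm => ?_
      rw [Finset.mem_Ico] at hm
      have hm1 : 1 ≤ m := le_trans (Nat.one_le_two_pow) hm.1
      refine le_trans (hfac m (le_trans hk hm.1)) (ENNReal.ofReal_le_ofReal ?_)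
      apply Real.exp_le_exp.2
      have h1 : c / Bk ≤ c / g m :=
        div_le_div_of_nonneg_left hc.le (hgpos m hm1)
          (hgB m (Finset.mem_Ico.2 hm))
      linarith
    refine le_trans hstep1 ?_
    rw [Finset.prod_const, Nat.card_Ico]
    have hcard : 2 ^ (k + 1) - 2 ^ k = 2 ^ k := by
      have : 2 ^ (k + 1) = 2 * 2 ^ k := by ring
      omega
    rw [hcard, ← ENNReal.ofReal_pow (Real.exp_nonneg _), ← Real.exp_nat_mul]
    apply ENNReal.ofReal_le_ofReal
    rw [← Real.exp_nat_mul]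
    apply Real.exp_le_exp.2
    -- need : (2^k : ℝ) * (-(c / Bk)) ≤ (k:ℝ) * (-c₃)
    have hBk2 : Bk = (2:ℝ) ^ (((k:ℝ) + 1) * β) := by
      rw [hBkdef, ← Real.rpow_natCast (2:ℝ) (k + 1),
        ← Real.rpow_mul (by norm_num : (0:ℝ) ≤ 2),
        ← Real.rpow_mul (by norm_num : (0:ℝ) ≤ 2)]
      push_cast
      ring_nf
      rw [hβdef]; ring_nf
    have hpow2 : ((2:ℝ) ^ k : ℝ) / Bk = (2:ℝ) ^ (-β) * (2:ℝ) ^ ((k:ℝ) * (1 - β)) := by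
      rw [hBk2, ← Real.rpow_natCast (2:ℝ) k, ← Real.rpow_sub (by norm_num),
        ← Real.rpow_add (by norm_num)]
      ring_nf
    have hexp2 : (k:ℝ) * ((1 - β) * Real.log 2) ≤ (2:ℝ) ^ ((k:ℝ) * (1 - β)) := by
      rw [Real.rpow_def_of_pos (by norm_num : (0:ℝ) < 2)]
      calc (k:ℝ) * ((1 - β) * Real.log 2)
          ≤ (Real.log 2 * ((k:ℝ) * (1 - β))) + 1 := by ring_nf; linarith
        _ ≤ Real.exp (Real.log 2 * ((k:ℝ) * (1 - β))) := by
            linarith [Real.add_one_le_exp (Real.log 2 * ((k:ℝ) * (1 - β)))]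
    have h2β : (0:ℝ) < (2:ℝ) ^ (-β) := Real.rpow_pos_of_pos (by norm_num) _
    have hkey : (k:ℝ) * c₃ ≤ (2:ℝ) ^ k * (c / Bk) := by
      have e1 : (2:ℝ) ^ k * (c / Bk) = c * ((2:ℝ) ^ k / Bk) := by ring
      rw [e1, hpow2]
      calc (k:ℝ) * c₃
          = (c * (2:ℝ) ^ (-β)) * ((k:ℝ) * ((1 - β) * Real.log 2)) := by
            rw [hc₃def]; ring
        _ ≤ (c * (2:ℝ) ^ (-β)) * (2:ℝ) ^ ((k:ℝ) * (1 - β)) :=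
            mul_le_mul_of_nonneg_left hexp2 (mul_nonneg hc.le h2β.le)
        _ = c * ((2:ℝ) ^ (-β) * (2:ℝ) ^ ((k:ℝ) * (1 - β))) := by ring
    push_cast
    linarith [hkey]
  set K₀ : ℕ := M₀ with hK₀def
  have hK₀ : ∀ k, K₀ ≤ k → M₀ ≤ 2 ^ k := fun k hk =>
    le_trans (Nat.lt_two_pow_self (n := M₀)).le (Nat.pow_le_pow_right (by norm_num) hk)
  set r : ℝ := Real.exp (-c₃) with hrdef
  have hr0 : 0 ≤ r := Real.exp_nonneg _
  have hr1 : r < 1 := Real.exp_lt_one_iff.2 (by linarith)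
  have hsum : (∑' k : ℕ,
      P (⋂ m ∈ Finset.Ico (2 ^ (k + K₀)) (2 ^ (k + K₀ + 1)), (T m)ᶜ)) ≠ ⊤ := by
    have hle : ∀ k : ℕ, P (⋂ m ∈ Finset.Ico (2 ^ (k + K₀)) (2 ^ (k + K₀ + 1)), (T m)ᶜ)
        ≤ ENNReal.ofReal r ^ k := by
      intro k
      refine le_trans (hblock (k + K₀) (hK₀ _ (by omega))) ?_
      rw [← ENNReal.ofReal_pow hr0]
      exact ENNReal.ofReal_le_ofReal (pow_le_pow_of_le_one hr0 hr1.le (by omega))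
    refine ne_top_of_le_ne_top ?_ (ENNReal.tsum_le_tsum hle)
    rw [ENNReal.tsum_geometric]
    exact ENNReal.inv_ne_top.2 (tsub_pos_of_lt (ENNReal.ofReal_lt_one.2 hr1)).ne'
  have hBC := ae_eventually_notMem hsum
  -- deterministic comparison
  have hDetR : ∀ᶠ x : ℝ in atTop, C * x ^ q⁻¹ + x ≤ (x / 4) ^ γ'⁻¹ := by
    have h1 : ∀ᶠ x : ℝ in atTop, (4:ℝ) ^ γ'⁻¹ * (C + 2) ≤ x ^ (γ'⁻¹ - q⁻¹) :=
      (tendsto_rpow_atTop (by linarith)).eventually_ge_atTop _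
    filter_upwards [h1, eventually_ge_atTop (1:ℝ)] with x h1x hx1
    have hx0 : (0:ℝ) < x := by linarith
    have h40 : (0:ℝ) < (4:ℝ) ^ γ'⁻¹ := Real.rpow_pos_of_pos (by norm_num) _
    have hxq : (0:ℝ) ≤ x ^ q⁻¹ := Real.rpow_nonneg hx0.le _
    have e1 : (x / 4) ^ γ'⁻¹ = x ^ γ'⁻¹ / (4:ℝ) ^ γ'⁻¹ := Real.div_rpow hx0.le (by norm_num : (0:ℝ) ≤ 4) γ'⁻¹
    have e2 : x ^ γ'⁻¹ = x ^ (γ'⁻¹ - q⁻¹) * x ^ q⁻¹ := by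
      rw [← Real.rpow_add hx0]; ring_nf
    have e3 : x ≤ x ^ q⁻¹ := by
      calc x = x ^ (1:ℝ) := (Real.rpow_one x).symm
        _ ≤ x ^ q⁻¹ := Real.rpow_le_rpow_of_exponent_le hx1 hqinv1
    have hrhs : (C + 2) * x ^ q⁻¹ ≤ (x / 4) ^ γ'⁻¹ := by
      rw [e1, e2, le_div_iff₀ h40]
      calc (C + 2) * x ^ q⁻¹ * (4:ℝ) ^ γ'⁻¹
          = ((4:ℝ) ^ γ'⁻¹ * (C + 2)) * x ^ q⁻¹ := by ring
        _ ≤ x ^ (γ'⁻¹ - q⁻¹) * x ^ q⁻¹ := mul_le_mul_of_nonneg_right h1x hxq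
    linarith
  have hDet : ∀ᶠ n : ℕ in atTop, C * (n:ℝ) ^ q⁻¹ + (n:ℝ) ≤ ((n:ℝ) / 4) ^ γ'⁻¹ :=
    tendsto_natCast_atTop_atTop.eventually hDetR
  -- combine everything
  filter_upwards [hpospart, hBC] with e hCe hJe
  obtain ⟨N₁, hN₁⟩ := eventually_atTop.1 hCe
  obtain ⟨K₂, hK₂⟩ := eventually_atTop.1 hJe
  obtain ⟨N₂, hN₂⟩ := eventually_atTop.1 hDet
  rw [eventually_atTop]
  refine ⟨max (max N₁ N₂) (2 ^ (K₂ + K₀ + 2)), fun n hn => ?_⟩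
  have hnN₁ : N₁ ≤ n := le_trans (le_trans (le_max_left _ _) (le_max_left _ _)) hn
  have hnN₂ : N₂ ≤ n := le_trans (le_trans (le_max_right _ _) (le_max_left _ _)) hn
  have hnpow : 2 ^ (K₂ + K₀ + 2) ≤ n := le_trans (le_max_right _ _) hn
  have hn0 : n ≠ 0 := by
    have : 0 < 2 ^ (K₂ + K₀ + 2) := Nat.pow_pos (by norm_num)
    omega
  set l : ℕ := Nat.log 2 n with hldef
  have hl1 : 2 ^ l ≤ n := Nat.pow_log_le_self 2 hn0
  have hl2 : n < 2 ^ (l + 1) := Nat.lt_pow_succ_log_self (by norm_num) n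
  have hlK : K₂ + K₀ + 2 ≤ l := (Nat.le_log_iff_pow_le (by norm_num) hn0).2 hnpow
  set k : ℕ := l - 1 with hkdef
  have hkl : k + 1 = l := by omega
  have hnotmem := hK₂ (k - K₀) (by omega)
  have hkk : k - K₀ + K₀ = k := by omega
  rw [hkk] at hnotmem
  have hex : ∃ m, m ∈ Finset.Ico (2 ^ k) (2 ^ (k + 1)) ∧ e ∈ T m := by
    by_contra hcon
    push_neg at hcon
    exact hnotmem (Set.mem_iInter₂.2 fun m hm => hcon m hm)
  obtain ⟨m, hmIco, hmT⟩ := hex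
  rw [Finset.mem_Ico] at hmIco
  have hmn : m < n := by
    have h2 : (2:ℕ) ^ (k + 1) = 2 ^ l := by rw [hkl]
    omega
  have hn4m : (n:ℝ) / 4 ≤ (m:ℝ) := by
    have h4 : n < 4 * m := by
      have ha : 2 ^ (l + 1) = 4 * 2 ^ k := by
        rw [← hkl]; ring
      have hb := hmIco.1
      omega
    have : (n:ℝ) < 4 * (m:ℝ) := by exact_mod_cast h4
    linarith
  have hjump : ζ m e < -(((n:ℝ) / 4) ^ γ'⁻¹) := by
    have h1 : ((n:ℝ) / 4) ^ γ'⁻¹ ≤ ((m:ℝ)) ^ γ'⁻¹ :=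
      Real.rpow_le_rpow (by positivity) hn4m (by positivity)
    have h2 : ζ m e < -((m:ℝ) ^ γ'⁻¹) := hmT
    linarith
  have hsplit : ∑ j ∈ Finset.range n, ζ j e
      = ζ m e + ∑ j ∈ (Finset.range n).erase m, ζ j e :=
    (Finset.add_sum_erase _ _ (Finset.mem_range.2 hmn)).symm
  have hupper : ∑ j ∈ (Finset.range n).erase m, ζ j e
      ≤ ∑ j ∈ Finset.range n, max (ζ j e) 0 := by
    calc ∑ j ∈ (Finset.range n).erase m, ζ j e
        ≤ ∑ j ∈ (Finset.range n).erase m, max (ζ j e) 0 :=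
          Finset.sum_le_sum fun j _ => le_max_left _ _
      _ ≤ ∑ j ∈ Finset.range n, max (ζ j e) 0 :=
          Finset.sum_le_sum_of_subset_of_nonneg (Finset.erase_subset _ _)
            (fun j _ _ => le_max_right _ _)
  have hposb := hN₁ n hnN₁
  have hdetb := hN₂ n hnN₂
  rw [hsplit]
  linarith

open ProbabilityTheory

/-- suppose `ζ_0, ζ_1, …` are i.i.d. with `E[(ζ_0^+)^p] < ∞` for some `p > 0`
and `P[ζ_0 < −x] ≥ c x^{-γ}` for some `c > 0`, `γ < min(1,p)` and all large `x`. If the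
environment is given by `log(p_n/q_n) = ζ_n`, i.e. `p_n = e^{ζ_n}/(1+e^{ζ_n})`, then for
almost every environment, `f(n) = ∑_{i=0}^n exp(∑_{j<i} ζ_j)` converges to a finite limit,
and hence the quenched walk is transient (the probability of returning to `0` is `< 1`). -/
theorem statement16 {E : Type*} [MeasurableSpace E] (P : Measure E) [IsProbabilityMeasure P]
    (ζ : ℕ → E → ℝ) (hmeas : ∀ n, Measurable (ζ n))
    (hindep : iIndepFun ζ P)
    (hident : ∀ n, Measure.map (ζ n) P = Measure.map (ζ 0) P)
    (pe γ c : ℝ) (hpe : 0 < pe) (hc : 0 < c) (hγ : γ < min 1 pe)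
    (hmom : Integrable (fun e => (max (ζ 0 e) 0) ^ pe) P)
    (htail : ∀ᶠ x : ℝ in atTop, c * x ^ (-γ) ≤ (P {e | ζ 0 e < -x}).toReal) :
    ∀ᵐ e ∂P,
      (∃ L : ℝ, Tendsto
          (fun n : ℕ => ∑ i ∈ Finset.range (n + 1),
            Real.exp (∑ j ∈ Finset.range i, ζ j e)) atTop (nhds L))
      ∧ ∀ (Ω : Type) (_ : MeasurableSpace Ω) (μ : Measure Ω), IsProbabilityMeasure μ →
          ∀ X : ℕ → Ω → ℕ,
            IsQuenchedWalk μ X (fun i => Real.exp (ζ i e) / (1 + Real.exp (ζ i e))) →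
            μ {ω | ∃ t, 1 ≤ t ∧ X t ω = 0} < 1 := by
  letI := ‹MeasurableSpace E›
  filter_upwards [eventually_drift P ζ hmeas hindep hident pe γ c hpe hc hγ hmom htail]
    with e he
  obtain ⟨N, hN⟩ := eventually_atTop.1 he
  set S : ℕ → ℝ := fun i => ∑ j ∈ Finset.range i, ζ j e with hSdef
  have hsummable : Summable (fun i : ℕ => Real.exp (S i)) := by
    refine summable_of_sum_range_le (fun i => (Real.exp_pos _).le) (c :=
      (∑ i ∈ Finset.range N, Real.exp (S i)) + (1 - Real.exp (-1))⁻¹) fun n => ?_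
    rw [← Finset.sum_filter_add_sum_filter_not (Finset.range n) (fun i => i < N)]
    have hpart1 : ∑ i ∈ (Finset.range n).filter (fun i => i < N), Real.exp (S i)
        ≤ ∑ i ∈ Finset.range N, Real.exp (S i) :=
      Finset.sum_le_sum_of_subset_of_nonneg
        (fun i hi => Finset.mem_range.2 (Finset.mem_filter.1 hi).2)
        (fun i _ _ => (Real.exp_pos _).le)
    have hpart2 : ∑ i ∈ (Finset.range n).filter (fun i => ¬ i < N), Real.exp (S i)
        ≤ (1 - Real.exp (-1))⁻¹ := by
      have hterm : ∀ i ∈ (Finset.range n).filter (fun i => ¬ i < N),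
          Real.exp (S i) ≤ (Real.exp (-1)) ^ i := by
        intro i hi
        have hiN : N ≤ i := le_of_not_gt (Finset.mem_filter.1 hi).2
        have hSi : S i ≤ -(i:ℝ) := hN i hiN
        calc Real.exp (S i) ≤ Real.exp (-(i:ℝ)) := Real.exp_le_exp.2 hSi
          _ = Real.exp (-1) ^ i := by
              rw [← Real.exp_nat_mul]
              norm_num
      calc ∑ i ∈ (Finset.range n).filter (fun i => ¬ i < N), Real.exp (S i)
          ≤ ∑ i ∈ (Finset.range n).filter (fun i => ¬ i < N), (Real.exp (-1)) ^ i :=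
            Finset.sum_le_sum hterm
        _ ≤ ∑' i : ℕ, (Real.exp (-1)) ^ i :=
            Summable.sum_le_tsum _ (fun i _ => by positivity)
              (summable_geometric_of_lt_one (Real.exp_nonneg _)
                (Real.exp_lt_one_iff.2 (by norm_num)))
        _ = (1 - Real.exp (-1))⁻¹ :=
            tsum_geometric_of_lt_one (Real.exp_nonneg _)
              (Real.exp_lt_one_iff.2 (by norm_num))
    linarith
  constructor
  · refine ⟨∑' i, Real.exp (S i), ?_⟩
    exact hsummable.hasSum.tendsto_sum_nat.comp (tendsto_add_atTop_nat 1)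
  · intro Ω mΩ μ hμ X hX
    letI := mΩ
    haveI := hμ
    set p : ℕ → ℝ := fun i => Real.exp (ζ i e) / (1 + Real.exp (ζ i e)) with hpdef
    have hp0 : ∀ i, 0 < p i := fun i => by
      have := Real.exp_pos (ζ i e)
      positivity
    have hp1 : ∀ i, p i < 1 := fun i => by
      have h1 : (0:ℝ) < 1 + Real.exp (ζ i e) := by positivity
      show Real.exp (ζ i e) / (1 + Real.exp (ζ i e)) < 1
      rw [div_lt_one h1]
      linarith
    have hratio : ∀ j, p j / (1 - p j) = Real.exp (ζ j e) := by
      intro j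
      show Real.exp (ζ j e) / (1 + Real.exp (ζ j e))
          / (1 - Real.exp (ζ j e) / (1 + Real.exp (ζ j e))) = Real.exp (ζ j e)
      have ha : (0:ℝ) < Real.exp (ζ j e) := Real.exp_pos _
      have h1 : (0:ℝ) < 1 + Real.exp (ζ j e) := by positivity
      field_simp
      ring
    have hDe : ∀ i, Denv p i = Real.exp (S i) := by
      intro i
      rw [Denv, hSdef, Real.exp_sum]
      exact Finset.prod_congr rfl fun j _ => hratio j
    have hLbd : ∀ n, ∑ i ∈ Finset.range n, Denv p i ≤ ∑' i, Real.exp (S i) := by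
      intro n
      calc ∑ i ∈ Finset.range n, Denv p i
          = ∑ i ∈ Finset.range n, Real.exp (S i) :=
            Finset.sum_congr rfl fun i _ => hDe i
        _ ≤ ∑' i, Real.exp (S i) :=
            Summable.sum_le_tsum _ (fun i _ => (Real.exp_pos _).le) hsummable
    exact walk_ret_lt_one p hp0 hp1 _ hLbd μ X hX
end
end
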